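/- arXiv:math/0304253 — 5 statements merged into one kernel-verified Lean document; each statement's English description precedes it below -/
import Mathlib

section
/- Let K_1, …, K_n be positive kernel operators on L²(X, μ). Assume f_1, …, f_n and g_1, …, g_n are strictly positive a.e. nonnegative functions in L²(X, μ) satisfying K_i f_i = r(K_i) f_i and K_i* g_i = r(K_i) g_i for each i, normalized so that f_i·g_i = h for all i (the same function h) and ∫_X h dμ = 1. Then for all positive real numbers t_1, …, t_n, r( t_1 K_1 + … + t_n K_n ) ≥ t_1 r(K_1) + … + t_n r(K_n). -/
open MeasureTheory
open scoped ENNReal ComplexOrder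

noncomputable section

/-- `K` is a positive kernel operator on `L²(X, μ)`: there is a nonnegative measurable
kernel `k` on `X × X` such that for every `f ∈ L²` and almost every `x`,
`∫ k(x,y)|f(y)| dμ(y) < ∞` and `(K f)(x) = ∫ k(x,y) f(y) dμ(y)`. -/
def IsPosKernelOp {X : Type*} [MeasurableSpace X] (μ : Measure X)
    (K : Lp ℂ 2 μ →L[ℂ] Lp ℂ 2 μ) : Prop :=
  ∃ k : X → X → ℝ, Measurable (Function.uncurry k) ∧ (∀ x y, 0 ≤ k x y) ∧
    ∀ f : Lp ℂ 2 μ,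
      (∀ᵐ x ∂μ, Integrable (fun y => k x y * ‖(f : X → ℂ) y‖) μ) ∧
      (∀ᵐ x ∂μ, (K f : X → ℂ) x = ∫ y, (k x y : ℂ) * (f : X → ℂ) y ∂μ)

/-- `D` is the operator of multiplication by the (real-valued) function `d`. -/
def IsMulOp {X : Type*} [MeasurableSpace X] (μ : Measure X) (d : X → ℝ)
    (D : Lp ℂ 2 μ →L[ℂ] Lp ℂ 2 μ) : Prop :=
  ∀ f : Lp ℂ 2 μ, (D f : X → ℂ) =ᵐ[μ] fun x => (d x : ℂ) * (f : X → ℂ) x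

/-- A bounded operator on `L²(X, μ)` is positive if it maps a.e. nonnegative functions to
a.e. nonnegative functions (`0 ≤ z` in the complex order means `z` is real and `z ≥ 0`). -/
def IsPositiveOp {X : Type*} [MeasurableSpace X] (μ : Measure X)
    (A : Lp ℂ 2 μ →L[ℂ] Lp ℂ 2 μ) : Prop :=
  ∀ f : Lp ℂ 2 μ, (∀ᵐ x ∂μ, 0 ≤ (f : X → ℂ) x) → (∀ᵐ x ∂μ, 0 ≤ (A f : X → ℂ) x)

open scoped Classical in
/-- `exp (∫ F dμ)` with the convention `exp (-∞) = 0`: for the integrands appearing below the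
positive part is always integrable, so non-integrability means the integral is `-∞`. -/
def expInt {X : Type*} [MeasurableSpace X] (μ : Measure X) (F : X → ℝ) : ℝ :=
  if Integrable F μ then Real.exp (∫ x, F x ∂μ) else 0

/-- The numerical radius `w(A) = sup { |⟨A f, f⟩| : ‖f‖₂ = 1 }`. -/
def numRad {X : Type*} [MeasurableSpace X] (μ : Measure X)
    (A : Lp ℂ 2 μ →L[ℂ] Lp ℂ 2 μ) : ℝ :=
  sSup {r : ℝ | ∃ f : Lp ℂ 2 μ, ‖f‖ = 1 ∧ r = ‖(inner ℂ (A f) f : ℂ)‖}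



private lemma log_le_self_of_pos {z : ℝ} (hz : 0 < z) : Real.log z ≤ z :=
  (Real.log_le_sub_one_of_pos hz).trans (by linarith)

private lemma integrable_of_le_of_le {X : Type*} [MeasurableSpace X] {μ : Measure X}
    {F G G' : X → ℝ} (hm : AEStronglyMeasurable F μ)
    (h1 : ∀ᵐ x ∂μ, F x ≤ G x) (h2 : ∀ᵐ x ∂μ, G' x ≤ F x)
    (hG : Integrable G μ) (hG' : Integrable G' μ) : Integrable F μ := by
  refine (hG.abs.add hG'.abs).mono' hm ?_
  filter_upwards [h1, h2] with x hx hx'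
  simp only [Real.norm_eq_abs, Pi.add_apply]
  rw [abs_le]
  constructor
  · have := neg_abs_le (G' x); have := abs_nonneg (G x); linarith
  · have := le_abs_self (G x); have := abs_nonneg (G' x); linarith

private lemma stepA {X : Type*} [MeasurableSpace X] {μ : Measure X} [SigmaFinite μ]
    (k : X → X → ℝ) (hkm : Measurable (Function.uncurry k)) (hk0 : ∀ x y, 0 ≤ k x y)
    (fR gR vR KvR : X → ℝ)
    (hfm : Measurable fR) (hgm : Measurable gR) (hvm : Measurable vR) (hKvm : Measurable KvR)
    (hf0 : ∀ x, 0 < fR x) (hg0 : ∀ x, 0 < gR x) (hv0 : ∀ x, 0 < vR x)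
    (ρ : ℝ) (hρ : 0 < ρ)
    (heig : ∀ᵐ x ∂μ, Integrable (fun y => k x y * fR y) μ ∧ ∫ y, k x y * fR y ∂μ = ρ * fR x)
    (heig' : ∀ᵐ y ∂μ, ∫⁻ x, ENNReal.ofReal (k x y * gR x) ∂μ = ENNReal.ofReal (ρ * gR y))
    (hKv : ∀ᵐ x ∂μ, Integrable (fun y => k x y * vR y) μ ∧ KvR x = ∫ y, k x y * vR y ∂μ)
    (hpair1 : Integrable (fun x => vR x * gR x) μ)
    (hpair2 : Integrable (fun x => Real.sqrt (fR x * gR x) * KvR x) μ)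
    (hpair3 : Integrable (fun x => fR x * Real.sqrt (fR x * gR x)) μ)
    (hpairh : Integrable (fun x => fR x * gR x) μ)
    (hh1 : ∫ x, fR x * gR x ∂μ = 1)
    (hIH : Integrable (fun x => fR x * gR x * Real.log (vR x / Real.sqrt (fR x * gR x))) μ) :
    (∀ᵐ x ∂μ, 0 < KvR x) ∧
    Integrable (fun x => fR x * gR x * Real.log (KvR x / Real.sqrt (fR x * gR x))) μ ∧
    ∫ x, fR x * gR x * Real.log (vR x / Real.sqrt (fR x * gR x)) ∂μ + Real.log ρ ≤
      ∫ x, fR x * gR x * Real.log (KvR x / Real.sqrt (fR x * gR x)) ∂μ := by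
  set h : X → ℝ := fun x => fR x * gR x with hh_def
  set sq : X → ℝ := fun x => Real.sqrt (fR x * gR x) with hsq_def
  have hh0 : ∀ x, 0 < h x := fun x => mul_pos (hf0 x) (hg0 x)
  have hsq0 : ∀ x, 0 < sq x := fun x => Real.sqrt_pos.2 (hh0 x)
  have hsq2 : ∀ x, sq x * sq x = h x := fun x => Real.mul_self_sqrt (hh0 x).le
  have hhsq : ∀ x, h x / sq x = sq x := fun x => by
    rw [← hsq2 x]; field_simp
  have hsqm : Measurable sq := (hfm.mul hgm).sqrt
  have hhm : Measurable h := hfm.mul hgm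
  set φ : X → ℝ := fun y => Real.log (vR y / fR y) with hφ_def
  have hφm : Measurable φ := (hvm.div hfm).log
  set Φp : X → ℝ := fun y => max (φ y) 0 with hΦp_def
  set Φm : X → ℝ := fun y => max (-(φ y)) 0 with hΦm_def
  have hΦpm : Measurable Φp := hφm.max measurable_const
  have hΦmm : Measurable Φm := hφm.neg.max measurable_const
  have hΦp0 : ∀ x, 0 ≤ Φp x := fun x => le_max_right _ _
  have hΦm0 : ∀ x, 0 ≤ Φm x := fun x => le_max_right _ _
  have hφsplit : ∀ x, φ x = Φp x - Φm x := fun x => by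
    simp only [hΦp_def, hΦm_def]
    rcases le_total (φ x) 0 with hc | hc
    · rw [max_eq_right hc, max_eq_left (by linarith)]; ring
    · rw [max_eq_left hc, max_eq_right (by linarith)]; ring
  have habs : ∀ x, |φ x| = Φp x + Φm x := fun x => by
    simp only [hΦp_def, hΦm_def]
    rcases le_total (φ x) 0 with hc | hc
    · rw [abs_of_nonpos hc, max_eq_right hc, max_eq_left (by linarith)]; ring
    · rw [abs_of_nonneg hc, max_eq_left hc, max_eq_right (by linarith)]; ring
  -- pointwise bounds for h * Φp and h * Φm
  have bp : ∀ x, h x * Φp x ≤ vR x * gR x := by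
    intro x
    rcases le_total (φ x) 0 with hc | hc
    · rw [hΦp_def]; simp only [max_eq_right hc]
      have := (mul_pos (hv0 x) (hg0 x))
      simpa using this.le
    · rw [hΦp_def]; simp only [max_eq_left hc]
      have h1 : φ x ≤ vR x / fR x := log_le_self_of_pos (div_pos (hv0 x) (hf0 x))
      calc h x * φ x ≤ h x * (vR x / fR x) := by
            exact mul_le_mul_of_nonneg_left h1 (hh0 x).le
        _ = vR x * gR x := by
            have hfx : fR x ≠ 0 := ne_of_gt (hf0 x)
            field_simp [hh_def]
            ring
  have bm : ∀ x, h x * Φm x ≤ fR x * sq x + |h x * Real.log (vR x / sq x)| := by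
    intro x
    have key : Φm x ≤ fR x / sq x + |Real.log (vR x / sq x)| := by
      rcases le_total (-(φ x)) 0 with hc | hc
      · rw [hΦm_def]; simp only [max_eq_right hc]
        have h1 := hf0 x; have h2 := hsq0 x
        positivity
      · rw [hΦm_def]; simp only [max_eq_left hc]
        have e1 : -(φ x) = Real.log (fR x / sq x) + (- Real.log (vR x / sq x)) := by
          rw [Real.log_div (ne_of_gt (hf0 x)) (ne_of_gt (hsq0 x)),
            Real.log_div (ne_of_gt (hv0 x)) (ne_of_gt (hsq0 x)), hφ_def]
          simp only
          rw [Real.log_div (ne_of_gt (hv0 x)) (ne_of_gt (hf0 x))]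
          ring
        rw [e1]
        gcongr
        · exact log_le_self_of_pos (div_pos (hf0 x) (hsq0 x))
        · exact (neg_le_abs _)
    calc h x * Φm x ≤ h x * (fR x / sq x + |Real.log (vR x / sq x)|) := by
          exact mul_le_mul_of_nonneg_left key (hh0 x).le
      _ = fR x * (h x / sq x) + h x * |Real.log (vR x / sq x)| := by ring
      _ = fR x * sq x + |h x * Real.log (vR x / sq x)| := by
          rw [hhsq x, abs_mul, abs_of_nonneg (hh0 x).le]
  -- finiteness of ∫⁻ h Φp, ∫⁻ h Φm
  have iΦp : Integrable (fun x => h x * Φp x) μ := by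
    refine hpair1.mono' ((hhm.mul hΦpm).aestronglyMeasurable) ?_
    filter_upwards with x
    rw [Real.norm_eq_abs, abs_of_nonneg (mul_nonneg (hh0 x).le (hΦp0 x))]
    exact bp x
  have iΦm : Integrable (fun x => h x * Φm x) μ := by
    refine Integrable.mono' (hpair3.add hIH.abs) ((hhm.mul hΦmm).aestronglyMeasurable) ?_
    filter_upwards with x
    rw [Real.norm_eq_abs, abs_of_nonneg (mul_nonneg (hh0 x).le (hΦm0 x))]
    exact bm x
  have iφ : Integrable (fun x => h x * φ x) μ := by
    have : (fun x => h x * φ x) = fun x => h x * Φp x - h x * Φm x := by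
      funext x; rw [hφsplit x]; ring
    rw [this]; exact iΦp.sub iΦm
  -- the key Tonelli computation
  have key : ∀ (Φ : X → ℝ), Measurable Φ → (∀ x, 0 ≤ Φ x) →
      ∫⁻ x, ENNReal.ofReal (gR x) * (∫⁻ y, ENNReal.ofReal (k x y * fR y * Φ y) ∂μ) ∂μ
        = ENNReal.ofReal ρ * ∫⁻ x, ENNReal.ofReal (h x * Φ x) ∂μ := by
    intro Φ hΦmeas hΦ0
    have hk2 : Measurable fun p : X × X => k p.1 p.2 := by
      exact hkm
    have humeas : Measurable (fun p : X × X => ENNReal.ofReal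
        (gR p.1 * (k p.1 p.2 * fR p.2 * Φ p.2))) := by
      apply ENNReal.measurable_ofReal.comp
      exact (hgm.comp measurable_fst).mul
        ((hk2.mul (hfm.comp measurable_snd)).mul (hΦmeas.comp measurable_snd))
    calc ∫⁻ x, ENNReal.ofReal (gR x) * (∫⁻ y, ENNReal.ofReal (k x y * fR y * Φ y) ∂μ) ∂μ
        = ∫⁻ x, ∫⁻ y, ENNReal.ofReal (gR x * (k x y * fR y * Φ y)) ∂μ ∂μ := by
          refine lintegral_congr fun x => ?_
          rw [← lintegral_const_mul' _ _ ENNReal.ofReal_ne_top]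
          refine lintegral_congr fun y => ?_
          rw [ENNReal.ofReal_mul (hg0 x).le]
      _ = ∫⁻ y, ∫⁻ x, ENNReal.ofReal (gR x * (k x y * fR y * Φ y)) ∂μ ∂μ := by
          exact lintegral_lintegral_swap humeas.aemeasurable
      _ = ∫⁻ y, ENNReal.ofReal (fR y * Φ y) * ∫⁻ x, ENNReal.ofReal (k x y * gR x) ∂μ ∂μ := by
          refine lintegral_congr fun y => ?_
          rw [← lintegral_const_mul' _ _ ENNReal.ofReal_ne_top]
          refine lintegral_congr fun x => ?_
          rw [← ENNReal.ofReal_mul (mul_nonneg (hf0 y).le (hΦ0 y))]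
          congr 1; ring
      _ = ∫⁻ y, ENNReal.ofReal (fR y * Φ y) * ENNReal.ofReal (ρ * gR y) ∂μ := by
          refine lintegral_congr_ae ?_
          filter_upwards [heig'] with y hy
          rw [hy]
      _ = ∫⁻ y, ENNReal.ofReal ρ * ENNReal.ofReal (h y * Φ y) ∂μ := by
          refine lintegral_congr fun y => ?_
          rw [← ENNReal.ofReal_mul (mul_nonneg (hf0 y).le (hΦ0 y)),
            ← ENNReal.ofReal_mul hρ.le]
          congr 1; simp only [hh_def]; ring
      _ = ENNReal.ofReal ρ * ∫⁻ x, ENNReal.ofReal (h x * Φ x) ∂μ := by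
          rw [← lintegral_const_mul' _ _ ENNReal.ofReal_ne_top]
  have lΦp : ∫⁻ x, ENNReal.ofReal (h x * Φp x) ∂μ < ∞ := by
    rw [← ofReal_integral_eq_lintegral_ofReal iΦp
      (Filter.Eventually.of_forall fun x => mul_nonneg (hh0 x).le (hΦp0 x))]
    exact ENNReal.ofReal_lt_top
  have lΦm : ∫⁻ x, ENNReal.ofReal (h x * Φm x) ∂μ < ∞ := by
    rw [← ofReal_integral_eq_lintegral_ofReal iΦm
      (Filter.Eventually.of_forall fun x => mul_nonneg (hh0 x).le (hΦm0 x))]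
    exact ENNReal.ofReal_lt_top
  have keyp := key Φp hΦpm hΦp0
  have keym := key Φm hΦmm hΦm0
  -- a.e. finiteness of the partial transition integrals
  set Jp : X → ℝ≥0∞ := fun x => ∫⁻ y, ENNReal.ofReal (k x y * fR y * Φp y) ∂μ with hJp_def
  set Jm : X → ℝ≥0∞ := fun x => ∫⁻ y, ENNReal.ofReal (k x y * fR y * Φm y) ∂μ with hJm_def
  have hk2 : Measurable fun p : X × X => k p.1 p.2 := by
    exact hkm
  have hJpm : Measurable Jp :=
    Measurable.lintegral_prod_right'
      (f := fun p : X × X => ENNReal.ofReal (k p.1 p.2 * fR p.2 * Φp p.2))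
      (ENNReal.measurable_ofReal.comp
        ((hk2.mul (hfm.comp measurable_snd)).mul (hΦpm.comp measurable_snd)))
  have hJmm : Measurable Jm :=
    Measurable.lintegral_prod_right'
      (f := fun p : X × X => ENNReal.ofReal (k p.1 p.2 * fR p.2 * Φm p.2))
      (ENNReal.measurable_ofReal.comp
        ((hk2.mul (hfm.comp measurable_snd)).mul (hΦmm.comp measurable_snd)))
  have hJpfin : ∀ᵐ x ∂μ, Jp x < ∞ := by
    have hfin : ∫⁻ x, ENNReal.ofReal (gR x) * Jp x ∂μ < ∞ := by
      rw [keyp]; exact ENNReal.mul_lt_top ENNReal.ofReal_lt_top lΦp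
    have := ae_lt_top (ENNReal.measurable_ofReal.comp hgm |>.mul hJpm) hfin.ne
    filter_upwards [this] with x hx
    by_contra hcon
    push_neg at hcon
    rw [Pi.mul_apply, top_le_iff.mp hcon, ENNReal.mul_top
      (by simp [ENNReal.ofReal_eq_zero, not_le, hg0 x])] at hx
    exact lt_irrefl _ hx
  have hJmfin : ∀ᵐ x ∂μ, Jm x < ∞ := by
    have hfin : ∫⁻ x, ENNReal.ofReal (gR x) * Jm x ∂μ < ∞ := by
      rw [keym]; exact ENNReal.mul_lt_top ENNReal.ofReal_lt_top lΦm
    have := ae_lt_top (ENNReal.measurable_ofReal.comp hgm |>.mul hJmm) hfin.ne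
    filter_upwards [this] with x hx
    by_contra hcon
    push_neg at hcon
    rw [Pi.mul_apply, top_le_iff.mp hcon, ENNReal.mul_top
      (by simp [ENNReal.ofReal_eq_zero, not_le, hg0 x])] at hx
    exact lt_irrefl _ hx
  -- sections are measurable
  have hsecm : ∀ x : X, Measurable fun y => k x y := fun x => by
    have : Measurable fun y => (Function.uncurry k) (x, y) := hkm.comp measurable_prodMk_left
    simpa [Function.uncurry] using this
  -- a.e. integrability of the weighted sections
  have isecp : ∀ᵐ x ∂μ, Integrable (fun y => k x y * fR y * Φp y) μ := by
    filter_upwards [hJpfin] with x hx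
    refine ⟨(((hsecm x).mul hfm).mul hΦpm).aestronglyMeasurable, ?_⟩
    rw [hasFiniteIntegral_iff_ofReal (Filter.Eventually.of_forall fun y =>
      mul_nonneg (mul_nonneg (hk0 x y) (hf0 y).le) (hΦp0 y))]
    exact hx
  have isecm : ∀ᵐ x ∂μ, Integrable (fun y => k x y * fR y * Φm y) μ := by
    filter_upwards [hJmfin] with x hx
    refine ⟨(((hsecm x).mul hfm).mul hΦmm).aestronglyMeasurable, ?_⟩
    rw [hasFiniteIntegral_iff_ofReal (Filter.Eventually.of_forall fun y =>
      mul_nonneg (mul_nonneg (hk0 x y) (hf0 y).le) (hΦm0 y))]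
    exact hx
  set Np : X → ℝ := fun x => ∫ y, k x y * fR y * Φp y ∂μ with hNp_def
  set Nm : X → ℝ := fun x => ∫ y, k x y * fR y * Φm y ∂μ with hNm_def
  set N : X → ℝ := fun x => ∫ y, k x y * fR y * φ y ∂μ with hN_def
  have hsplitfun : ∀ x y, k x y * fR y * φ y
      = k x y * fR y * Φp y - k x y * fR y * Φm y := by
    intro x y; rw [hφsplit y]; ring
  have hNsplit : ∀ᵐ x ∂μ, N x = Np x - Nm x := by
    filter_upwards [isecp, isecm] with x h1 h2
    rw [hN_def]
    simp only
    rw [show (fun y => k x y * fR y * φ y)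
      = fun y => k x y * fR y * Φp y - k x y * fR y * Φm y from funext (hsplitfun x)]
    exact integral_sub h1 h2
  have hNptoReal : ∀ᵐ x ∂μ, Np x = (Jp x).toReal ∧ 0 ≤ Np x := by
    filter_upwards [isecp] with x h1
    have e := integral_eq_lintegral_of_nonneg_ae (μ := μ)
      (Filter.Eventually.of_forall fun y =>
        mul_nonneg (mul_nonneg (hk0 x y) (hf0 y).le) (hΦp0 y)) h1.1
    exact ⟨e, by rw [hNp_def]; simp only; rw [e]; exact ENNReal.toReal_nonneg⟩
  have hNmtoReal : ∀ᵐ x ∂μ, Nm x = (Jm x).toReal ∧ 0 ≤ Nm x := by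
    filter_upwards [isecm] with x h1
    have e := integral_eq_lintegral_of_nonneg_ae (μ := μ)
      (Filter.Eventually.of_forall fun y =>
        mul_nonneg (mul_nonneg (hk0 x y) (hf0 y).le) (hΦm0 y)) h1.1
    exact ⟨e, by rw [hNm_def]; simp only; rw [e]; exact ENNReal.toReal_nonneg⟩
  -- invariance : ∫ gR·Np = ρ ∫ h Φp  and the m-version
  have inv : ∀ (Φ : X → ℝ) (NΦ : X → ℝ) (JΦ : X → ℝ≥0∞), Measurable Φ → (∀ x, 0 ≤ Φ x) →
      Measurable JΦ →
      (∀ᵐ x ∂μ, JΦ x < ∞) →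
      (∀ᵐ x ∂μ, NΦ x = (JΦ x).toReal) →
      (∫⁻ x, ENNReal.ofReal (gR x) * JΦ x ∂μ
        = ENNReal.ofReal ρ * ∫⁻ x, ENNReal.ofReal (h x * Φ x) ∂μ) →
      Integrable (fun x => h x * Φ x) μ →
      Integrable (fun x => gR x * NΦ x) μ ∧
        ∫ x, gR x * NΦ x ∂μ = ρ * ∫ x, h x * Φ x ∂μ := by
    intro Φ NΦ JΦ hΦmeas hΦ0 hJΦm hJΦfin hNtoReal hkey hint
    have hmeas2 : Measurable fun x => gR x * (JΦ x).toReal := hgm.mul hJΦm.ennreal_toReal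
    have haeeq : (fun x => gR x * NΦ x) =ᵐ[μ] fun x => gR x * (JΦ x).toReal := by
      filter_upwards [hNtoReal] with x hx; rw [hx]
    have hofReal : ∀ᵐ x ∂μ, ENNReal.ofReal (gR x * (JΦ x).toReal)
        = ENNReal.ofReal (gR x) * JΦ x := by
      filter_upwards [hJΦfin] with x hx
      rw [ENNReal.ofReal_mul (hg0 x).le, ENNReal.ofReal_toReal hx.ne]
    have hfin2 : ∫⁻ x, ENNReal.ofReal (gR x * (JΦ x).toReal) ∂μ < ∞ := by
      rw [lintegral_congr_ae hofReal, hkey]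
      exact ENNReal.mul_lt_top ENNReal.ofReal_lt_top
        (by
          rw [← ofReal_integral_eq_lintegral_ofReal hint
            (Filter.Eventually.of_forall fun x => mul_nonneg (hh0 x).le (hΦ0 x))]
          exact ENNReal.ofReal_lt_top)
    have hint2 : Integrable (fun x => gR x * (JΦ x).toReal) μ := by
      refine ⟨hmeas2.aestronglyMeasurable, ?_⟩
      rw [hasFiniteIntegral_iff_ofReal (Filter.Eventually.of_forall fun x =>
        mul_nonneg (hg0 x).le ENNReal.toReal_nonneg)]
      exact hfin2
    have hint3 : Integrable (fun x => gR x * NΦ x) μ := hint2.congr haeeq.symm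
    refine ⟨hint3, ?_⟩
    have e1 : ENNReal.ofReal (∫ x, gR x * NΦ x ∂μ)
        = ENNReal.ofReal (ρ * ∫ x, h x * Φ x ∂μ) := by
      rw [ofReal_integral_eq_lintegral_ofReal hint3 (by
        filter_upwards [hNtoReal] with x hx
        rw [hx]; exact mul_nonneg (hg0 x).le ENNReal.toReal_nonneg)]
      rw [lintegral_congr_ae (g := fun x => ENNReal.ofReal (gR x * (JΦ x).toReal)) (by
        filter_upwards [haeeq] with x hx
        exact congrArg ENNReal.ofReal hx), lintegral_congr_ae hofReal, hkey]
      rw [← ofReal_integral_eq_lintegral_ofReal hint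
        (Filter.Eventually.of_forall fun x => mul_nonneg (hh0 x).le (hΦ0 x))]
      rw [← ENNReal.ofReal_mul hρ.le]
    have n1 : 0 ≤ ∫ x, gR x * NΦ x ∂μ := by
      refine integral_nonneg_of_ae ?_
      filter_upwards [hNtoReal] with x hx
      rw [hx]; exact mul_nonneg (hg0 x).le ENNReal.toReal_nonneg
    have n2 : 0 ≤ ρ * ∫ x, h x * Φ x ∂μ :=
      mul_nonneg hρ.le (integral_nonneg fun x => mul_nonneg (hh0 x).le (hΦ0 x))
    exact (ENNReal.ofReal_eq_ofReal_iff n1 n2).mp e1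
  obtain ⟨igNp, intgNp⟩ := inv Φp Np Jp hΦpm hΦp0 hJpm hJpfin
    (hNptoReal.mono fun x hx => hx.1) keyp iΦp
  obtain ⟨igNm, intgNm⟩ := inv Φm Nm Jm hΦmm hΦm0 hJmm hJmfin
    (hNmtoReal.mono fun x hx => hx.1) keym iΦm
  have igN : Integrable (fun x => gR x * N x) μ := by
    refine (igNp.sub igNm).congr ?_
    filter_upwards [hNsplit] with x hx
    simp only [Pi.sub_apply]
    rw [hx]; ring
  have intgN : ∫ x, gR x * N x ∂μ = ρ * ∫ x, h x * φ x ∂μ := by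
    have e1 : ∫ x, gR x * N x ∂μ = ∫ x, gR x * Np x ∂μ - ∫ x, gR x * Nm x ∂μ := by
      rw [← integral_sub igNp igNm]
      refine integral_congr_ae ?_
      filter_upwards [hNsplit] with x hx
      rw [hx]; ring
    have e2 : ∫ x, h x * φ x ∂μ = ∫ x, h x * Φp x ∂μ - ∫ x, h x * Φm x ∂μ := by
      rw [← integral_sub iΦp iΦm]
      refine integral_congr_ae (Filter.Eventually.of_forall fun x => ?_)
      simp only [Pi.sub_apply]
      rw [hφsplit x]; ring
    rw [e1, e2, intgNp, intgNm]; ring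
  -- Jensen's inequality pointwise
  have jensen : ∀ᵐ x ∂μ, ρ * fR x * Real.exp (N x / (ρ * fR x)) ≤ KvR x := by
    filter_upwards [heig, hKv, isecp, isecm] with x hkf hkv hp hm
    obtain ⟨hkfi, hkfeq⟩ := hkf
    obtain ⟨hkvi, hkveq⟩ := hkv
    have hden : 0 < ρ * fR x := mul_pos hρ (hf0 x)
    set c : ℝ := N x / (ρ * fR x) with hc_def
    have hNq : Integrable (fun y => k x y * fR y * φ y) μ := by
      rw [show (fun y => k x y * fR y * φ y)
        = fun y => k x y * fR y * Φp y - k x y * fR y * Φm y from funext (hsplitfun x)]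
      exact hp.sub hm
    have hpt : ∀ y, Real.exp c * (k x y * fR y * φ y - c * (k x y * fR y) + k x y * fR y)
        ≤ k x y * vR y := by
      intro y
      have h1 : fR y * Real.exp (φ y) = vR y := by
        rw [hφ_def]
        simp only
        rw [Real.exp_log (div_pos (hv0 y) (hf0 y))]
        field_simp
        exact mul_div_cancel_left₀ (vR y) (ne_of_gt (hf0 y))
      have h2 : φ y - c + 1 ≤ Real.exp (φ y - c) := by
        linarith [Real.add_one_le_exp (φ y - c)]
      have e3 : Real.exp c * (k x y * fR y * φ y - c * (k x y * fR y) + k x y * fR y)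
          = k x y * (fR y * (Real.exp c * (φ y - c + 1))) := by ring
      have e4 : k x y * (fR y * (Real.exp c * (φ y - c + 1)))
          ≤ k x y * (fR y * (Real.exp c * Real.exp (φ y - c))) := by
        refine mul_le_mul_of_nonneg_left ?_ (hk0 x y)
        refine mul_le_mul_of_nonneg_left ?_ (hf0 y).le
        exact mul_le_mul_of_nonneg_left h2 (Real.exp_pos c).le
      have e5 : k x y * (fR y * (Real.exp c * Real.exp (φ y - c))) = k x y * vR y := by
        rw [← Real.exp_add]
        congr 1
        rw [show c + (φ y - c) = φ y by ring]
        exact h1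
      rw [e3]
      exact e4.trans (le_of_eq e5)
    have hRint : Integrable (fun y =>
        Real.exp c * (k x y * fR y * φ y - c * (k x y * fR y) + k x y * fR y)) μ :=
      (((hNq.sub (hkfi.const_mul c)).add hkfi).const_mul (Real.exp c))
    have hmono := integral_mono hRint hkvi hpt
    have hval : ∫ y, Real.exp c * (k x y * fR y * φ y - c * (k x y * fR y) + k x y * fR y) ∂μ
        = Real.exp c * (ρ * fR x) := by
      have j1 : Integrable (fun y => k x y * fR y * φ y - c * (k x y * fR y)) μ := by
        exact hNq.sub (hkfi.const_mul c)
      rw [integral_const_mul]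
      congr 1
      rw [integral_add j1 hkfi, integral_sub hNq (hkfi.const_mul c), integral_const_mul, hkfeq]
      rw [show (∫ y, k x y * fR y * φ y ∂μ) = N x from rfl]
      rw [hc_def]
      field_simp
      rw [div_self (ne_of_gt (hf0 x))]
      ring
    rw [hval, ← hkveq] at hmono
    calc ρ * fR x * Real.exp c = Real.exp c * (ρ * fR x) := by ring
      _ ≤ KvR x := hmono
  have hKvpos : ∀ᵐ x ∂μ, 0 < KvR x := by
    filter_upwards [jensen] with x hx
    have hfx := hf0 x
    have : 0 < ρ * fR x * Real.exp (N x / (ρ * fR x)) := by positivity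
    linarith
  -- main pointwise inequality
  have mainpt : ∀ᵐ x ∂μ, h x * Real.log ρ + h x * Real.log (vR x / sq x)
      + (gR x * N x / ρ - h x * φ x) ≤ h x * Real.log (KvR x / sq x) := by
    filter_upwards [jensen, hKvpos] with x hj hKp
    have hden : 0 < ρ * fR x := mul_pos hρ (hf0 x)
    have l1 : Real.log (ρ * fR x * Real.exp (N x / (ρ * fR x)) / sq x)
        ≤ Real.log (KvR x / sq x) := by
      have hfx := hf0 x
      have hsx := hsq0 x
      refine Real.log_le_log (by positivity) ?_
      exact (div_le_div_iff_of_pos_right (hsq0 x)).mpr hj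
    have l2 : Real.log (ρ * fR x * Real.exp (N x / (ρ * fR x)) / sq x)
        = Real.log ρ + (Real.log (vR x / sq x) - φ x) + N x / (ρ * fR x) := by
      rw [Real.log_div (by positivity) (ne_of_gt (hsq0 x)),
        Real.log_mul (by positivity) (Real.exp_pos _).ne',
        Real.log_mul (ne_of_gt hρ) (ne_of_gt (hf0 x)), Real.log_exp,
        Real.log_div (ne_of_gt (hv0 x)) (ne_of_gt (hsq0 x)), hφ_def]
      simp only
      rw [Real.log_div (ne_of_gt (hv0 x)) (ne_of_gt (hf0 x))]
      ring
    rw [l2] at l1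
    have l3 : h x * (Real.log ρ + (Real.log (vR x / sq x) - φ x) + N x / (ρ * fR x))
        ≤ h x * Real.log (KvR x / sq x) := mul_le_mul_of_nonneg_left l1 (hh0 x).le
    have l4 : h x * (N x / (ρ * fR x)) = gR x * N x / ρ := by
      rw [hh_def]
      have : fR x ≠ 0 := ne_of_gt (hf0 x)
      have : ρ ≠ 0 := ne_of_gt hρ
      field_simp
    nlinarith [l3, l4]
  -- assemble the conclusion
  set R : X → ℝ := fun x => h x * Real.log ρ + h x * Real.log (vR x / sq x)
      + (gR x * N x / ρ - h x * φ x) with hR_def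
  have iR : Integrable R μ := by
    refine ((hpairh.mul_const (Real.log ρ)).add hIH).add ((igN.div_const ρ).sub iφ)
  have hup : ∀ᵐ x ∂μ, h x * Real.log (KvR x / sq x) ≤ sq x * KvR x := by
    filter_upwards [hKvpos] with x hx
    have l5 : Real.log (KvR x / sq x) ≤ KvR x / sq x :=
      log_le_self_of_pos (div_pos hx (hsq0 x))
    calc h x * Real.log (KvR x / sq x) ≤ h x * (KvR x / sq x) :=
          mul_le_mul_of_nonneg_left l5 (hh0 x).le
      _ = (h x / sq x) * KvR x := by ring
      _ = sq x * KvR x := by rw [hhsq x]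
  have iT : Integrable (fun x => h x * Real.log (KvR x / sq x)) μ := by
    refine integrable_of_le_of_le ((hhm.mul ((hKvm.div hsqm).log)).aestronglyMeasurable)
      hup mainpt hpair2 iR
  refine ⟨hKvpos, iT, ?_⟩
  have hfin := integral_mono_ae iR iT mainpt
  have i1 : Integrable (fun x => h x * Real.log ρ + h x * Real.log (vR x / sq x)) μ := by
    exact (hpairh.mul_const (Real.log ρ)).add hIH
  have i2 : Integrable (fun x => gR x * N x / ρ - h x * φ x) μ := by
    exact (igN.div_const ρ).sub iφ
  have i1a : Integrable (fun x => h x * Real.log ρ) μ := hpairh.mul_const (Real.log ρ)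
  have eval : ∫ x, R x ∂μ = Real.log ρ + ∫ x, h x * Real.log (vR x / sq x) ∂μ := by
    rw [hR_def]
    rw [integral_add i1 i2, integral_add i1a hIH, integral_sub (igN.div_const ρ) iφ]
    have e6 : ∫ x, h x * Real.log ρ ∂μ = Real.log ρ := by
      rw [integral_mul_const, hh1, one_mul]
    have e7 : ∫ x, gR x * N x / ρ ∂μ = ∫ x, h x * φ x ∂μ := by
      rw [integral_div, intgN]
      field_simp
    rw [e6, e7]
    ring
  rw [eval] at hfin
  linarith [hfin]

open scoped ComplexOrder

/-- coercion of a finite sum in Lp -/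
private lemma coeFn_finsum {X : Type*} [MeasurableSpace X] {μ : Measure X} {ι : Type*}
    (s : Finset ι) (w : ι → Lp ℂ 2 μ) :
    ((s.sum w : Lp ℂ 2 μ) : X → ℂ) =ᵐ[μ] fun x => ∑ i ∈ s, (w i : X → ℂ) x := by
  classical
  induction s using Finset.induction_on with
  | empty =>
      simp only [Finset.sum_empty]
      exact Lp.coeFn_zero _ _ _
  | insert a s' hni ih =>
      rw [Finset.sum_insert hni]
      filter_upwards [Lp.coeFn_add (w a) (s'.sum w), ih] with x h1 h2
      rw [h1]
      simp only [Pi.add_apply, h2, Finset.sum_insert hni]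

/-- positive measurable representative of an a.e. strictly positive Lp function -/
private lemma exists_posRep {X : Type*} [MeasurableSpace X] {μ : Measure X}
    (v : Lp ℂ 2 μ) (hv : ∀ᵐ x ∂μ, 0 < (v : X → ℂ) x) :
    ∃ vR : X → ℝ, Measurable vR ∧ (∀ x, 0 < vR x) ∧
      ((v : X → ℂ) =ᵐ[μ] fun x => (vR x : ℂ)) := by
  obtain ⟨F, hFsm, hFeq⟩ := (Lp.aestronglyMeasurable v)
  have hFm : Measurable F := hFsm.measurable
  refine ⟨fun x => if 0 < (F x).re then (F x).re else 1, ?_, ?_, ?_⟩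
  · exact Measurable.ite (measurableSet_lt measurable_const (Complex.measurable_re.comp hFm))
      (Complex.measurable_re.comp hFm) measurable_const
  · intro x
    by_cases hc : 0 < (F x).re
    · simpa [hc]
    · simpa [hc]
  · filter_upwards [hv, hFeq] with x h1 h2
    rw [Complex.lt_def] at h1
    simp only [Complex.zero_re, Complex.zero_im] at h1
    rw [h2] at h1 ⊢
    show F x = ((if 0 < (F x).re then (F x).re else 1 : ℝ) : ℂ)
    rw [if_pos h1.1]
    exact Complex.ext (by simp) (by simp [← h1.2])

/-- L² pairing of the real parts is integrable, provided the first factor is a.e. real. -/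
private lemma pairing_integrable {X : Type*} [MeasurableSpace X] {μ : Measure X}
    (a b : Lp ℂ 2 μ) (ha : ∀ᵐ x ∂μ, ((a : X → ℂ) x).im = 0) :
    Integrable (fun x => ((a : X → ℂ) x).re * ((b : X → ℂ) x).re) μ := by
  have key := (L2.integrable_inner (𝕜 := ℂ) a b).re
  refine key.congr ?_
  filter_upwards [ha] with x hx
  simp only [RCLike.inner_apply, RingHom.coe_coe, RCLike.re_to_complex]
  rw [Complex.mul_re]
  simp [Complex.conj_re, Complex.conj_im, hx, mul_comm]

private lemma pairing_le {X : Type*} [MeasurableSpace X] {μ : Measure X}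
    (a b : Lp ℂ 2 μ) (ha : ∀ᵐ x ∂μ, ((a : X → ℂ) x).im = 0) :
    ∫ x, ((a : X → ℂ) x).re * ((b : X → ℂ) x).re ∂μ ≤ ‖a‖ * ‖b‖ := by
  have hint := L2.integrable_inner (𝕜 := ℂ) a b
  have e1 : ∫ x, ((a : X → ℂ) x).re * ((b : X → ℂ) x).re ∂μ
      = RCLike.re (inner ℂ a b : ℂ) := by
    rw [L2.inner_def, ← integral_re hint]
    refine integral_congr_ae ?_
    filter_upwards [ha] with x hx
    simp only [RCLike.inner_apply, RingHom.coe_coe, RCLike.re_to_complex]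
    rw [Complex.mul_re]
    simp [Complex.conj_re, Complex.conj_im, hx, mul_comm]
  rw [e1]
  calc RCLike.re (inner ℂ a b : ℂ) ≤ ‖(inner ℂ a b : ℂ)‖ := RCLike.re_le_norm _
    _ ≤ ‖a‖ * ‖b‖ := norm_inner_le_norm a b

/-- the adjoint eigen-equation gives a pointwise kernel identity -/
private lemma adjoint_kernel {X : Type*} [MeasurableSpace X] {μ : Measure X} [SigmaFinite μ]
    (Kop : Lp ℂ 2 μ →L[ℂ] Lp ℂ 2 μ) (k : X → X → ℝ)
    (hkm : Measurable (Function.uncurry k)) (hk0 : ∀ x y, 0 ≤ k x y)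
    (hrep : ∀ f : Lp ℂ 2 μ,
      (∀ᵐ x ∂μ, Integrable (fun y => k x y * ‖(f : X → ℂ) y‖) μ) ∧
      (∀ᵐ x ∂μ, (Kop f : X → ℂ) x = ∫ y, (k x y : ℂ) * (f : X → ℂ) y ∂μ))
    (gE : Lp ℂ 2 μ) (gR : X → ℝ) (hgm : Measurable gR) (hg0 : ∀ x, 0 < gR x)
    (hgeq : (gE : X → ℂ) =ᵐ[μ] fun x => (gR x : ℂ))
    (ρ : ℝ) (hρ0 : 0 ≤ ρ)
    (hadj : ContinuousLinearMap.adjoint Kop gE = (ρ : ℂ) • gE) :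
    ∀ᵐ y ∂μ, ∫⁻ x, ENNReal.ofReal (k x y * gR x) ∂μ = ENNReal.ofReal (ρ * gR y) := by
  have hk2 : Measurable fun p : X × X => k p.1 p.2 := by
    exact hkm
  have hsecm : ∀ x : X, Measurable fun y => k x y := fun x => by
    have : Measurable fun y => (Function.uncurry k) (x, y) := hkm.comp measurable_prodMk_left
    simpa [Function.uncurry] using this
  have hgim : ∀ᵐ x ∂μ, ((gE : X → ℂ) x).im = 0 := by
    filter_upwards [hgeq] with x hx; rw [hx]; simp
  set W : X → ℝ≥0∞ := fun y => ∫⁻ x, ENNReal.ofReal (k x y * gR x) ∂μ with hW_def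
  have hWm : Measurable W :=
    Measurable.lintegral_prod_left'
      (f := fun p : X × X => ENNReal.ofReal (k p.1 p.2 * gR p.1))
      (ENNReal.measurable_ofReal.comp (hk2.mul (hgm.comp measurable_fst)))
  have hW2m : Measurable fun y => ENNReal.ofReal (ρ * gR y) :=
    ENNReal.measurable_ofReal.comp (measurable_const.mul hgm)
  refine ae_eq_of_forall_setLIntegral_eq_of_sigmaFinite hWm hW2m ?_
  intro s hs hμs
  -- the indicator test element
  set u : Lp ℂ 2 μ := indicatorConstLp 2 hs hμs.ne (1 : ℂ) with hu_def
  have hucoe : (u : X → ℂ) =ᵐ[μ] s.indicator fun _ => (1 : ℂ) := indicatorConstLp_coeFn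
  have huim : ∀ᵐ x ∂μ, ((u : X → ℂ) x).im = 0 := by
    filter_upwards [hucoe] with x hx
    rw [hx]
    by_cases hxs : x ∈ s <;> simp [Set.indicator, hxs]
  -- integrability of the kernel over s, for a.e. x
  have hsecint : ∀ᵐ x ∂μ, IntegrableOn (fun y => k x y) s μ := by
    filter_upwards [(hrep u).1, hucoe.fun_comp (‖·‖)] with x h1 h2
    have h2' : (fun y => ‖(u : X → ℂ) y‖) =ᵐ[μ] fun y =>
        s.indicator (fun _ => (1 : ℝ)) y := by
      filter_upwards [hucoe] with y hy
      rw [hy]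
      by_cases hys : y ∈ s <;> simp [Set.indicator, hys]
    have h3 : Integrable (fun y => k x y * s.indicator (fun _ => (1:ℝ)) y) μ := by
      refine h1.congr ?_
      filter_upwards [h2'] with y hy
      rw [hy]
    have h4 : (fun y => k x y * s.indicator (fun _ => (1:ℝ)) y)
        = s.indicator (fun y => k x y) := by
      funext y
      by_cases hys : y ∈ s <;> simp [Set.indicator, hys]
    rw [h4, integrable_indicator_iff hs] at h3
    exact h3
  -- Bochner formula for Kop u
  set KuR : X → ℝ := fun x => ∫ y in s, k x y ∂μ with hKuR_def
  have hKuR0 : ∀ x, 0 ≤ KuR x := fun x =>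
    integral_nonneg fun y => hk0 x y
  have hKucoe : (Kop u : X → ℂ) =ᵐ[μ] fun x => (KuR x : ℂ) := by
    filter_upwards [(hrep u).2, hsecint] with x h1 h2
    rw [h1]
    have e1 : ∫ y, (k x y : ℂ) * (u : X → ℂ) y ∂μ
        = ∫ y, s.indicator (fun y => ((k x y : ℝ) : ℂ)) y ∂μ := by
      refine integral_congr_ae ?_
      filter_upwards [hucoe] with y hy
      rw [hy]
      by_cases hys : y ∈ s <;> simp [Set.indicator, hys]
    rw [e1, integral_indicator hs, hKuR_def]
    exact integral_ofReal
  -- inner products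
  have hinner : ρ * ∫ x in s, gR x ∂μ = ∫ x, KuR x * gR x ∂μ := by
    have a1 : (inner ℂ u (ContinuousLinearMap.adjoint Kop gE) : ℂ)
        = inner ℂ (Kop u) gE := ContinuousLinearMap.adjoint_inner_right Kop u gE
    have a2 : (inner ℂ u (ContinuousLinearMap.adjoint Kop gE) : ℂ)
        = (ρ : ℂ) * inner ℂ u gE := by rw [hadj, inner_smul_right]
    -- compute inner u gE
    have a3 : (inner ℂ u gE : ℂ) = ((∫ x in s, gR x ∂μ : ℝ) : ℂ) := by
      rw [L2.inner_def]
      have : (fun x => (inner ℂ ((u : X → ℂ) x) ((gE : X → ℂ) x) : ℂ))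
          =ᵐ[μ] fun x => s.indicator (fun x => ((gR x : ℝ) : ℂ)) x := by
        filter_upwards [hucoe, hgeq] with x h1 h2
        simp only [RCLike.inner_apply, RingHom.coe_coe, h1, h2]
        by_cases hxs : x ∈ s <;> simp [Set.indicator, hxs]
      rw [integral_congr_ae this, integral_indicator hs]
      exact integral_ofReal
    -- compute inner (Kop u) gE
    have a4 : (inner ℂ (Kop u) gE : ℂ) = ((∫ x, KuR x * gR x ∂μ : ℝ) : ℂ) := by
      rw [L2.inner_def]
      have : (fun x => (inner ℂ ((Kop u : X → ℂ) x) ((gE : X → ℂ) x) : ℂ))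
          =ᵐ[μ] fun x => ((KuR x * gR x : ℝ) : ℂ) := by
        filter_upwards [hKucoe, hgeq] with x h1 h2
        simp only [RCLike.inner_apply, RingHom.coe_coe, h1, h2]
        rw [Complex.conj_ofReal, ← Complex.ofReal_mul, mul_comm]
      rw [integral_congr_ae this]
      exact integral_ofReal
    have := a2.symm.trans (a1.trans a4)
    rw [a3, ← Complex.ofReal_mul] at this
    exact_mod_cast this
  -- integrability of KuR * gR
  have hKuRgR : Integrable (fun x => KuR x * gR x) μ := by
    have := pairing_integrable (Kop u) gE ?him
    case him =>
      filter_upwards [hKucoe] with x hx; rw [hx]; simp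
    refine this.congr ?_
    filter_upwards [hKucoe, hgeq] with x h1 h2
    rw [h1, h2]
    simp
  -- lintegral computation
  have swap1 : ∫⁻ y in s, W y ∂μ = ∫⁻ x, ENNReal.ofReal (gR x * KuR x) ∂μ := by
    rw [hW_def]
    calc ∫⁻ y in s, ∫⁻ x, ENNReal.ofReal (k x y * gR x) ∂μ ∂μ
        = ∫⁻ x, ∫⁻ y, ENNReal.ofReal (k x y * gR x) ∂(μ.restrict s) ∂μ := by
          refine (lintegral_lintegral_swap ?_).symm
          exact (ENNReal.measurable_ofReal.comp (hk2.mul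
            (hgm.comp measurable_fst))).aemeasurable
      _ = ∫⁻ x, ENNReal.ofReal (gR x * KuR x) ∂μ := by
          refine lintegral_congr_ae ?_
          filter_upwards [hsecint] with x hx
          have e2 : ∀ y, ENNReal.ofReal (k x y * gR x)
              = ENNReal.ofReal (gR x) * ENNReal.ofReal (k x y) := fun y => by
            rw [mul_comm (k x y), ENNReal.ofReal_mul (hg0 x).le]
          calc ∫⁻ y, ENNReal.ofReal (k x y * gR x) ∂(μ.restrict s)
              = ENNReal.ofReal (gR x) * ∫⁻ y, ENNReal.ofReal (k x y) ∂(μ.restrict s) := by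
                rw [← lintegral_const_mul' _ _ ENNReal.ofReal_ne_top]
                exact lintegral_congr fun y => e2 y
            _ = ENNReal.ofReal (gR x) * ENNReal.ofReal (KuR x) := by
                congr 1
                rw [← ofReal_integral_eq_lintegral_ofReal hx
                  (Filter.Eventually.of_forall fun y => hk0 x y)]
            _ = ENNReal.ofReal (gR x * KuR x) := by
                rw [ENNReal.ofReal_mul (hg0 x).le]
  have final : ∫⁻ x, ENNReal.ofReal (gR x * KuR x) ∂μ
      = ∫⁻ y in s, ENNReal.ofReal (ρ * gR y) ∂μ := by
    have i1 : Integrable (fun x => gR x * KuR x) μ := by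
      refine hKuRgR.congr ?_
      filter_upwards with x
      ring_nf
    rw [← ofReal_integral_eq_lintegral_ofReal i1
      (Filter.Eventually.of_forall fun x => mul_nonneg (hg0 x).le (hKuR0 x))]
    have e3 : ∫ x, gR x * KuR x ∂μ = ρ * ∫ x in s, gR x ∂μ := by
      rw [hinner]
      refine integral_congr_ae ?_
      filter_upwards with x
      ring
    rw [e3]
    -- now the right side
    have i2 : IntegrableOn gR s μ := by
      have hp := pairing_integrable gE u hgim
      have : Integrable (s.indicator gR) μ := by
        refine hp.congr ?_
        filter_upwards [hucoe, hgeq] with x h1 h2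
        rw [h1, h2]
        by_cases hxs : x ∈ s <;> simp [Set.indicator, hxs]
      rwa [integrable_indicator_iff hs] at this
    rw [show ∫⁻ y in s, ENNReal.ofReal (ρ * gR y) ∂μ
        = ENNReal.ofReal (∫ y in s, ρ * gR y ∂μ) from
      (ofReal_integral_eq_lintegral_ofReal (i2.const_mul ρ)
        (Filter.Eventually.of_forall fun y => mul_nonneg hρ0 (hg0 y).le)).symm]
    rw [integral_const_mul]
  rw [swap1, final]

/-- kernel representation of `Kop v` for an a.e. real, positive `v` -/
private lemma kernel_apply_rep {X : Type*} [MeasurableSpace X] {μ : Measure X}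
    (Kop : Lp ℂ 2 μ →L[ℂ] Lp ℂ 2 μ) (k : X → X → ℝ)
    (hrep : ∀ f : Lp ℂ 2 μ,
      (∀ᵐ x ∂μ, Integrable (fun y => k x y * ‖(f : X → ℂ) y‖) μ) ∧
      (∀ᵐ x ∂μ, (Kop f : X → ℂ) x = ∫ y, (k x y : ℂ) * (f : X → ℂ) y ∂μ))
    (v : Lp ℂ 2 μ) (vR : X → ℝ) (hv0 : ∀ x, 0 < vR x)
    (hveq : (v : X → ℂ) =ᵐ[μ] fun x => (vR x : ℂ)) :
    (∀ᵐ x ∂μ, Integrable (fun y => k x y * vR y) μ) ∧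
    ((Kop v : X → ℂ) =ᵐ[μ] fun x => ((∫ y, k x y * vR y ∂μ : ℝ) : ℂ)) := by
  have habs : (fun y => ‖(v : X → ℂ) y‖) =ᵐ[μ] vR := by
    filter_upwards [hveq] with y hy
    rw [hy]
    simp [Complex.norm_real, abs_of_pos (hv0 y)]
  constructor
  · filter_upwards [(hrep v).1] with x h1
    refine h1.congr ?_
    filter_upwards [habs] with y hy
    rw [hy]
  · filter_upwards [(hrep v).2] with x h2
    rw [h2]
    have : ∫ y, (k x y : ℂ) * (v : X → ℂ) y ∂μ = ∫ y, ((k x y * vR y : ℝ) : ℂ) ∂μ := by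
      refine integral_congr_ae ?_
      filter_upwards [hveq] with y hy
      rw [hy, ← Complex.ofReal_mul]
    rw [this]
    exact integral_ofReal

/-- eigenvalue equation in kernel form -/
private lemma eigen_kernel {X : Type*} [MeasurableSpace X] {μ : Measure X}
    (Kop : Lp ℂ 2 μ →L[ℂ] Lp ℂ 2 μ) (k : X → X → ℝ)
    (hrep : ∀ f : Lp ℂ 2 μ,
      (∀ᵐ x ∂μ, Integrable (fun y => k x y * ‖(f : X → ℂ) y‖) μ) ∧
      (∀ᵐ x ∂μ, (Kop f : X → ℂ) x = ∫ y, (k x y : ℂ) * (f : X → ℂ) y ∂μ))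
    (fE : Lp ℂ 2 μ) (fR : X → ℝ) (hf0 : ∀ x, 0 < fR x)
    (hfeq : (fE : X → ℂ) =ᵐ[μ] fun x => (fR x : ℂ))
    (ρ : ℝ) (heq : Kop fE = (ρ : ℂ) • fE) :
    ∀ᵐ x ∂μ, Integrable (fun y => k x y * fR y) μ ∧ ∫ y, k x y * fR y ∂μ = ρ * fR x := by
  obtain ⟨hint, hform⟩ := kernel_apply_rep Kop k hrep fE fR hf0 hfeq
  have hsm : ((Kop fE : X → ℂ)) =ᵐ[μ] fun x => (ρ : ℂ) * (fR x : ℂ) := by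
    rw [heq]
    filter_upwards [Lp.coeFn_smul (ρ : ℂ) fE, hfeq] with x h1 h2
    rw [h1]
    simp only [Pi.smul_apply, smul_eq_mul, h2]
  filter_upwards [hint, hform, hsm] with x h1 h2 h3
  refine ⟨h1, ?_⟩
  have := h2.symm.trans h3
  rw [← Complex.ofReal_mul] at this
  exact_mod_cast this


set_option maxHeartbeats 2000000 in
theorem spectralRadius_sum_kernel_ge
    {X : Type*} [MeasurableSpace X] (μ : Measure X) [SigmaFinite μ]
    (n : ℕ) (K : Fin n → (Lp ℂ 2 μ →L[ℂ] Lp ℂ 2 μ))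
    (hK : ∀ i, IsPosKernelOp μ (K i))
    (f g : Fin n → Lp ℂ 2 μ)
    (hf : ∀ i, ∀ᵐ x ∂μ, 0 < (f i : X → ℂ) x)
    (hg : ∀ i, ∀ᵐ x ∂μ, 0 < (g i : X → ℂ) x)
    (heig : ∀ i, K i (f i) = ((spectralRadius ℂ (K i)).toReal : ℂ) • f i)
    (heig' : ∀ i, ContinuousLinearMap.adjoint (K i) (g i)
        = ((spectralRadius ℂ (K i)).toReal : ℂ) • g i)
    (h : X → ℝ) (hhm : Measurable h)
    (hfg : ∀ i, ∀ᵐ x ∂μ, (f i : X → ℂ) x * (g i : X → ℂ) x = (h x : ℂ))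
    (hh1 : ∫ x, h x ∂μ = 1)
    (t : Fin n → ℝ) (ht : ∀ i, 0 < t i) :
    ∑ i, t i * (spectralRadius ℂ (K i)).toReal
      ≤ (spectralRadius ℂ (∑ i, (t i : ℂ) • K i)).toReal := by
  classical
  set ρ : Fin n → ℝ := fun i => (spectralRadius ℂ (K i)).toReal with hρ_def
  have hρ0 : ∀ i, 0 ≤ ρ i := fun i => ENNReal.toReal_nonneg
  set T : Lp ℂ 2 μ →L[ℂ] Lp ℂ 2 μ := ∑ i, (t i : ℂ) • K i with hT_def
  set lam : ℝ := ∑ i, t i * ρ i with hlam_def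
  show lam ≤ (spectralRadius ℂ T).toReal
  have hlam0 : 0 ≤ lam := Finset.sum_nonneg fun i _ => mul_nonneg (ht i).le (hρ0 i)
  rcases eq_or_lt_of_le hlam0 with hlam | hlam
  · rw [← hlam]; exact ENNReal.toReal_nonneg
  -- main case
  choose k hkm hk0 hrep using hK
  choose fR hfRm hfR0 hfReq using fun i => exists_posRep (f i) (hf i)
  choose gR hgRm hgR0 hgReq using fun i => exists_posRep (g i) (hg i)
  have hfgR : ∀ i, (fun x => fR i x * gR i x) =ᵐ[μ] h := by
    intro i
    filter_upwards [hfg i, hfReq i, hgReq i] with x h1 h2 h3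
    rw [h2, h3, ← Complex.ofReal_mul] at h1
    exact_mod_cast h1
  obtain ⟨i0, hi0⟩ : ∃ i, 0 < t i * ρ i := by
    by_contra hcon
    push_neg at hcon
    have : lam ≤ 0 := Finset.sum_nonpos fun i _ => hcon i
    linarith
  have hρi0 : 0 < ρ i0 := by
    rcases (mul_pos_iff.mp hi0) with ⟨_, h2⟩ | ⟨h1, _⟩
    · exact h2
    · linarith [(ht i0)]
  set hR : X → ℝ := fun x => fR i0 x * gR i0 x with hhR_def
  have hhReq : hR =ᵐ[μ] h := hfgR i0
  have hhRm : Measurable hR := (hfRm i0).mul (hgRm i0)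
  have hhR0 : ∀ x, 0 < hR x := fun x => mul_pos (hfR0 i0 x) (hgR0 i0 x)
  set sq : X → ℝ := fun x => Real.sqrt (hR x) with hsq_def
  have hsqm : Measurable sq := hhRm.sqrt
  have hsq0 : ∀ x, 0 < sq x := fun x => Real.sqrt_pos.2 (hhR0 x)
  have hsq2 : ∀ x, sq x * sq x = hR x := fun x => Real.mul_self_sqrt (hhR0 x).le
  have hhsq : ∀ x, hR x / sq x = sq x := fun x => by rw [← hsq2 x]; field_simp
  have hint : Integrable h μ := by
    by_contra hcon
    rw [integral_undef hcon] at hh1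
    norm_num at hh1
  have hRint : Integrable hR μ := hint.congr hhReq.symm
  have hR1 : ∫ x, hR x ∂μ = 1 := by rw [integral_congr_ae hhReq, hh1]
  -- the element √h of L²
  have memH : MemLp (fun x => ((sq x : ℝ) : ℂ)) 2 μ := by
    have hm : AEStronglyMeasurable (fun x => ((sq x : ℝ) : ℂ)) μ := by
      exact (Complex.measurable_ofReal.comp hsqm).aestronglyMeasurable
    rw [memLp_two_iff_integrable_sq_norm hm]
    refine hRint.congr ?_
    filter_upwards with x
    rw [Complex.norm_real, Real.norm_eq_abs, abs_of_pos (hsq0 x), ← hsq2 x]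
    ring
  set H : Lp ℂ 2 μ := memH.toLp _ with hH_def
  have hHcoe : (H : X → ℂ) =ᵐ[μ] fun x => ((sq x : ℝ) : ℂ) := memH.coeFn_toLp
  have hHim : ∀ᵐ x ∂μ, ((H : X → ℂ) x).im = 0 := by
    filter_upwards [hHcoe] with x hx; rw [hx]; simp
  have normH : ‖H‖ = 1 := by
    have e1 : (inner ℂ H H : ℂ) = ((1 : ℝ) : ℂ) := by
      rw [L2.inner_def]
      have : (fun x => (inner ℂ ((H : X → ℂ) x) ((H : X → ℂ) x) : ℂ))
          =ᵐ[μ] fun x => ((hR x : ℝ) : ℂ) := by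
        filter_upwards [hHcoe] with x hx
        simp only [RCLike.inner_apply, RingHom.coe_coe, hx]
        rw [Complex.conj_ofReal, ← Complex.ofReal_mul, hsq2 x]
      rw [integral_congr_ae this,
        show ∫ x, ((hR x : ℝ) : ℂ) ∂μ = ((∫ x, hR x ∂μ : ℝ) : ℂ) from integral_ofReal, hR1]
    have e2 := inner_self_eq_norm_sq (𝕜 := ℂ) H
    rw [e1] at e2
    simp only [RCLike.re_to_complex, Complex.ofReal_re] at e2
    nlinarith [norm_nonneg H]
  -- coercion of T applied to anything
  have coeT : ∀ v : Lp ℂ 2 μ, (T v : X → ℂ)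
      =ᵐ[μ] fun x => ∑ i, (t i : ℂ) * (K i v : X → ℂ) x := by
    intro v
    have e1 : T v = ∑ i, ((t i : ℂ) • (K i v)) := by
      rw [hT_def, ContinuousLinearMap.sum_apply]
      congr 1
    rw [e1]
    filter_upwards [coeFn_finsum Finset.univ (fun i => (t i : ℂ) • (K i v)),
      ae_all_iff.2 fun i => Lp.coeFn_smul (t i : ℂ) (K i v)] with x h1 h2
    rw [h1]
    exact Finset.sum_congr rfl fun i _ => by rw [h2 i]; simp
  set u : ℕ → Lp ℂ 2 μ := fun m => (T ^ m) H with hu_def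
  have huS : ∀ m, u (m + 1) = T (u m) := by
    intro m
    rw [hu_def]
    simp only
    rw [pow_succ']
    rfl
  -- eigen data
  have E1 : ∀ i, ∀ᵐ x ∂μ, Integrable (fun y => k i x y * fR i y) μ ∧
      ∫ y, k i x y * fR i y ∂μ = ρ i * fR i x :=
    fun i => eigen_kernel (K i) (k i) (hrep i) (f i) (fR i) (hfR0 i) (hfReq i) (ρ i) (heig i)
  have E2 : ∀ i, ∀ᵐ y ∂μ, ∫⁻ x, ENNReal.ofReal (k i x y * gR i x) ∂μ
      = ENNReal.ofReal (ρ i * gR i y) :=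
    fun i => adjoint_kernel (K i) (k i) (hkm i) (hk0 i) (hrep i) (g i) (gR i) (hgRm i)
      (hgR0 i) (hgReq i) (ρ i) (hρ0 i) (heig' i)
  -- the main induction
  have main : ∀ m : ℕ, ∃ vR : X → ℝ, Measurable vR ∧ (∀ x, 0 < vR x) ∧
      ((u m : X → ℂ) =ᵐ[μ] fun x => (vR x : ℂ)) ∧
      Integrable (fun x => hR x * Real.log (vR x / sq x)) μ ∧
      (m : ℝ) * Real.log lam ≤ ∫ x, hR x * Real.log (vR x / sq x) ∂μ := by
    intro m
    induction m with
    | zero =>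
        refine ⟨sq, hsqm, hsq0, ?_, ?_, ?_⟩
        · have : u 0 = H := by rw [hu_def]; simp
          rw [this]
          exact hHcoe
        · have e0 : (fun x => hR x * Real.log (sq x / sq x)) = fun _ => (0 : ℝ) :=
            funext fun x => by rw [div_self (hsq0 x).ne', Real.log_one, mul_zero]
          rw [e0]
          exact integrable_zero _ _ _
        · have e0 : (fun x => hR x * Real.log (sq x / sq x)) = fun _ => (0 : ℝ) :=
            funext fun x => by rw [div_self (hsq0 x).ne', Real.log_one, mul_zero]
          rw [e0, integral_zero]
          simp
    | succ m ih =>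
        obtain ⟨vR, hvm, hv0, hveq, hIHint, hIHb⟩ := ih
        have hk2 : ∀ i, Measurable fun p : X × X => k i p.1 p.2 := fun i => by
          exact hkm i
        set W : Fin n → X → ℝ := fun i x => ∫ y, k i x y * vR y ∂μ with hW_def
        have hWm : ∀ i, Measurable (W i) := fun i => by
          have hsm : StronglyMeasurable fun p : X × X => k i p.1 p.2 * vR p.2 :=
            ((hk2 i).mul (hvm.comp measurable_snd)).stronglyMeasurable
          exact hsm.integral_prod_right'.measurable
        have hW0 : ∀ i x, 0 ≤ W i x := fun i x =>
          integral_nonneg fun y => mul_nonneg (hk0 i x y) (hv0 y).le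
        have repi : ∀ i, (∀ᵐ x ∂μ, Integrable (fun y => k i x y * vR y) μ) ∧
            ((K i (u m) : X → ℂ) =ᵐ[μ] fun x => ((W i x : ℝ) : ℂ)) := fun i =>
          kernel_apply_rep (K i) (k i) (hrep i) (u m) vR hv0 hveq
        have him_u : ∀ᵐ x ∂μ, ((u m : X → ℂ) x).im = 0 := by
          filter_upwards [hveq] with x hx; rw [hx]; simp
        have hfgRi : ∀ i, (fun x => fR i x * gR i x) =ᵐ[μ] hR := fun i =>
          (hfgR i).trans hhReq.symm
        have hsqi : ∀ i : Fin n, (fun x => Real.sqrt (fR i x * gR i x)) =ᵐ[μ] sq := fun i => by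
          filter_upwards [hfgRi i] with x hx
          rw [hsq_def]
          simp only
          rw [hx]
        have p2 : ∀ i, Integrable (fun x => Real.sqrt (fR i x * gR i x) * W i x) μ := by
          intro i
          refine (pairing_integrable H (K i (u m)) hHim).congr ?_
          filter_upwards [hHcoe, (repi i).2, hsqi i] with x h1 h2 h3
          rw [h1, h2, h3]
          simp
        have p1 : ∀ i, Integrable (fun x => vR x * gR i x) μ := by
          intro i
          refine (pairing_integrable (u m) (g i) him_u).congr ?_
          filter_upwards [hveq, hgReq i] with x h1 h2
          rw [h1, h2]
          simp
        have p3 : ∀ i, Integrable (fun x => fR i x * Real.sqrt (fR i x * gR i x)) μ := by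
          intro i
          have himf : ∀ᵐ x ∂μ, ((f i : X → ℂ) x).im = 0 := by
            filter_upwards [hfReq i] with x hx; rw [hx]; simp
          refine (pairing_integrable (f i) H himf).congr ?_
          filter_upwards [hfReq i, hHcoe, hsqi i] with x h1 h2 h3
          rw [h1, h2, h3]
          simp
        have ph : ∀ i, Integrable (fun x => fR i x * gR i x) μ := fun i =>
          hRint.congr (hfgRi i).symm
        have h1i : ∀ i, ∫ x, fR i x * gR i x ∂μ = 1 := fun i => by
          rw [integral_congr_ae (hfgRi i), hR1]
        have hIH' : ∀ i : Fin n, Integrable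
            (fun x => fR i x * gR i x * Real.log (vR x / Real.sqrt (fR i x * gR i x))) μ := by
          intro i
          refine hIHint.congr ?_
          filter_upwards [hfgRi i, hsqi i] with x h1 h2
          rw [h2, h1]
        have stepAi : ∀ i, 0 < ρ i → (∀ᵐ x ∂μ, 0 < W i x) ∧
            Integrable (fun x => hR x * Real.log (W i x / sq x)) μ ∧
            ∫ x, hR x * Real.log (vR x / sq x) ∂μ + Real.log (ρ i)
              ≤ ∫ x, hR x * Real.log (W i x / sq x) ∂μ := by
          intro i hi
          obtain ⟨c1, c2, c3⟩ := stepA (k i) (hkm i) (hk0 i) (fR i) (gR i) vR (W i)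
            (hfRm i) (hgRm i) hvm (hWm i) (hfR0 i) (hgR0 i) hv0 (ρ i) hi (E1 i) (E2 i)
            (by filter_upwards [(repi i).1] with x hx; exact ⟨hx, rfl⟩)
            (p1 i) (p2 i) (p3 i) (ph i) (h1i i) (hIH' i)
          have tr1 : (fun x => fR i x * gR i x * Real.log (W i x / Real.sqrt (fR i x * gR i x)))
              =ᵐ[μ] fun x => hR x * Real.log (W i x / sq x) := by
            filter_upwards [hfgRi i, hsqi i] with x h1 h2
            rw [h2, h1]
          have tr2 : (fun x => fR i x * gR i x * Real.log (vR x / Real.sqrt (fR i x * gR i x)))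
              =ᵐ[μ] fun x => hR x * Real.log (vR x / sq x) := by
            filter_upwards [hfgRi i, hsqi i] with x h1 h2
            rw [h2, h1]
          refine ⟨c1, c2.congr tr1, ?_⟩
          rw [← integral_congr_ae tr1, ← integral_congr_ae tr2]
          exact c3
        set V : X → ℝ := fun x => ∑ i, t i * W i x with hV_def
        have hVm : Measurable V :=
          Finset.measurable_sum Finset.univ fun i _ => (measurable_const.mul (hWm i))
        have hVcoe : (u (m + 1) : X → ℂ) =ᵐ[μ] fun x => ((V x : ℝ) : ℂ) := by
          rw [huS m]
          filter_upwards [coeT (u m), ae_all_iff.2 fun i => (repi i).2] with x h1 h2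
          rw [h1, hV_def]
          push_cast
          exact Finset.sum_congr rfl fun i _ => by rw [h2 i]
        have posAll : ∀ᵐ x ∂μ, ∀ i, 0 < ρ i → 0 < W i x := by
          rw [ae_all_iff]
          intro i
          by_cases hc : 0 < ρ i
          · filter_upwards [(stepAi i hc).1] with x hx
            exact fun _ => hx
          · filter_upwards with x hx
            exact absurd hx hc
        have posV : ∀ᵐ x ∂μ, 0 < V x := by
          filter_upwards [posAll] with x hx
          refine Finset.sum_pos' (fun i _ => mul_nonneg (ht i).le (hW0 i x)) ?_
          exact ⟨i0, Finset.mem_univ i0, mul_pos (ht i0) (hx i0 hρi0)⟩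
        set S : Finset (Fin n) := Finset.univ.filter fun i => 0 < ρ i with hS_def
        have hmemS : ∀ i ∈ S, 0 < ρ i := fun i hi => (Finset.mem_filter.mp hi).2
        set θ : Fin n → ℝ := fun i => t i * ρ i / lam with hθ_def
        have hθ0 : ∀ i, 0 ≤ θ i := fun i =>
          div_nonneg (mul_nonneg (ht i).le (hρ0 i)) hlam0
        have hθpos : ∀ i ∈ S, 0 < θ i := fun i hi =>
          div_pos (mul_pos (ht i) (hmemS i hi)) hlam
        have hθsum : ∑ i ∈ S, θ i = 1 := by
          rw [hθ_def]
          simp only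
          rw [← Finset.sum_div]
          rw [Finset.sum_filter_of_ne (fun i _ hne => ?_)]
          · rw [← hlam_def, div_self (ne_of_gt hlam)]
          · rcases lt_or_eq_of_le (hρ0 i) with hlt | heq
            · exact hlt
            · exact absurd (by rw [← heq, mul_zero]) hne
        -- pointwise AM-GM inequality
        have ptw : ∀ᵐ x ∂μ, hR x * Real.log lam
            + ∑ i ∈ S, θ i * (hR x * Real.log (W i x / sq x) - hR x * Real.log (ρ i))
            ≤ hR x * Real.log (V x / sq x) := by
          filter_upwards [posAll, posV] with x hx hVx
          set z : Fin n → ℝ := fun i => t i * W i x / (θ i * sq x) with hz_def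
          have hzpos : ∀ i ∈ S, 0 < z i := fun i hi => by
            have := hθpos i hi
            have := hsq0 x
            have := hx i (hmemS i hi)
            have := ht i
            positivity
          have amgm := Real.geom_mean_le_arith_mean_weighted S θ z
            (fun i _ => hθ0 i) hθsum (fun i hi => (hzpos i hi).le)
          have e1 : ∑ i ∈ S, θ i * z i = (∑ i ∈ S, t i * W i x) / sq x := by
            rw [Finset.sum_div]
            refine Finset.sum_congr rfl fun i hi => ?_
            rw [hz_def]
            have h5 := hθpos i hi
            have h6 := hsq0 x
            field_simp
          have e2 : (∑ i ∈ S, t i * W i x) ≤ V x := by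
            rw [hV_def]
            refine Finset.sum_le_sum_of_subset_of_nonneg (Finset.filter_subset _ _) ?_
            exact fun i _ _ => mul_nonneg (ht i).le (hW0 i x)
          have e3 : ∏ i ∈ S, z i ^ θ i ≤ V x / sq x := by
            refine amgm.trans ?_
            rw [e1]
            exact (div_le_div_iff_of_pos_right (hsq0 x)).mpr e2
          have l1 : Real.log (∏ i ∈ S, z i ^ θ i) ≤ Real.log (V x / sq x) :=
            Real.log_le_log
              (Finset.prod_pos fun i hi => Real.rpow_pos_of_pos (hzpos i hi) _) e3
          have l2 : Real.log (∏ i ∈ S, z i ^ θ i) = ∑ i ∈ S, θ i * Real.log (z i) := by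
            rw [Real.log_prod (fun i hi => (Real.rpow_pos_of_pos (hzpos i hi) _).ne')]
            exact Finset.sum_congr rfl fun i hi => Real.log_rpow (hzpos i hi) _
          have l3 : ∀ i ∈ S, Real.log (z i)
              = Real.log lam - Real.log (ρ i) + Real.log (W i x / sq x) := by
            intro i hi
            have hρi := hmemS i hi
            have hti := ht i
            have hsx := hsq0 x
            have hWx := hx i hρi
            have e4 : z i = lam / ρ i * (W i x / sq x) := by
              rw [hz_def, hθ_def]
              field_simp
            rw [e4, Real.log_mul (ne_of_gt (div_pos hlam hρi))
              (ne_of_gt (div_pos hWx hsx)), Real.log_div (ne_of_gt hlam) (ne_of_gt hρi)]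
          have l4 : Real.log lam
              + ∑ i ∈ S, θ i * (Real.log (W i x / sq x) - Real.log (ρ i))
              ≤ Real.log (V x / sq x) := by
            have e5 : ∑ i ∈ S, θ i * Real.log (z i)
                = ∑ i ∈ S, (θ i * Real.log lam
                  + θ i * (Real.log (W i x / sq x) - Real.log (ρ i))) := by
              refine Finset.sum_congr rfl fun i hi => ?_
              rw [l3 i hi]
              ring
            have e6 : ∑ i ∈ S, (θ i * Real.log lam
                + θ i * (Real.log (W i x / sq x) - Real.log (ρ i)))
                = Real.log lam
                  + ∑ i ∈ S, θ i * (Real.log (W i x / sq x) - Real.log (ρ i)) := by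
              rw [Finset.sum_add_distrib, ← Finset.sum_mul, hθsum, one_mul]
            calc Real.log lam
                + ∑ i ∈ S, θ i * (Real.log (W i x / sq x) - Real.log (ρ i))
                = ∑ i ∈ S, θ i * Real.log (z i) := by rw [e5, e6]
              _ = Real.log (∏ i ∈ S, z i ^ θ i) := l2.symm
              _ ≤ Real.log (V x / sq x) := l1
          have l5 := mul_le_mul_of_nonneg_left l4 (hhR0 x).le
          calc hR x * Real.log lam
              + ∑ i ∈ S, θ i * (hR x * Real.log (W i x / sq x) - hR x * Real.log (ρ i))
              = hR x * (Real.log lam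
                + ∑ i ∈ S, θ i * (Real.log (W i x / sq x) - Real.log (ρ i))) := by
                rw [mul_add, Finset.mul_sum]
                congr 1
                exact Finset.sum_congr rfl fun i _ => by ring
            _ ≤ hR x * Real.log (V x / sq x) := l5
        -- integrability of the lower bound
        have iterm : ∀ i ∈ S, Integrable (fun x =>
            θ i * (hR x * Real.log (W i x / sq x) - hR x * Real.log (ρ i))) μ := by
          intro i hi
          exact (((stepAi i (hmemS i hi)).2.1.sub (hRint.mul_const _)).const_mul (θ i))
        have iL : Integrable (fun x => hR x * Real.log lam
            + ∑ i ∈ S, θ i * (hR x * Real.log (W i x / sq x) - hR x * Real.log (ρ i))) μ := by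
          exact (hRint.mul_const _).add (integrable_finset_sum S (iterm))
        have hupV : ∀ᵐ x ∂μ, hR x * Real.log (V x / sq x) ≤ sq x * V x := by
          filter_upwards [posV] with x hx
          have l5 : Real.log (V x / sq x) ≤ V x / sq x :=
            log_le_self_of_pos (div_pos hx (hsq0 x))
          calc hR x * Real.log (V x / sq x) ≤ hR x * (V x / sq x) :=
                mul_le_mul_of_nonneg_left l5 (hhR0 x).le
            _ = (hR x / sq x) * V x := by ring
            _ = sq x * V x := by rw [hhsq x]
        have iU : Integrable (fun x => sq x * V x) μ := by
          refine (pairing_integrable H (u (m + 1)) hHim).congr ?_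
          filter_upwards [hHcoe, hVcoe] with x h1 h2
          rw [h1, h2]
          simp
        have iT : Integrable (fun x => hR x * Real.log (V x / sq x)) μ :=
          integrable_of_le_of_le ((hhRm.mul ((hVm.div hsqm).log)).aestronglyMeasurable)
            hupV ptw iU iL
        have hbnd := integral_mono_ae iL iT ptw
        have evalL : ∫ x, (hR x * Real.log lam
            + ∑ i ∈ S, θ i * (hR x * Real.log (W i x / sq x) - hR x * Real.log (ρ i))) ∂μ
            = Real.log lam + ∑ i ∈ S, θ i
              * ((∫ x, hR x * Real.log (W i x / sq x) ∂μ) - Real.log (ρ i)) := by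
          rw [integral_add (hRint.mul_const _) (integrable_finset_sum S iterm),
            integral_mul_const, hR1, one_mul, integral_finset_sum S iterm]
          congr 1
          refine Finset.sum_congr rfl fun i hi => ?_
          rw [integral_const_mul,
            integral_sub (stepAi i (hmemS i hi)).2.1 (hRint.mul_const _),
            integral_mul_const, hR1, one_mul]
        have sumlb : (m : ℝ) * Real.log lam ≤ ∑ i ∈ S, θ i
            * ((∫ x, hR x * Real.log (W i x / sq x) ∂μ) - Real.log (ρ i)) := by
          have hterm : ∀ i ∈ S, θ i * ((m : ℝ) * Real.log lam) ≤ θ i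
              * ((∫ x, hR x * Real.log (W i x / sq x) ∂μ) - Real.log (ρ i)) := by
            intro i hi
            refine mul_le_mul_of_nonneg_left ?_ (hθ0 i)
            have := (stepAi i (hmemS i hi)).2.2
            linarith [hIHb]
          calc (m : ℝ) * Real.log lam = ∑ i ∈ S, θ i * ((m : ℝ) * Real.log lam) := by
                rw [← Finset.sum_mul, hθsum, one_mul]
            _ ≤ _ := Finset.sum_le_sum hterm
        -- package, with an everywhere-positive representative
        set vR' : X → ℝ := fun x => if 0 < V x then V x else 1 with hvR'_def
        have hvR'm : Measurable vR' :=
          Measurable.ite (measurableSet_lt measurable_const hVm) hVm measurable_const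
        have hvR'0 : ∀ x, 0 < vR' x := fun x => by
          by_cases hc : 0 < V x
          · simpa [hvR'_def, hc]
          · simpa [hvR'_def, hc]
        have hVeq' : V =ᵐ[μ] vR' := by
          filter_upwards [posV] with x hx
          rw [hvR'_def]
          simp [hx]
        refine ⟨vR', hvR'm, hvR'0, ?_, ?_, ?_⟩
        · filter_upwards [hVcoe, hVeq'] with x h1 h2
          rw [h1, h2]
        · refine iT.congr ?_
          filter_upwards [hVeq'] with x hx
          rw [hx]
        · have e9 : ∫ x, hR x * Real.log (vR' x / sq x) ∂μ
              = ∫ x, hR x * Real.log (V x / sq x) ∂μ := by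
            refine integral_congr_ae ?_
            filter_upwards [hVeq'] with x hx
            rw [← hx]
          rw [e9]
          have cast1 : ((m + 1 : ℕ) : ℝ) = (m : ℝ) + 1 := by push_cast; ring
          calc ((m + 1 : ℕ) : ℝ) * Real.log lam
              = Real.log lam + (m : ℝ) * Real.log lam := by rw [cast1]; ring
            _ ≤ Real.log lam + ∑ i ∈ S, θ i
                * ((∫ x, hR x * Real.log (W i x / sq x) ∂μ) - Real.log (ρ i)) := by
                linarith [sumlb]
            _ = ∫ x, (hR x * Real.log lam + ∑ i ∈ S, θ i
                * (hR x * Real.log (W i x / sq x) - hR x * Real.log (ρ i))) ∂μ := evalL.symm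
            _ ≤ _ := hbnd
  -- norm bound for each m
  have normb : ∀ m : ℕ, lam ^ m ≤ ‖T ^ m‖ := by
    intro m
    obtain ⟨vR, hvm, hv0, hveq, hint_m, hb⟩ := main m
    have him : ∀ᵐ x ∂μ, ((u m : X → ℂ) x).im = 0 := by
      filter_upwards [hveq] with x hx; rw [hx]; simp
    have epair : (fun x => ((u m : X → ℂ) x).re * ((H : X → ℂ) x).re)
        =ᵐ[μ] fun x => vR x * sq x := by
      filter_upwards [hveq, hHcoe] with x h1 h2
      rw [h1, h2]; simp
    have ivs : Integrable (fun x => vR x * sq x) μ :=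
      (pairing_integrable (u m) H him).congr epair
    set c : ℝ := ∫ x, vR x * sq x ∂μ with hc_def
    have hc1 : c ≤ ‖T ^ m‖ := by
      have b1 := pairing_le (u m) H him
      rw [integral_congr_ae epair] at b1
      refine b1.trans ?_
      rw [normH, mul_one]
      calc ‖u m‖ = ‖(T ^ m) H‖ := rfl
        _ ≤ ‖T ^ m‖ * ‖H‖ := (T ^ m).le_opNorm H
        _ = ‖T ^ m‖ := by rw [normH, mul_one]
    have hμ0 : μ ≠ 0 := by
      intro h0
      rw [h0] at hR1
      simp at hR1
    have hc0 : 0 < c := by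
      rw [hc_def]
      rw [integral_pos_iff_support_of_nonneg_ae
        (Filter.Eventually.of_forall fun x => mul_nonneg (hv0 x).le (hsq0 x).le) ivs]
      have : Function.support (fun x => vR x * sq x) = Set.univ := by
        ext x
        simp only [Function.mem_support, Set.mem_univ, iff_true]
        exact (mul_pos (hv0 x) (hsq0 x)).ne'
      rw [this]
      exact Measure.measure_univ_pos.mpr hμ0
    -- Jensen at the end
    have jend : ∫ x, hR x * Real.log (vR x / sq x) ∂μ ≤ Real.log c := by
      have ptw : ∀ x, hR x * Real.log (vR x / sq x)
          ≤ vR x * sq x / c + hR x * (Real.log c - 1) := by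
        intro x
        have hvx := hv0 x
        have hsx := hsq0 x
        have l1 : Real.log (vR x / sq x / c) ≤ vR x / sq x / c - 1 :=
          Real.log_le_sub_one_of_pos (by positivity)
        have l2 : Real.log (vR x / sq x) = Real.log (vR x / sq x / c) + Real.log c := by
          rw [Real.log_div (by positivity) (ne_of_gt hc0)]
          ring
        have l3 : hR x * Real.log (vR x / sq x)
            ≤ hR x * ((vR x / sq x / c - 1) + Real.log c) := by
          rw [l2]
          exact mul_le_mul_of_nonneg_left (by linarith) (hhR0 x).le
        calc hR x * Real.log (vR x / sq x)
            ≤ hR x * ((vR x / sq x / c - 1) + Real.log c) := l3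
          _ = (hR x / sq x) * vR x / c + hR x * (Real.log c - 1) := by ring
          _ = vR x * sq x / c + hR x * (Real.log c - 1) := by rw [hhsq x]; ring
      have iR : Integrable (fun x => vR x * sq x / c + hR x * (Real.log c - 1)) μ :=
        (ivs.div_const c).add (hRint.mul_const _)
      have := integral_mono hint_m iR ptw
      refine this.trans (le_of_eq ?_)
      rw [integral_add (ivs.div_const c) (hRint.mul_const _), integral_div,
        integral_mul_const, hR1, ← hc_def]
      field_simp
      ring
    have l4 : (m : ℝ) * Real.log lam ≤ Real.log ‖T ^ m‖ :=
      (hb.trans jend).trans (Real.log_le_log hc0 hc1)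
    have hTm0 : 0 < ‖T ^ m‖ := lt_of_lt_of_le hc0 hc1
    calc lam ^ m = Real.exp ((m : ℝ) * Real.log lam) := by
          rw [Real.exp_nat_mul, Real.exp_log hlam]
      _ ≤ Real.exp (Real.log ‖T ^ m‖) := Real.exp_le_exp.mpr l4
      _ = ‖T ^ m‖ := Real.exp_log hTm0
  -- Gelfand
  have rfin : spectralRadius ℂ T ≠ ∞ := by
    refine ne_top_of_le_ne_top ?_ (spectrum.spectralRadius_le_pow_nnnorm_pow_one_div ℂ T 0)
    push_cast
    refine ENNReal.mul_ne_top ?_ ?_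
    · exact ENNReal.rpow_ne_top_of_nonneg (by norm_num) ENNReal.coe_ne_top
    · exact ENNReal.rpow_ne_top_of_nonneg (by norm_num) ENNReal.coe_ne_top
  have gel := spectrum.pow_nnnorm_pow_one_div_tendsto_nhds_spectralRadius T
  have hofle : ENNReal.ofReal lam ≤ spectralRadius ℂ T := by
    refine ge_of_tendsto gel ?_
    filter_upwards [Filter.eventually_ge_atTop 1] with m hm
    have hm0 : (m : ℝ) ≠ 0 := by
      have : (1 : ℕ) ≤ m := hm
      positivity
    have h1 : (ENNReal.ofReal lam) ^ (m : ℕ) ≤ (‖T ^ m‖₊ : ℝ≥0∞) := by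
      rw [← ENNReal.ofReal_pow hlam0, ← enorm_eq_nnnorm, ← ofReal_norm]
      exact ENNReal.ofReal_le_ofReal (normb m)
    calc ENNReal.ofReal lam = ((ENNReal.ofReal lam) ^ (m : ℕ)) ^ (1 / (m : ℝ)) := by
          rw [← ENNReal.rpow_natCast, ← ENNReal.rpow_mul, mul_one_div,
            div_self hm0, ENNReal.rpow_one]
      _ ≤ (‖T ^ m‖₊ : ℝ≥0∞) ^ (1 / (m : ℝ)) :=
          ENNReal.rpow_le_rpow h1 (by positivity)
  have := ENNReal.toReal_mono rfin hofle
  rwa [ENNReal.toReal_ofReal hlam0] at this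
end
end

section
/- Let A be a positive bounded linear operator on L²(X, μ), let d ∈ L^∞(X, μ) be strictly positive with 1/d ∈ L^∞(X, μ), and let D be the corresponding (invertible) multiplication operator. Then r( D A D^{-1} + A* ) ≥ 2·r(A). -/
open MeasureTheory
open scoped ENNReal ComplexOrder

noncomputable section

section SRAuxGeneric

open scoped InnerProductSpace ComplexConjugate



lemma isUnit_conj_iff {R : Type*} [Ring R] (u : Rˣ) (x : R) :
    IsUnit (↑u * x * ↑u⁻¹) ↔ IsUnit x := by
  constructor
  · intro h
    have : x = ↑u⁻¹ * (↑u * x * ↑u⁻¹) * ↑u := by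
      simp [mul_assoc]
    rw [this]
    exact ((Units.isUnit u⁻¹).mul h).mul (Units.isUnit u)
  · intro h
    exact ((Units.isUnit u).mul h).mul (Units.isUnit u⁻¹)

lemma spectrum_conj {R : Type*} [Ring R] [Algebra ℂ R] (u : Rˣ) (a : R) :
    spectrum ℂ (↑u * a * ↑u⁻¹) = spectrum ℂ a := by
  ext l
  simp only [spectrum.mem_iff, not_iff_not]
  have : algebraMap ℂ R l - ↑u * a * ↑u⁻¹ = ↑u * (algebraMap ℂ R l - a) * ↑u⁻¹ := by
    rw [mul_sub, sub_mul]
    congr 1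
    rw [mul_assoc, Algebra.commutes l (↑u⁻¹ : R), ← mul_assoc]
    simp
  rw [this, isUnit_conj_iff]

lemma spectralRadius_conj {R : Type*} [NormedRing R] [NormedAlgebra ℂ R] (u : Rˣ) (a : R) :
    spectralRadius ℂ (↑u * a * ↑u⁻¹) = spectralRadius ℂ a := by
  unfold spectralRadius
  rw [spectrum_conj]


lemma cos_re_add_sin_im_le (θ : ℝ) (z : ℂ) :
    Real.cos θ * z.re + Real.sin θ * z.im ≤ ‖z‖ := by
  have h : Real.cos θ * z.re + Real.sin θ * z.im
      = (Complex.exp (-(θ : ℂ) * Complex.I) * z).re := by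
    have : Complex.exp (-(θ : ℂ) * Complex.I)
        = Complex.cos θ - Complex.sin θ * Complex.I := by
      rw [show -(θ:ℂ) * Complex.I = (-θ : ℂ) * Complex.I by ring, Complex.exp_mul_I]
      push_cast
      rw [Complex.cos_neg, Complex.sin_neg]
      ring
    rw [this]
    simp [Complex.sub_re, Complex.mul_re, Complex.cos_ofReal_re, Complex.sin_ofReal_re,
      Complex.cos_ofReal_im, Complex.sin_ofReal_im, Complex.mul_im]
  rw [h]
  calc (Complex.exp (-(θ : ℂ) * Complex.I) * z).re
      ≤ ‖Complex.exp (-(θ : ℂ) * Complex.I) * z‖ := Complex.re_le_norm _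
  _ = ‖z‖ := by
      rw [norm_mul]
      rw [show -(θ:ℂ) * Complex.I = ((-θ : ℝ) : ℂ) * Complex.I by push_cast; ring]
      rw [Complex.norm_exp_ofReal_mul_I, one_mul]

lemma abs_le_of_forall_rat {z : ℂ} {c : ℝ}
    (h : ∀ q : ℚ, Real.cos q * z.re + Real.sin q * z.im ≤ c) : ‖z‖ ≤ c := by
  by_cases hz : z = 0
  · simpa [hz] using h 0
  · set F : ℝ → ℝ := fun θ => Real.cos θ * z.re + Real.sin θ * z.im with hF
    have hcont : Continuous F := by fun_prop
    have hFarg : F (Complex.arg z) = ‖z‖ := by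
      rw [hF]
      simp only
      rw [Complex.cos_arg hz, Complex.sin_arg]
      field_simp
      rw [Complex.sq_norm, Complex.normSq_apply]; ring
    -- rational sequence approaching arg z
    have : ∀ n : ℕ, ∃ q : ℚ, |(q : ℝ) - Complex.arg z| < 1 / (n + 1) := by
      intro n
      obtain ⟨q, hq⟩ := exists_rat_near (Complex.arg z) (show (0:ℝ) < 1/(n+1) by positivity)
      exact ⟨q, by rwa [abs_sub_comm] at hq⟩
    choose seq hseq using this
    have htend : Filter.Tendsto (fun n => ((seq n : ℝ))) Filter.atTop (nhds (Complex.arg z)) := by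
      rw [tendsto_iff_dist_tendsto_zero]
      apply squeeze_zero (fun n => dist_nonneg) (fun n => le_of_lt ?_) tendsto_one_div_add_atTop_nhds_zero_nat
      rw [Real.dist_eq]
      exact hseq _
    have hFtend : Filter.Tendsto (fun n => F (seq n)) Filter.atTop (nhds (‖z‖)) := by
      rw [← hFarg]
      exact (hcont.tendsto _).comp htend
    exact le_of_tendsto hFtend (Filter.Eventually.of_forall fun n => h (seq n))

variable {H : Type*} [NormedAddCommGroup H] [InnerProductSpace ℂ H] [CompleteSpace H]

lemma exists_max_spec (T : H →L[ℂ] H) (hr : 0 < (spectralRadius ℂ T).toReal) :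
    ∃ l : ℂ, l ∈ spectrum ℂ T ∧ (‖l‖₊ : ℝ≥0∞) = spectralRadius ℂ T := by
  have hne : (spectrum ℂ T).Nonempty := by
    by_contra h
    rw [Set.not_nonempty_iff_eq_empty] at h
    have : spectralRadius ℂ T = 0 := by
      simp [spectralRadius, h]
    simp [this] at hr
  obtain ⟨l, hl, hmax⟩ := (spectrum.isCompact (𝕜 := ℂ) T).exists_isMaxOn hne
    (continuous_nnnorm.continuousOn)
  refine ⟨l, hl, le_antisymm ?_ ?_⟩
  · exact le_iSup₂ (f := fun k (_ : k ∈ spectrum ℂ T) => (‖k‖₊ : ℝ≥0∞)) l hl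
  · refine iSup₂_le fun k hk => ?_
    exact_mod_cast hmax hk

/-- resolvent norm lower bound -/
lemma one_le_resolvent_norm_mul (T : H →L[ℂ] H) {l m : ℂ} (hl : l ∈ spectrum ℂ T)
    (u : (H →L[ℂ] H)ˣ)
    (hu : (u : H →L[ℂ] H) = algebraMap ℂ (H →L[ℂ] H) m - T) :
    1 ≤ ‖(↑u⁻¹ : H →L[ℂ] H)‖ * ‖m - l‖ := by
  by_contra hcon
  push_neg at hcon
  have hs : ‖(m - l) • (↑u⁻¹ : H →L[ℂ] H)‖ < 1 := by
    rw [norm_smul]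
    calc ‖m - l‖ * ‖(↑u⁻¹ : H →L[ℂ] H)‖ = ‖(↑u⁻¹ : H →L[ℂ] H)‖ * ‖m - l‖ := by ring
    _ < 1 := hcon
  have hunit : IsUnit ((1 : H →L[ℂ] H) - (m - l) • (↑u⁻¹ : H →L[ℂ] H)) :=
    (Units.oneSub _ hs).isUnit
  have key : algebraMap ℂ (H →L[ℂ] H) l - T
      = ↑u * ((1 : H →L[ℂ] H) - (m - l) • (↑u⁻¹ : H →L[ℂ] H)) := by
    rw [mul_sub, mul_one, mul_smul_comm, Units.mul_inv, hu, Algebra.algebraMap_eq_smul_one,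
      Algebra.algebraMap_eq_smul_one, sub_smul]
    abel
  have : IsUnit (algebraMap ℂ (H →L[ℂ] H) l - T) := by
    rw [key]; exact (Units.isUnit u).mul hunit
  exact (spectrum.mem_iff.mp hl) this

lemma exists_approx (T : H →L[ℂ] H) {ε : ℝ} (hε : 0 < ε)
    (hr : 0 < (spectralRadius ℂ T).toReal) :
    ∃ g : H, ‖g‖ = 1 ∧ (spectralRadius ℂ T).toReal - ε ≤ ‖(⟪T g, g⟫_ℂ : ℂ)‖ := by
  set r := (spectralRadius ℂ T).toReal with hrdef
  obtain ⟨l, hl, hlr⟩ := exists_max_spec T hr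
  have hfin : spectralRadius ℂ T ≠ ⊤ := by rw [← hlr]; exact ENNReal.coe_ne_top
  have hlnorm : ‖l‖ = r := by
    rw [hrdef, ← hlr]; simp
  set t : ℝ := min (ε / (2 * r)) 1 with ht
  have htpos : 0 < t := lt_min (div_pos hε (by linarith)) one_pos
  have htr : t * r ≤ ε / 2 := by
    have h1 : t ≤ ε / (2 * r) := min_le_left _ _
    calc t * r ≤ (ε / (2 * r)) * r := by nlinarith
    _ = ε / 2 := by field_simp
  have htrpos : 0 < t * r := mul_pos htpos hr
  set m : ℂ := ((1 + t : ℝ) : ℂ) * l with hm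
  have hmnorm : ‖m‖ = (1 + t) * r := by
    rw [hm, norm_mul, hlnorm, Complex.norm_real, Real.norm_eq_abs, abs_of_pos (show (0:ℝ) < 1 + t by linarith)]
  have hmres : m ∈ resolventSet ℂ T := by
    apply spectrum.mem_resolventSet_of_spectralRadius_lt
    rw [← hlr]
    rw [show ((‖l‖₊ : ℝ≥0∞) : ℝ≥0∞) < (‖m‖₊ : ℝ≥0∞) ↔ ‖l‖ < ‖m‖ by
      rw [ENNReal.coe_lt_coe]; exact_mod_cast Iff.rfl]
    rw [hlnorm, hmnorm]; nlinarith
  have hUnit : IsUnit (algebraMap ℂ (H →L[ℂ] H) m - T) := spectrum.mem_resolventSet_iff.mp hmres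
  set u := hUnit.unit with hudef
  have hu : (u : H →L[ℂ] H) = algebraMap ℂ (H →L[ℂ] H) m - T := hUnit.unit_spec
  set R := (↑u⁻¹ : H →L[ℂ] H) with hR
  have hml : ‖m - l‖ = t * r := by
    have : m - l = ((t : ℝ) : ℂ) * l := by rw [hm]; push_cast; ring
    rw [this, norm_mul, Complex.norm_real, hlnorm, Real.norm_eq_abs, abs_of_pos htpos]
  have hRnorm : 1 ≤ ‖R‖ * (t * r) := by
    have := one_le_resolvent_norm_mul T hl u hu
    rwa [hml] at this
  have hRpos : 0 < ‖R‖ := by nlinarith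
  obtain ⟨x, hx1, hx2⟩ := R.exists_lt_apply_of_lt_opNorm (show ‖R‖ / 2 < ‖R‖ by linarith)
  have hRx : 0 < ‖R x‖ := lt_trans (by linarith) hx2
  set c : ℂ := ((‖R x‖⁻¹ : ℝ) : ℂ) with hc
  set g : H := c • R x with hg
  have hgnorm : ‖g‖ = 1 := by
    rw [hg, norm_smul, hc, Complex.norm_real, Real.norm_eq_abs, abs_of_pos (inv_pos.mpr hRx)]
    field_simp
  have hux : (u : H →L[ℂ] H) (R x) = x := by
    have : ((u : H →L[ℂ] H) * R) x = (1 : H →L[ℂ] H) x := by rw [hR, Units.mul_inv]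
    simpa [ContinuousLinearMap.mul_apply] using this
  have hTRx : T (R x) = m • R x - x := by
    have := congrArg (fun y => y) hux
    rw [hu] at hux
    have h2 : (algebraMap ℂ (H →L[ℂ] H) m) (R x) - T (R x) = x := by
      simpa [ContinuousLinearMap.sub_apply] using hux
    have h3 : (algebraMap ℂ (H →L[ℂ] H) m) (R x) = m • R x := by
      rw [Algebra.algebraMap_eq_smul_one]
      simp
    rw [h3] at h2
    linear_combination (norm := module) -h2
  have hTg : T g = m • g - c • x := by
    rw [hg, _root_.map_smul, hTRx, smul_sub, smul_comm]
  have hcnorm : ‖c‖ ≤ 2 * (t * r) := by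
    rw [hc, Complex.norm_real, Real.norm_eq_abs, abs_of_pos (inv_pos.mpr hRx)]
    have h1 : ‖R x‖⁻¹ ≤ (‖R‖ / 2)⁻¹ := by
      apply inv_anti₀ (by linarith) (le_of_lt hx2)
    have h2 : (‖R‖ / 2)⁻¹ ≤ 2 * (t * r) := by
      rw [inv_le_iff_one_le_mul₀ (by linarith)]
      nlinarith
    linarith
  clear_value g c
  have hinner : (⟪T g, g⟫_ℂ : ℂ) = conj m - conj c * ⟪x, g⟫_ℂ := by
    rw [hTg, inner_sub_left, inner_smul_left, inner_smul_left,
      inner_self_eq_norm_sq_to_K, hgnorm]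
    push_cast
    ring
  have hxg : ‖(⟪x, g⟫_ℂ : ℂ)‖ ≤ 1 := by
    calc ‖(⟪x, g⟫_ℂ : ℂ)‖ ≤ ‖x‖ * ‖g‖ := norm_inner_le_norm x g
    _ ≤ 1 * 1 := by rw [hgnorm]; nlinarith [norm_nonneg x]
    _ = 1 := by ring
  refine ⟨g, hgnorm, ?_⟩
  calc r - ε ≤ (1 + t) * r - 2 * (t * r) := by nlinarith
  _ ≤ ‖conj m‖ - ‖conj c * ⟪x, g⟫_ℂ‖ := by
      rw [RCLike.norm_conj, hmnorm, norm_mul, RCLike.norm_conj]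
      have : ‖c‖ * ‖(⟪x, g⟫_ℂ : ℂ)‖ ≤ 2 * (t * r) := by
        nlinarith [norm_nonneg c, norm_nonneg (⟪x, g⟫_ℂ : ℂ)]
      linarith
  _ ≤ ‖(⟪T g, g⟫_ℂ : ℂ)‖ := by rw [hinner]; exact norm_sub_norm_le _ _


end SRAuxGeneric

namespace SRAux
open scoped InnerProductSpace ComplexConjugate

variable {X : Type*} [MeasurableSpace X] {μ : Measure X}

lemma memℒp_mul {e : X → ℝ} (hm : Measurable e) {K : ℝ} (hK : ∀ᵐ x ∂μ, |e x| ≤ K)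
    (f : Lp ℂ 2 μ) : MemLp (fun x => (e x : ℂ) * (f : X → ℂ) x) 2 μ := by
  refine ⟨(Complex.measurable_ofReal.comp hm).aestronglyMeasurable.mul
    (Lp.aestronglyMeasurable f), ?_⟩
  have hb : ∀ᵐ x ∂μ, ‖(e x : ℂ) * (f : X → ℂ) x‖ ≤ ‖((K : ℂ) • (f : X → ℂ)) x‖ := by
    filter_upwards [hK] with x hx
    simp only [Pi.smul_apply, norm_mul, norm_smul, Complex.norm_real, Real.norm_eq_abs,
]
    exact mul_le_mul_of_nonneg_right (hx.trans (le_abs_self K)) (norm_nonneg _)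
  calc eLpNorm (fun x => (e x : ℂ) * (f : X → ℂ) x) 2 μ
      ≤ eLpNorm ((K : ℂ) • (f : X → ℂ)) 2 μ := eLpNorm_mono_ae hb
  _ < ⊤ := by
      rw [eLpNorm_const_smul]
      exact ENNReal.mul_lt_top ENNReal.coe_lt_top (Lp.eLpNorm_lt_top f)

/-- multiplication operator by a bounded real function -/
def mulOp (e : X → ℝ) (hm : Measurable e) (K : ℝ) (hK : ∀ᵐ x ∂μ, |e x| ≤ K) :
    Lp ℂ 2 μ →L[ℂ] Lp ℂ 2 μ :=
  LinearMap.mkContinuous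
    { toFun := fun f => (memℒp_mul hm hK f).toLp _
      map_add' := fun f g => by
        apply Lp.ext
        filter_upwards [(memℒp_mul hm hK (f + g)).coeFn_toLp, (memℒp_mul hm hK f).coeFn_toLp,
          (memℒp_mul hm hK g).coeFn_toLp,
          Lp.coeFn_add ((memℒp_mul hm hK f).toLp _) ((memℒp_mul hm hK g).toLp _),
          Lp.coeFn_add f g] with x h1 h2 h3 h4 h5
        rw [h1, h4, h5]
        simp only [Pi.add_apply, h2, h3, mul_add]
      map_smul' := fun c f => by
        apply Lp.ext
        filter_upwards [(memℒp_mul hm hK (c • f)).coeFn_toLp, (memℒp_mul hm hK f).coeFn_toLp,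
          Lp.coeFn_smul c ((memℒp_mul hm hK f).toLp _), Lp.coeFn_smul c f] with x h1 h2 h3 h4
        rw [RingHom.id_apply, h1, h3]
        simp only [Pi.smul_apply, smul_eq_mul, h2, h4]
        ring }
    |K| (fun f => by
      simp only [LinearMap.coe_mk, AddHom.coe_mk]
      rw [Lp.norm_toLp, Lp.norm_def]
      have hb : ∀ᵐ x ∂μ, ‖(e x : ℂ) * (f : X → ℂ) x‖ ≤ ‖((K : ℂ) • (f : X → ℂ)) x‖ := by
        filter_upwards [hK] with x hx
        simp only [Pi.smul_apply, norm_mul, norm_smul, Complex.norm_real, Real.norm_eq_abs,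
]
        exact mul_le_mul_of_nonneg_right (hx.trans (le_abs_self K)) (norm_nonneg _)
      have h1 : eLpNorm (fun x => (e x : ℂ) * (f : X → ℂ) x) 2 μ
          ≤ ‖(K : ℂ)‖₊ • eLpNorm (f : X → ℂ) 2 μ := by
        calc eLpNorm (fun x => (e x : ℂ) * (f : X → ℂ) x) 2 μ
            ≤ eLpNorm ((K : ℂ) • (f : X → ℂ)) 2 μ := eLpNorm_mono_ae hb
        _ = ‖(K : ℂ)‖₊ • eLpNorm (f : X → ℂ) 2 μ := eLpNorm_const_smul _ _ _ _
      calc (eLpNorm (fun x => (e x : ℂ) * (f : X → ℂ) x) 2 μ).toReal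
          ≤ (‖(K : ℂ)‖₊ • eLpNorm (f : X → ℂ) 2 μ).toReal := by
            apply ENNReal.toReal_mono _ h1
            simp only [ENNReal.smul_def, smul_eq_mul]
            exact (ENNReal.mul_lt_top ENNReal.coe_lt_top (Lp.eLpNorm_lt_top f)).ne
      _ = |K| * (eLpNorm (f : X → ℂ) 2 μ).toReal := by
            simp [ENNReal.smul_def, ENNReal.toReal_mul, Complex.norm_real]
      )

lemma mulOp_coeFn (e : X → ℝ) (hm : Measurable e) (K : ℝ) (hK : ∀ᵐ x ∂μ, |e x| ≤ K)
    (f : Lp ℂ 2 μ) :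
    (mulOp e hm K hK f : X → ℂ) =ᵐ[μ] fun x => (e x : ℂ) * (f : X → ℂ) x :=
  (memℒp_mul hm hK f).coeFn_toLp

/-- composition with a 1-Lipschitz-at-0 style function -/
def compLp (G : ℂ → ℂ) (hG : Continuous G) (hb : ∀ z, ‖G z‖ ≤ ‖z‖) (f : Lp ℂ 2 μ) :
    Lp ℂ 2 μ :=
  MemLp.toLp (fun x => G ((f : X → ℂ) x))
    ⟨hG.comp_aestronglyMeasurable (Lp.aestronglyMeasurable f),
      lt_of_le_of_lt (eLpNorm_mono fun x => hb _) (Lp.eLpNorm_lt_top f)⟩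

lemma compLp_coeFn (G : ℂ → ℂ) (hG : Continuous G) (hb : ∀ z, ‖G z‖ ≤ ‖z‖) (f : Lp ℂ 2 μ) :
    (compLp G hG hb f : X → ℂ) =ᵐ[μ] fun x => G ((f : X → ℂ) x) :=
  MemLp.coeFn_toLp _


section Parts

variable {X : Type*} [MeasurableSpace X] {μ : Measure X}

def rePart (f : Lp ℂ 2 μ) : Lp ℂ 2 μ :=
  compLp (fun z => (z.re : ℂ)) (Complex.continuous_ofReal.comp Complex.continuous_re)
    (fun z => by simpa [Complex.norm_real, Real.norm_eq_abs] using Complex.abs_re_le_norm z) f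

def imPart (f : Lp ℂ 2 μ) : Lp ℂ 2 μ :=
  compLp (fun z => (z.im : ℂ)) (Complex.continuous_ofReal.comp Complex.continuous_im)
    (fun z => by simpa [Complex.norm_real, Real.norm_eq_abs] using Complex.abs_im_le_norm z) f

def posPart' (f : Lp ℂ 2 μ) : Lp ℂ 2 μ :=
  compLp (fun z => ((max z.re 0 : ℝ) : ℂ))
    (Complex.continuous_ofReal.comp (Complex.continuous_re.max continuous_const))
    (fun z => by
      simp only [Complex.norm_real, Real.norm_eq_abs]
      rw [abs_of_nonneg (le_max_right _ _)]
      exact max_le (Complex.re_le_norm z) (norm_nonneg z)) f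

def negPart' (f : Lp ℂ 2 μ) : Lp ℂ 2 μ :=
  compLp (fun z => ((max (-z.re) 0 : ℝ) : ℂ))
    (Complex.continuous_ofReal.comp ((Complex.continuous_re.neg).max continuous_const))
    (fun z => by
      simp only [Complex.norm_real, Real.norm_eq_abs]
      rw [abs_of_nonneg (le_max_right _ _)]
      refine max_le ?_ (norm_nonneg z)
      calc -z.re ≤ |z.re| := neg_le_abs z.re
      _ ≤ ‖z‖ := Complex.abs_re_le_norm z) f

def absPart (f : Lp ℂ 2 μ) : Lp ℂ 2 μ :=
  compLp (fun z => ((‖z‖ : ℝ) : ℂ))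
    (Complex.continuous_ofReal.comp continuous_norm)
    (fun z => by simp [abs_of_nonneg]) f

lemma norm_absPart (f : Lp ℂ 2 μ) : ‖absPart f‖ = ‖f‖ := by
  rw [absPart, compLp]; erw [Lp.norm_toLp]; rw [Lp.norm_def]
  congr 1
  apply eLpNorm_congr_norm_ae
  filter_upwards with x
  simp [abs_of_nonneg]


lemma rePart_coeFn (f : Lp ℂ 2 μ) :
    (rePart f : X → ℂ) =ᵐ[μ] fun x => ((((f : X → ℂ) x).re : ℝ) : ℂ) :=
  compLp_coeFn _ _ _ f

lemma imPart_coeFn (f : Lp ℂ 2 μ) :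
    (imPart f : X → ℂ) =ᵐ[μ] fun x => ((((f : X → ℂ) x).im : ℝ) : ℂ) :=
  compLp_coeFn _ _ _ f

lemma posPart'_coeFn (f : Lp ℂ 2 μ) :
    (posPart' f : X → ℂ) =ᵐ[μ] fun x => ((max ((f : X → ℂ) x).re 0 : ℝ) : ℂ) :=
  compLp_coeFn _ _ _ f

lemma negPart'_coeFn (f : Lp ℂ 2 μ) :
    (negPart' f : X → ℂ) =ᵐ[μ] fun x => ((max (-((f : X → ℂ) x).re) 0 : ℝ) : ℂ) :=
  compLp_coeFn _ _ _ f

lemma absPart_coeFn (f : Lp ℂ 2 μ) :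
    (absPart f : X → ℂ) =ᵐ[μ] fun x => ((‖(f : X → ℂ) x‖ : ℝ) : ℂ) :=
  compLp_coeFn _ _ _ f

variable {C : Lp ℂ 2 μ →L[ℂ] Lp ℂ 2 μ}

/-- a positive operator maps a.e. real functions to a.e. real functions -/
lemma posOp_map_real (hC : IsPositiveOp μ C) (f : Lp ℂ 2 μ)
    (hf : ∀ᵐ x ∂μ, ((f : X → ℂ) x).im = 0) :
    ∀ᵐ x ∂μ, ((C f : X → ℂ) x).im = 0 := by
  have hpos1 : ∀ᵐ x ∂μ, 0 ≤ (posPart' f : X → ℂ) x := by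
    filter_upwards [posPart'_coeFn f] with x h
    rw [h]
    exact Complex.zero_le_real.mpr (le_max_right _ _)
  have hpos2 : ∀ᵐ x ∂μ, 0 ≤ (negPart' f : X → ℂ) x := by
    filter_upwards [negPart'_coeFn f] with x h
    rw [h]
    exact Complex.zero_le_real.mpr (le_max_right _ _)
  have h1 := hC _ hpos1
  have h2 := hC _ hpos2
  have hdecomp : f = posPart' f - negPart' f := by
    apply Lp.ext
    filter_upwards [hf, posPart'_coeFn f, negPart'_coeFn f,
      Lp.coeFn_sub (posPart' f) (negPart' f)] with x h0 hpp hnn hs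
    rw [hs, Pi.sub_apply, hpp, hnn]
    apply Complex.ext
    · simp only [Complex.sub_re, Complex.ofReal_re]
      rcases le_total (((f : X → ℂ) x).re) 0 with hle | hle
      · rw [max_eq_right hle, max_eq_left (by linarith)]; ring
      · rw [max_eq_left hle, max_eq_right (by linarith)]; ring
    · simp [h0]
  have hCf : C f = C (posPart' f) - C (negPart' f) := by rw [← map_sub, ← hdecomp]
  filter_upwards [h1, h2, Lp.coeFn_sub (C (posPart' f)) (C (negPart' f))] with x ha hb hs
  have hx : (C f : X → ℂ) x = (C (posPart' f) : X → ℂ) x - (C (negPart' f) : X → ℂ) x := by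
    rw [hCf]; exact hs.trans rfl
  rw [hx, Complex.sub_im, ← (Complex.le_def.mp ha).2, ← (Complex.le_def.mp hb).2,
    Complex.zero_im, sub_zero]

/-- the modulus inequality `|Cg| ≤ C|g|` for positive operators -/
lemma posOp_abs_le (hC : IsPositiveOp μ C) (g : Lp ℂ 2 μ) :
    ∀ᵐ x ∂μ, ‖(C g : X → ℂ) x‖ ≤ ((C (absPart g) : X → ℂ) x).re := by
  set u := rePart g with hu
  set v := imPart g with hv
  set p := absPart g with hp
  have hdecomp : g = u + Complex.I • v := by
    apply Lp.ext
    filter_upwards [rePart_coeFn g, imPart_coeFn g, Lp.coeFn_add u (Complex.I • v),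
      Lp.coeFn_smul Complex.I v] with x h1 h2 h3 h4
    rw [h3, Pi.add_apply, h4, Pi.smul_apply, h1, h2, smul_eq_mul, mul_comm]
    exact (Complex.re_add_im _).symm
  have hCg : C g = C u + Complex.I • C v := by rw [hdecomp, map_add, _root_.map_smul]
  have hureal : ∀ᵐ x ∂μ, ((C u : X → ℂ) x).im = 0 := by
    refine posOp_map_real hC u ?_
    filter_upwards [rePart_coeFn g] with x h
    rw [h]; exact Complex.ofReal_im _
  have hvreal : ∀ᵐ x ∂μ, ((C v : X → ℂ) x).im = 0 := by
    refine posOp_map_real hC v ?_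
    filter_upwards [imPart_coeFn g] with x h
    rw [h]; exact Complex.ofReal_im _
  have hq : ∀ q : ℚ, ∀ᵐ x ∂μ,
      Real.cos q * ((C u : X → ℂ) x).re + Real.sin q * ((C v : X → ℂ) x).re
        ≤ ((C p : X → ℂ) x).re := by
    intro q
    set c1 : ℂ := ((Real.cos q : ℝ) : ℂ) with hc1
    set c2 : ℂ := ((Real.sin q : ℝ) : ℂ) with hc2
    set w : Lp ℂ 2 μ := c1 • u + c2 • v with hw
    have hpw : ∀ᵐ x ∂μ, 0 ≤ ((p - w : Lp ℂ 2 μ) : X → ℂ) x := by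
      filter_upwards [absPart_coeFn g, rePart_coeFn g, imPart_coeFn g,
        Lp.coeFn_sub p w, Lp.coeFn_add (c1 • u) (c2 • v),
        Lp.coeFn_smul c1 u, Lp.coeFn_smul c2 v] with x h1 h2 h3 h4 h5 h6 h7
      rw [h4, Pi.sub_apply, h5, Pi.add_apply, h6, h7, Pi.smul_apply, Pi.smul_apply,
        h1, h2, h3, smul_eq_mul, smul_eq_mul, hc1, hc2]
      rw [show (↑(‖(g : X → ℂ) x‖) : ℂ)
            - (((Real.cos q : ℝ) : ℂ) * ((((g : X → ℂ) x).re : ℝ) : ℂ)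
              + ((Real.sin q : ℝ) : ℂ) * ((((g : X → ℂ) x).im : ℝ) : ℂ))
          = ((‖(g : X → ℂ) x‖
              - (Real.cos q * ((g : X → ℂ) x).re
                + Real.sin q * ((g : X → ℂ) x).im) : ℝ) : ℂ) by push_cast; ring]
      rw [Complex.zero_le_real]
      have := cos_re_add_sin_im_le q ((g : X → ℂ) x)
      linarith
    have hCpw := hC _ hpw
    set w' : Lp ℂ 2 μ := c1 • C u + c2 • C v with hw'
    have hCpwEq : C (p - w) = C p - w' := by
      rw [map_sub, hw, map_add, _root_.map_smul, _root_.map_smul, hw']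
    filter_upwards [hCpw, Lp.coeFn_sub (C p) w', Lp.coeFn_add (c1 • C u) (c2 • C v),
      Lp.coeFn_smul c1 (C u), Lp.coeFn_smul c2 (C v)] with x h0 h1 h2 h3 h4
    have hx : (C (p - w) : X → ℂ) x
        = (C p : X → ℂ) x - (c1 * (C u : X → ℂ) x + c2 * (C v : X → ℂ) x) := by
      rw [hCpwEq]
      rw [h1, Pi.sub_apply, h2, Pi.add_apply, h3, h4, Pi.smul_apply, Pi.smul_apply,
        smul_eq_mul, smul_eq_mul]
    rw [hx] at h0
    have hre := (Complex.le_def.mp h0).1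
    rw [Complex.zero_re, Complex.sub_re, Complex.add_re, hc1, hc2,
      Complex.re_ofReal_mul, Complex.re_ofReal_mul] at hre
    linarith
  filter_upwards [ae_all_iff.mpr hq, hureal, hvreal,
    Lp.coeFn_add (C u) (Complex.I • C v), Lp.coeFn_smul Complex.I (C v)]
    with x hq' h1 h2 h3 h4
  have hz : (C g : X → ℂ) x = (C u : X → ℂ) x + Complex.I * (C v : X → ℂ) x := by
    rw [hCg]
    rw [h3, Pi.add_apply, h4, Pi.smul_apply, smul_eq_mul]
  have hre : ((C g : X → ℂ) x).re = ((C u : X → ℂ) x).re := by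
    rw [hz]; simp [Complex.add_re, Complex.mul_re, h2]
  have him : ((C g : X → ℂ) x).im = ((C v : X → ℂ) x).re := by
    rw [hz]; simp [Complex.add_im, Complex.mul_im, h1]
  apply abs_le_of_forall_rat
  intro q
  rw [hre, him]
  exact hq' q

open scoped InnerProductSpace in
/-- transfer to the inner product -/
lemma posOp_inner_abs_le (hC : IsPositiveOp μ C) (g : Lp ℂ 2 μ) :
    ‖(⟪C g, g⟫_ℂ : ℂ)‖ ≤ (⟪C (absPart g), absPart g⟫_ℂ : ℂ).re := by
  set p := absPart g with hp
  have habs := posOp_abs_le hC g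
  have hint1 : Integrable (fun x => (⟪(C g : X → ℂ) x, (g : X → ℂ) x⟫_ℂ : ℂ)) μ :=
    L2.integrable_inner (𝕜 := ℂ) (C g) g
  have hint2 : Integrable (fun x => (⟪(C p : X → ℂ) x, (p : X → ℂ) x⟫_ℂ : ℂ)) μ :=
    L2.integrable_inner (𝕜 := ℂ) (C p) p
  have hmid_eq : (fun x => ((C p : X → ℂ) x).re * ‖(g : X → ℂ) x‖)
      =ᵐ[μ] fun x => ((⟪(C p : X → ℂ) x, (p : X → ℂ) x⟫_ℂ : ℂ)).re := by
    filter_upwards [absPart_coeFn g] with x h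
    rw [RCLike.inner_apply, h]
    simp [Complex.mul_re]
    ring
  have hint3 : Integrable (fun x => ((C p : X → ℂ) x).re * ‖(g : X → ℂ) x‖) μ :=
    (hint2.re).congr hmid_eq.symm
  rw [L2.inner_def, L2.inner_def]
  calc ‖∫ x, (⟪(C g : X → ℂ) x, (g : X → ℂ) x⟫_ℂ : ℂ) ∂μ‖
      ≤ ∫ x, ‖(⟪(C g : X → ℂ) x, (g : X → ℂ) x⟫_ℂ : ℂ)‖ ∂μ := norm_integral_le_integral_norm _
  _ ≤ ∫ x, ((C p : X → ℂ) x).re * ‖(g : X → ℂ) x‖ ∂μ := by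
      refine integral_mono_ae hint1.norm hint3 ?_
      filter_upwards [habs] with x hx
      rw [RCLike.inner_apply]
      rw [show ‖(g : X → ℂ) x * (starRingEnd ℂ) ((C g : X → ℂ) x)‖
          = ‖(C g : X → ℂ) x‖ * ‖(g : X → ℂ) x‖ by
        simp [norm_mul, mul_comm]]
      exact mul_le_mul_of_nonneg_right hx (norm_nonneg _)
  _ = ∫ x, ((⟪(C p : X → ℂ) x, (p : X → ℂ) x⟫_ℂ : ℂ)).re ∂μ := integral_congr_ae hmid_eq
  _ = (∫ x, (⟪(C p : X → ℂ) x, (p : X → ℂ) x⟫_ℂ : ℂ) ∂μ).re := by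
      have h := integral_re hint2
      rw [RCLike.re_eq_complex_re] at h
      exact h

/-- the key numeric inequality: `‖C + C*‖ ≥ 2 r(C)` for positive `C` -/
lemma two_mul_spectralRadius_toReal_le (hC : IsPositiveOp μ C) :
    2 * (spectralRadius ℂ C).toReal ≤ ‖C + ContinuousLinearMap.adjoint C‖ := by
  set M := C + ContinuousLinearMap.adjoint C with hM
  rcases le_or_gt ((spectralRadius ℂ C).toReal) 0 with h | h
  · have := norm_nonneg M
    linarith
  · refine le_of_forall_pos_le_add fun ε hε => ?_
    obtain ⟨g, hg1, hg2⟩ := exists_approx C (show 0 < ε / 2 by linarith) h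
    set p := absPart g with hp
    have hp1 : ‖p‖ = 1 := by rw [hp, norm_absPart, hg1]
    have h3 : (spectralRadius ℂ C).toReal - ε / 2 ≤ (⟪C p, p⟫_ℂ : ℂ).re :=
      le_trans hg2 (posOp_inner_abs_le hC g)
    have hMp : (⟪M p, p⟫_ℂ : ℂ).re = 2 * (⟪C p, p⟫_ℂ : ℂ).re := by
      rw [hM, ContinuousLinearMap.add_apply, inner_add_left,
        ContinuousLinearMap.adjoint_inner_left]
      have hconj : (⟪p, C p⟫_ℂ : ℂ) = conj (⟪C p, p⟫_ℂ : ℂ) := (inner_conj_symm _ _).symm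
      rw [hconj, Complex.add_re, Complex.conj_re]
      ring
    have h4 : (⟪M p, p⟫_ℂ : ℂ).re ≤ ‖M‖ := by
      calc (⟪M p, p⟫_ℂ : ℂ).re ≤ ‖(⟪M p, p⟫_ℂ : ℂ)‖ := Complex.re_le_norm _
      _ ≤ ‖M p‖ * ‖p‖ := norm_inner_le_norm _ _
      _ ≤ ‖M‖ * ‖p‖ * ‖p‖ :=
          mul_le_mul_of_nonneg_right (M.le_opNorm p) (norm_nonneg p)
      _ = ‖M‖ := by rw [hp1]; ring
    linarith

end Parts

end SRAux


set_option maxHeartbeats 2000000 in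
theorem spectralRadius_add_adjoint_similarity
    {X : Type*} [MeasurableSpace X] (μ : Measure X) [SigmaFinite μ]
    (A D Dinv : Lp ℂ 2 μ →L[ℂ] Lp ℂ 2 μ) (hA : IsPositiveOp μ A)
    (d : X → ℝ) (hdm : Measurable d)
    (hd0 : ∀ᵐ x ∂μ, 0 < d x)
    (hdb : ∃ C : ℝ, ∀ᵐ x ∂μ, d x ≤ C) (hdib : ∃ C : ℝ, ∀ᵐ x ∂μ, (d x)⁻¹ ≤ C)
    (hD : IsMulOp μ d D) (hDinv : IsMulOp μ (fun x => (d x)⁻¹) Dinv) :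
    2 * spectralRadius ℂ A
      ≤ spectralRadius ℂ (D.comp (A.comp Dinv) + ContinuousLinearMap.adjoint A) := by

  rcases subsingleton_or_nontrivial (Lp ℂ 2 μ) with hsub | hnt
  · have h1 : spectrum ℂ A = ∅ := spectrum.of_subsingleton A
    have h2 : spectralRadius ℂ A = 0 := by simp [spectralRadius, h1]
    rw [h2, mul_zero]
    positivity
  obtain ⟨C₁, hdb⟩ := hdb
  obtain ⟨C₂, hdib⟩ := hdib
  -- the square-root multiplication operators
  have hem : Measurable (fun x => Real.sqrt (d x)) :=
    Real.continuous_sqrt.measurable.comp hdm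
  have heb : ∀ᵐ x ∂μ, |Real.sqrt (d x)| ≤ Real.sqrt C₁ := by
    filter_upwards [hdb] with x h1
    rw [abs_of_nonneg (Real.sqrt_nonneg _)]
    exact Real.sqrt_le_sqrt h1
  have he'm : Measurable (fun x => (Real.sqrt (d x))⁻¹) := hem.inv
  have he'b : ∀ᵐ x ∂μ, |(Real.sqrt (d x))⁻¹| ≤ Real.sqrt C₂ := by
    filter_upwards [hdib] with x h1
    rw [abs_of_nonneg (by positivity), ← Real.sqrt_inv]
    exact Real.sqrt_le_sqrt h1
  set E : Lp ℂ 2 μ →L[ℂ] Lp ℂ 2 μ := SRAux.mulOp _ hem (Real.sqrt C₁) heb with hEdef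
  set E' : Lp ℂ 2 μ →L[ℂ] Lp ℂ 2 μ := SRAux.mulOp _ he'm (Real.sqrt C₂) he'b with hE'def
  have hEc : ∀ f : Lp ℂ 2 μ,
      (E f : X → ℂ) =ᵐ[μ] fun x => ((Real.sqrt (d x) : ℝ) : ℂ) * (f : X → ℂ) x :=
    fun f => SRAux.mulOp_coeFn _ hem (Real.sqrt C₁) heb f
  have hE'c : ∀ f : Lp ℂ 2 μ,
      (E' f : X → ℂ) =ᵐ[μ] fun x => (((Real.sqrt (d x))⁻¹ : ℝ) : ℂ) * (f : X → ℂ) x :=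
    fun f => SRAux.mulOp_coeFn _ he'm (Real.sqrt C₂) he'b f
  -- algebraic identities
  have hEE' : E * E' = 1 := by
    refine ContinuousLinearMap.ext fun f => Lp.ext ?_
    filter_upwards [hEc (E' f), hE'c f, hd0] with x h1 h2 h3
    rw [ContinuousLinearMap.mul_apply, h1, h2, ContinuousLinearMap.one_apply]
    have hs : (Real.sqrt (d x) : ℝ) ≠ 0 := by positivity
    rw [← mul_assoc, ← Complex.ofReal_mul, mul_inv_cancel₀ hs, Complex.ofReal_one, one_mul]
  have hE'E : E' * E = 1 := by
    refine ContinuousLinearMap.ext fun f => Lp.ext ?_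
    filter_upwards [hE'c (E f), hEc f, hd0] with x h1 h2 h3
    rw [ContinuousLinearMap.mul_apply, h1, h2, ContinuousLinearMap.one_apply]
    have hs : (Real.sqrt (d x) : ℝ) ≠ 0 := by positivity
    rw [← mul_assoc, ← Complex.ofReal_mul, inv_mul_cancel₀ hs, Complex.ofReal_one, one_mul]
  have hD2 : D = E * E := by
    refine ContinuousLinearMap.ext fun f => Lp.ext ?_
    filter_upwards [hD f, hEc (E f), hEc f, hd0] with x h1 h2 h3 h4
    rw [h1, ContinuousLinearMap.mul_apply, h2, h3]
    rw [show (((Real.sqrt (d x) : ℝ) : ℂ) * (((Real.sqrt (d x) : ℝ) : ℂ) * (f : X → ℂ) x))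
        = (((Real.sqrt (d x) * Real.sqrt (d x) : ℝ) : ℂ) * (f : X → ℂ) x) by push_cast; ring]
    rw [Real.mul_self_sqrt h4.le]
  have hDinv2 : Dinv = E' * E' := by
    refine ContinuousLinearMap.ext fun f => Lp.ext ?_
    filter_upwards [hDinv f, hE'c (E' f), hE'c f, hd0] with x h1 h2 h3 h4
    rw [h1, ContinuousLinearMap.mul_apply, h2, h3]
    rw [show ((((Real.sqrt (d x))⁻¹ : ℝ) : ℂ) * ((((Real.sqrt (d x))⁻¹ : ℝ) : ℂ) * (f : X → ℂ) x))
        = ((((Real.sqrt (d x))⁻¹ * (Real.sqrt (d x))⁻¹ : ℝ) : ℂ) * (f : X → ℂ) x) by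
      push_cast; ring]
    rw [show (Real.sqrt (d x))⁻¹ * (Real.sqrt (d x))⁻¹ = (Real.sqrt (d x) * Real.sqrt (d x))⁻¹ by
      rw [mul_inv]]
    rw [Real.mul_self_sqrt h4.le]
  -- self-adjointness of E and E'
  have hEadj : ContinuousLinearMap.adjoint E = E := by
    symm
    rw [ContinuousLinearMap.eq_adjoint_iff]
    intro x y
    rw [MeasureTheory.L2.inner_def, MeasureTheory.L2.inner_def]
    apply integral_congr_ae
    filter_upwards [hEc x, hEc y] with t h1 h2
    rw [RCLike.inner_apply, RCLike.inner_apply, h1, h2, map_mul, Complex.conj_ofReal]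
    ring
  have hE'adj : ContinuousLinearMap.adjoint E' = E' := by
    symm
    rw [ContinuousLinearMap.eq_adjoint_iff]
    intro x y
    rw [MeasureTheory.L2.inner_def, MeasureTheory.L2.inner_def]
    apply integral_congr_ae
    filter_upwards [hE'c x, hE'c y] with t h1 h2
    rw [RCLike.inner_apply, RCLike.inner_apply, h1, h2, map_mul, Complex.conj_ofReal]
    ring
  -- the unit
  set u : (Lp ℂ 2 μ →L[ℂ] Lp ℂ 2 μ)ˣ := ⟨E, E', hEE', hE'E⟩ with hu
  set C : Lp ℂ 2 μ →L[ℂ] Lp ℂ 2 μ := E * (A * E') with hCdef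
  set M : Lp ℂ 2 μ →L[ℂ] Lp ℂ 2 μ := C + ContinuousLinearMap.adjoint C with hMdef
  -- positivity of C
  have hCpos : IsPositiveOp μ C := by
    intro f hf
    have h1 : ∀ᵐ x ∂μ, 0 ≤ (E' f : X → ℂ) x := by
      filter_upwards [hE'c f, hf] with x h1 h2
      rw [h1]
      exact mul_nonneg (Complex.zero_le_real.mpr (by positivity)) h2
    have h2 := hA _ h1
    have h3 : ∀ᵐ x ∂μ, 0 ≤ (E (A (E' f)) : X → ℂ) x := by
      filter_upwards [hEc (A (E' f)), h2] with x h1 h2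
      rw [h1]
      exact mul_nonneg (Complex.zero_le_real.mpr (Real.sqrt_nonneg _)) h2
    have : C f = E (A (E' f)) := rfl
    rw [this]
    exact h3
  -- conjugation identities
  have hCconj : (↑u : Lp ℂ 2 μ →L[ℂ] Lp ℂ 2 μ) * A * ↑u⁻¹ = C := by
    rw [hCdef]
    show E * A * E' = E * (A * E')
    rw [mul_assoc]
  have hBconj : D.comp (A.comp Dinv) + ContinuousLinearMap.adjoint A
      = (↑u : Lp ℂ 2 μ →L[ℂ] Lp ℂ 2 μ) * M * ↑u⁻¹ := by
    have hmul : (↑u : Lp ℂ 2 μ →L[ℂ] Lp ℂ 2 μ) * M * ↑u⁻¹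
        = E * C * E' + E * ContinuousLinearMap.adjoint C * E' := by
      show E * (C + ContinuousLinearMap.adjoint C) * E' = _
      rw [mul_add, add_mul]
    have h1 : E * C * E' = D.comp (A.comp Dinv) := by
      show E * C * E' = D * (A * Dinv)
      rw [hCdef, hD2, hDinv2]
      simp only [mul_assoc]
    have h2 : E * ContinuousLinearMap.adjoint C * E' = ContinuousLinearMap.adjoint A := by
      have hCadj : ContinuousLinearMap.adjoint C
          = E' * (ContinuousLinearMap.adjoint A * E) := by
        rw [hCdef]
        show ContinuousLinearMap.adjoint (E.comp (A.comp E')) = _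
        rw [ContinuousLinearMap.adjoint_comp, ContinuousLinearMap.adjoint_comp, hEadj, hE'adj]
        rfl
      rw [hCadj]
      calc E * (E' * (ContinuousLinearMap.adjoint A * E)) * E'
          = (E * E') * ContinuousLinearMap.adjoint A * (E * E') := by
            simp only [mul_assoc]
      _ = ContinuousLinearMap.adjoint A := by rw [hEE', one_mul, mul_one]
    rw [hmul, h1, h2]
  -- self-adjointness of M
  have hMsa : IsSelfAdjoint M := by
    rw [ContinuousLinearMap.isSelfAdjoint_iff']
    rw [hMdef, map_add, ContinuousLinearMap.adjoint_adjoint]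
    exact add_comm _ _
  -- finiteness
  have hfin : spectralRadius ℂ C ≠ ⊤ :=
    (lt_of_le_of_lt (spectrum.spectralRadius_le_nnnorm C) ENNReal.coe_lt_top).ne
  -- assemble
  have hsrA : spectralRadius ℂ A = spectralRadius ℂ C := by
    rw [← hCconj, spectralRadius_conj]
  have hsrB : spectralRadius ℂ (D.comp (A.comp Dinv) + ContinuousLinearMap.adjoint A)
      = spectralRadius ℂ M := by
    rw [hBconj, spectralRadius_conj]
  rw [hsrA, hsrB, hMsa.spectralRadius_eq_nnnorm]
  have hreal : 2 * (spectralRadius ℂ C).toReal ≤ ‖M‖ :=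
    SRAux.two_mul_spectralRadius_toReal_le hCpos
  calc 2 * spectralRadius ℂ C
      = ENNReal.ofReal (2 * (spectralRadius ℂ C).toReal) := by
        rw [ENNReal.ofReal_mul (by norm_num), ENNReal.ofReal_toReal hfin]
        norm_num
  _ ≤ ENNReal.ofReal ‖M‖ := ENNReal.ofReal_le_ofReal hreal
  _ = (‖M‖₊ : ℝ≥0∞) := ofReal_norm M
end
end

section
/- Let A and B be positive bounded linear operators on L²(X, μ). Then ‖A + B*‖ ≥ 2·√( r(A B) ). -/
open MeasureTheory
open scoped ENNReal ComplexOrder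

noncomputable section

namespace NormAddAdjAux

variable {F : Type*} [NormedAddCommGroup F] [InnerProductSpace ℂ F] [CompleteSpace F]

/-- An operator whose quadratic form is bounded below is invertible. -/
lemma isUnit_of_form_bound (T : F →L[ℂ] F) {c : ℝ} (hc : 0 < c)
    (h : ∀ x : F, c * ‖x‖ ^ 2 ≤ ‖(inner ℂ (T x) x : ℂ)‖) : IsUnit T := by
  have hb : ∀ x, c * ‖x‖ ≤ ‖T x‖ := by
    intro x
    rcases eq_or_ne x 0 with rfl | hx
    · simp
    · have h1 := h x
      have h2 : ‖(inner ℂ (T x) x : ℂ)‖ ≤ ‖T x‖ * ‖x‖ := norm_inner_le_norm _ _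
      have hx0 : 0 < ‖x‖ := norm_pos_iff.2 hx
      nlinarith
  have hinj : Function.Injective T := by
    intro x y hxy
    have h3 := hb (x - y)
    rw [map_sub, hxy, sub_self, norm_zero] at h3
    rw [← mul_zero c] at h3
    have h4 : ‖x - y‖ ≤ 0 := le_of_mul_le_mul_left h3 hc
    have : x - y = 0 := by rw [← norm_le_zero_iff]; exact h4
    exact sub_eq_zero.mp this
  rw [ContinuousLinearMap.isUnit_iff_bijective]
  refine ⟨hinj, ?_⟩
  have antilip : AntilipschitzWith ⟨c⁻¹, by positivity⟩ T :=
    T.antilipschitz_of_bound fun x => by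
      show ‖x‖ ≤ c⁻¹ * ‖T x‖
      rw [inv_mul_eq_div, le_div_iff₀ hc]
      calc ‖x‖ * c = c * ‖x‖ := mul_comm _ _
        _ ≤ ‖T x‖ := hb x
  have hclosed : IsClosed (Set.range T) := antilip.isClosed_range T.uniformContinuous
  have hclosed' : IsClosed ((LinearMap.range (T : F →ₗ[ℂ] F) : Submodule ℂ F) : Set F) := by
    rw [LinearMap.coe_range]; exact hclosed
  haveI : CompleteSpace (LinearMap.range (T : F →ₗ[ℂ] F) : Submodule ℂ F) := hclosed'.completeSpace_coe
  have horth : (LinearMap.range (T : F →ₗ[ℂ] F))ᗮ = ⊥ := by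
    rw [Submodule.eq_bot_iff]
    intro x hx
    have h0 : (inner ℂ (T x) x : ℂ) = 0 := hx (T x) (LinearMap.mem_range_self _ x)
    have h1 := h x
    rw [h0, norm_zero, ← mul_zero c] at h1
    have h4 : ‖x‖ ^ 2 ≤ 0 := le_of_mul_le_mul_left h1 hc
    have h5 : ‖x‖ ^ 2 = 0 := le_antisymm h4 (sq_nonneg _)
    have h6 : ‖x‖ = 0 := by
      have := pow_eq_zero_iff (n := 2) (by norm_num) |>.mp h5
      exact this
    rwa [norm_eq_zero] at h6
  have hrange : LinearMap.range (T : F →ₗ[ℂ] F) = ⊤ := Submodule.orthogonal_eq_bot_iff.mp horth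
  exact LinearMap.range_eq_top.mp hrange

/-- Spectrum is contained in the closed ball of radius the numerical radius. -/
lemma abs_le_of_mem_spectrum (T : F →L[ℂ] F) {w : ℝ}
    (hw : ∀ x : F, ‖(inner ℂ (T x) x : ℂ)‖ ≤ w * ‖x‖ ^ 2)
    {lam : ℂ} (hlam : lam ∈ spectrum ℂ T) : ‖lam‖ ≤ w := by
  by_contra hgt
  push_neg at hgt
  refine spectrum.mem_iff.mp hlam ?_
  refine isUnit_of_form_bound _ (c := ‖lam‖ - w) (by linarith) fun x => ?_
  have e1 : (inner ℂ ((algebraMap ℂ (F →L[ℂ] F) lam - T) x) x : ℂ)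
      = (starRingEnd ℂ) lam * ((‖x‖ : ℂ)) ^ 2 - inner ℂ (T x) x := by
    rw [ContinuousLinearMap.sub_apply, inner_sub_left, Algebra.algebraMap_eq_smul_one]
    rw [ContinuousLinearMap.smul_apply, ContinuousLinearMap.one_apply, inner_smul_left,
      inner_self_eq_norm_sq_to_K]
    rfl
  rw [e1]
  have h2 : ‖(starRingEnd ℂ) lam * ((‖x‖ : ℂ)) ^ 2‖ = ‖lam‖ * ‖x‖ ^ 2 := by
    rw [norm_mul, norm_pow]
    simp
  calc (‖lam‖ - w) * ‖x‖ ^ 2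
      = ‖lam‖ * ‖x‖ ^ 2 - w * ‖x‖ ^ 2 := by ring
    _ ≤ ‖(starRingEnd ℂ) lam * ((‖x‖ : ℂ)) ^ 2‖ - ‖(inner ℂ (T x) x : ℂ)‖ := by
        rw [h2]; have := hw x; linarith
    _ ≤ ‖(starRingEnd ℂ) lam * ((‖x‖ : ℂ)) ^ 2 - inner ℂ (T x) x‖ := norm_sub_norm_le _ _


lemma spectrum_bound_prod (A B : F →L[ℂ] F) {w : ℝ} (hw0 : 0 ≤ w)
    (hW : ∀ f g : F, ‖(inner ℂ (A g) f : ℂ)‖ + ‖(inner ℂ (B f) g : ℂ)‖ ≤ w * (‖f‖ * ‖g‖))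
    {lam : ℂ} (hlam : lam ∈ spectrum ℂ (A.comp B)) : ‖lam‖ ≤ (w / 2) ^ 2 := by
  classical
  let E := WithLp 2 (F × F)
  let e : E ≃L[ℂ] F × F := WithLp.prodContinuousLinearEquiv 2 ℂ F F
  let G : F × F →L[ℂ] F × F :=
    (A.comp (ContinuousLinearMap.snd ℂ F F)).prod (B.comp (ContinuousLinearMap.fst ℂ F F))
  let M : E →L[ℂ] E := ((e.symm : F × F →L[ℂ] E).comp G).comp (e : E →L[ℂ] F × F)
  have hM1 : ∀ h : E, (M h).fst = A h.snd := fun h => rfl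
  have hM2 : ∀ h : E, (M h).snd = B h.fst := fun h => rfl
  have hext : ∀ y z : E, y.fst = z.fst → y.snd = z.snd → y = z := fun y z h1 h2 =>
    WithLp.ofLp_injective 2 (Prod.ext h1 h2)
  have hMbound : ∀ h : E, ‖(inner ℂ (M h) h : ℂ)‖ ≤ (w / 2) * ‖h‖ ^ 2 := by
    intro h
    have h1 : (inner ℂ (M h) h : ℂ) = inner ℂ (A h.snd) h.fst + inner ℂ (B h.fst) h.snd := by
      rw [WithLp.prod_inner_apply]
      rfl
    have h2 : ‖(inner ℂ (M h) h : ℂ)‖ ≤ w * (‖h.fst‖ * ‖h.snd‖) := by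
      rw [h1]
      calc ‖(inner ℂ (A h.snd) h.fst : ℂ) + inner ℂ (B h.fst) h.snd‖
          ≤ ‖(inner ℂ (A h.snd) h.fst : ℂ)‖ + ‖(inner ℂ (B h.fst) h.snd : ℂ)‖ := norm_add_le _ _
        _ ≤ w * (‖h.fst‖ * ‖h.snd‖) := hW h.fst h.snd
    have h3 : ‖h‖ ^ 2 = ‖h.fst‖ ^ 2 + ‖h.snd‖ ^ 2 := WithLp.prod_norm_sq_eq_of_L2 h
    have h4 : w * (‖h.fst‖ * ‖h.snd‖) ≤ (w / 2) * (‖h.fst‖ ^ 2 + ‖h.snd‖ ^ 2) := by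
      nlinarith [sq_nonneg (‖h.fst‖ - ‖h.snd‖)]
    rw [h3]; linarith
  -- lam ∈ spectrum of M * M
  have hMM : lam ∈ spectrum ℂ (M * M) := by
    rw [spectrum.mem_iff] at hlam ⊢
    intro hu
    apply hlam
    obtain ⟨u, hu⟩ := hu
    let i1 : F →L[ℂ] E := (e.symm : F × F →L[ℂ] E).comp (ContinuousLinearMap.inl ℂ F F)
    let p1 : E →L[ℂ] F := (ContinuousLinearMap.fst ℂ F F).comp (e : E →L[ℂ] F × F)
    have hid : ∀ x : F, p1 (i1 x) = x := fun x => rfl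
    have hp1 : ∀ y : E, p1 y = y.fst := fun y => rfl
    have hcomm : ∀ x : F,
        (algebraMap ℂ (E →L[ℂ] E) lam - M * M) (i1 x)
          = i1 ((algebraMap ℂ (F →L[ℂ] F) lam - A.comp B) x) := by
      intro x
      have hMi : (M * M) (i1 x) = i1 ((A.comp B) x) := by
        refine hext _ _ ?_ ?_
        · show (M (M (i1 x))).fst = (i1 (A (B x))).fst
          rw [hM1, hM2]
          rfl
        · show (M (M (i1 x))).snd = (i1 (A (B x))).snd
          rw [hM2, hM1]
          show B (A ((i1 x).snd)) = (0 : F)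
          rw [show (i1 x).snd = (0 : F) from rfl, map_zero, map_zero]
      simp only [ContinuousLinearMap.sub_apply, hMi, Algebra.algebraMap_eq_smul_one,
        ContinuousLinearMap.smul_apply, ContinuousLinearMap.one_apply, map_sub,
        _root_.map_smul]
    have hcomm' : ∀ y : E,
        p1 ((algebraMap ℂ (E →L[ℂ] E) lam - M * M) y)
          = (algebraMap ℂ (F →L[ℂ] F) lam - A.comp B) (p1 y) := by
      intro y
      have hMp : p1 ((M * M) y) = (A.comp B) (p1 y) := rfl
      simp only [ContinuousLinearMap.sub_apply, hMp, Algebra.algebraMap_eq_smul_one,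
        ContinuousLinearMap.smul_apply, ContinuousLinearMap.one_apply, map_sub,
        _root_.map_smul, hp1]
      rfl
    set DH := algebraMap ℂ (F →L[ℂ] F) lam - A.comp B with hDH
    let W : F →L[ℂ] F := (p1.comp ((↑u⁻¹ : E →L[ℂ] E))).comp i1
    have hu' : ∀ y : E, (↑u : E →L[ℂ] E) y = (algebraMap ℂ (E →L[ℂ] E) lam - M * M) y := by
      intro y; rw [hu]
    have hVD : ∀ y : E, (↑u⁻¹ : E →L[ℂ] E) ((↑u : E →L[ℂ] E) y) = y := by
      intro y
      calc (↑u⁻¹ : E →L[ℂ] E) ((↑u : E →L[ℂ] E) y) = ((↑u⁻¹ * ↑u : E →L[ℂ] E)) y := rfl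
        _ = y := by rw [u.inv_mul]; rfl
    have hDV : ∀ y : E, (↑u : E →L[ℂ] E) ((↑u⁻¹ : E →L[ℂ] E) y) = y := by
      intro y
      calc (↑u : E →L[ℂ] E) ((↑u⁻¹ : E →L[ℂ] E) y) = ((↑u * ↑u⁻¹ : E →L[ℂ] E)) y := rfl
        _ = y := by rw [u.mul_inv]; rfl
    refine ⟨⟨DH, W, ?_, ?_⟩, rfl⟩
    · ext x
      simp only [ContinuousLinearMap.mul_apply, ContinuousLinearMap.one_apply]
      show DH (p1 ((↑u⁻¹ : E →L[ℂ] E) (i1 x))) = x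
      rw [← hcomm', ← hu', hDV, hid]
    · ext x
      simp only [ContinuousLinearMap.mul_apply, ContinuousLinearMap.one_apply]
      show p1 ((↑u⁻¹ : E →L[ℂ] E) (i1 (DH x))) = x
      rw [← hcomm, ← hu', hVD, hid]
  obtain ⟨m, hm⟩ := IsAlgClosed.exists_pow_nat_eq lam (n := 2) (by norm_num)
  have hmem : m ∈ spectrum ℂ M ∨ -m ∈ spectrum ℂ M := by
    by_contra hcon
    push_neg at hcon
    obtain ⟨h1, h2⟩ := hcon
    rw [spectrum.notMem_iff] at h1 h2
    have hcm : Commute (algebraMap ℂ (E →L[ℂ] E) m) M := Algebra.commutes m M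
    have e1 : algebraMap ℂ (E →L[ℂ] E) (-m) - M = -(algebraMap ℂ (E →L[ℂ] E) m + M) := by
      rw [map_neg, neg_add, sub_eq_add_neg]
    have h2' : IsUnit (algebraMap ℂ (E →L[ℂ] E) m + M) := by
      rw [e1] at h2
      have := h2.neg
      rwa [neg_neg] at this
    have hfact : algebraMap ℂ (E →L[ℂ] E) lam - M * M
        = (algebraMap ℂ (E →L[ℂ] E) m + M) * (algebraMap ℂ (E →L[ℂ] E) m - M) := by
      rw [← hm, map_pow, show M * M = M ^ 2 from (sq M).symm]
      exact hcm.sq_sub_sq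
    exact (spectrum.mem_iff.mp hMM) (by rw [hfact]; exact h2'.mul h1)
  have habs : ‖m‖ ≤ w / 2 := by
    rcases hmem with hmem | hmem
    · exact abs_le_of_mem_spectrum M hMbound hmem
    · have := abs_le_of_mem_spectrum M hMbound hmem
      rwa [norm_neg] at this
  calc ‖lam‖ = ‖m‖ ^ 2 := by rw [← hm, norm_pow]
    _ ≤ (w / 2) ^ 2 := by
      have h0 := norm_nonneg m
      exact pow_le_pow_left₀ h0 habs 2


variable {X : Type*} [MeasurableSpace X] {μ : Measure X}

/-- Composition of an `Lp` function with a real function dominated by the absolute value. -/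
def rLp (φ : Lp ℂ 2 μ) (r : ℂ → ℝ) (hr : Continuous r)
    (hrb : ∀ z : ℂ, |r z| ≤ ‖z‖) : Lp ℂ 2 μ :=
  MemLp.toLp (fun x => (r ((φ : X → ℂ) x) : ℂ))
    (MemLp.of_le_mul (c := 1) (Lp.memLp φ)
      ((Complex.continuous_ofReal.comp hr).comp_aestronglyMeasurable
        (Lp.aestronglyMeasurable φ))
      (Filter.Eventually.of_forall fun x => by
        simp only [Complex.norm_real, Real.norm_eq_abs, one_mul]
        exact hrb ((φ : X → ℂ) x)))

lemma rLp_coe (φ : Lp ℂ 2 μ) (r : ℂ → ℝ) (hr : Continuous r)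
    (hrb : ∀ z : ℂ, |r z| ≤ ‖z‖) :
    (rLp φ r hr hrb : X → ℂ) =ᵐ[μ] fun x => (r ((φ : X → ℂ) x) : ℂ) :=
  MemLp.coeFn_toLp _

/-- The pointwise absolute value of an `Lp` function, as a (complex-valued) `Lp` function. -/
def cabs (φ : Lp ℂ 2 μ) : Lp ℂ 2 μ :=
  rLp φ (fun z => ‖z‖) continuous_norm
    (fun z => by rw [abs_of_nonneg (norm_nonneg z)])

lemma cabs_coe (φ : Lp ℂ 2 μ) :
    (cabs φ : X → ℂ) =ᵐ[μ] fun x => (‖(φ : X → ℂ) x‖ : ℂ) :=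
  rLp_coe _ _ _ _

lemma norm_cabs (φ : Lp ℂ 2 μ) : ‖cabs φ‖ = ‖φ‖ := by
  rw [Lp.norm_def, Lp.norm_def]
  congr 1
  rw [eLpNorm_congr_ae (cabs_coe φ)]
  apply eLpNorm_congr_norm_ae
  filter_upwards with x
  simp


section core

variable {A B : Lp ℂ 2 μ →L[ℂ] Lp ℂ 2 μ}

lemma re_theta_le (hA : IsPositiveOp μ A) (φ : Lp ℂ 2 μ) (θ : ℂ) (hθ : ‖θ‖ = 1) :
    ∀ᵐ x ∂μ, (θ * (A φ : X → ℂ) x).re ≤ ((A (cabs φ) : X → ℂ) x).re := by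
  have habs : ∀ z : ℂ, ‖θ * z‖ = ‖z‖ := by
    intro z; rw [norm_mul, hθ, one_mul]
  have hbre : ∀ z : ℂ, |(θ * z).re| ≤ ‖z‖ := fun z =>
    (Complex.abs_re_le_norm _).trans (le_of_eq (habs z))
  have hbim : ∀ z : ℂ, |(θ * z).im| ≤ ‖z‖ := fun z =>
    (Complex.abs_im_le_norm _).trans (le_of_eq (habs z))
  have hbrep : ∀ z : ℂ, |max (θ * z).re 0| ≤ ‖z‖ := by
    intro z
    rw [abs_of_nonneg (le_max_right _ _)]
    exact max_le ((le_abs_self _).trans (hbre z)) (norm_nonneg z)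
  have hbren : ∀ z : ℂ, |max (-(θ * z).re) 0| ≤ ‖z‖ := by
    intro z
    rw [abs_of_nonneg (le_max_right _ _)]
    exact max_le ((neg_le_abs _).trans (hbre z)) (norm_nonneg z)
  have hbimp : ∀ z : ℂ, |max (θ * z).im 0| ≤ ‖z‖ := by
    intro z
    rw [abs_of_nonneg (le_max_right _ _)]
    exact max_le ((le_abs_self _).trans (hbim z)) (norm_nonneg z)
  have hbimn : ∀ z : ℂ, |max (-(θ * z).im) 0| ≤ ‖z‖ := by
    intro z
    rw [abs_of_nonneg (le_max_right _ _)]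
    exact max_le ((neg_le_abs _).trans (hbim z)) (norm_nonneg z)
  have hcre : Continuous fun z : ℂ => (θ * z).re := Complex.continuous_re.comp (continuous_mul_left θ)
  have hcim : Continuous fun z : ℂ => (θ * z).im := Complex.continuous_im.comp (continuous_mul_left θ)
  set u := rLp φ (fun z => (θ * z).re) hcre hbre with hu
  set v := rLp φ (fun z => (θ * z).im) hcim hbim with hv
  set up := rLp φ (fun z => max (θ * z).re 0) (hcre.max continuous_const) hbrep with hup
  set un := rLp φ (fun z => max (-(θ * z).re) 0) (hcre.neg.max continuous_const) hbren with hun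
  set vp := rLp φ (fun z => max (θ * z).im 0) (hcim.max continuous_const) hbimp with hvp
  set vn := rLp φ (fun z => max (-(θ * z).im) 0) (hcim.neg.max continuous_const) hbimn with hvn
  have hucoe : (u : X → ℂ) =ᵐ[μ] fun x => (((θ * (φ : X → ℂ) x).re : ℝ) : ℂ) := rLp_coe φ _ hcre hbre
  have hvcoe : (v : X → ℂ) =ᵐ[μ] fun x => (((θ * (φ : X → ℂ) x).im : ℝ) : ℂ) := rLp_coe φ _ hcim hbim
  have hupcoe : (up : X → ℂ) =ᵐ[μ] fun x => ((max (θ * (φ : X → ℂ) x).re 0 : ℝ) : ℂ) := rLp_coe φ _ (hcre.max continuous_const) hbrep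
  have huncoe : (un : X → ℂ) =ᵐ[μ] fun x => ((max (-(θ * (φ : X → ℂ) x).re) 0 : ℝ) : ℂ) := rLp_coe φ _ (hcre.neg.max continuous_const) hbren
  have hvpcoe : (vp : X → ℂ) =ᵐ[μ] fun x => ((max (θ * (φ : X → ℂ) x).im 0 : ℝ) : ℂ) := rLp_coe φ _ (hcim.max continuous_const) hbimp
  have hvncoe : (vn : X → ℂ) =ᵐ[μ] fun x => ((max (-(θ * (φ : X → ℂ) x).im) 0 : ℝ) : ℂ) := rLp_coe φ _ (hcim.neg.max continuous_const) hbimn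
  -- nonnegativity of images
  have hpos : ∀ (w : Lp ℂ 2 μ) (r : ℂ → ℝ) (hr : Continuous r)
      (hrb : ∀ z : ℂ, |r z| ≤ ‖z‖), w = rLp φ r hr hrb → (∀ z, 0 ≤ r z) →
      (∀ᵐ x ∂μ, 0 ≤ (A w : X → ℂ) x) := by
    intro w r hr hrb hw hr0
    apply hA
    rw [hw]
    filter_upwards [rLp_coe φ r hr hrb] with x hx
    rw [hx]
    exact Complex.zero_le_real.mpr (hr0 _)
  have hApos := hpos up _ _ _ hup (fun z => le_max_right _ _)
  have hAneg := hpos un _ _ _ hun (fun z => le_max_right _ _)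
  have hAvp := hpos vp _ _ _ hvp (fun z => le_max_right _ _)
  have hAvn := hpos vn _ _ _ hvn (fun z => le_max_right _ _)
  -- u = up - un, v = vp - vn
  have hud : u = up - un := by
    apply Lp.ext
    filter_upwards [hucoe, Lp.coeFn_sub up un, hupcoe, huncoe] with x h1 h2 h3 h4
    rw [h1, h2, Pi.sub_apply, h3, h4]
    rw [← Complex.ofReal_sub]
    norm_cast
    exact (max_zero_sub_max_neg_zero_eq_self _).symm
  have hvd : v = vp - vn := by
    apply Lp.ext
    filter_upwards [hvcoe, Lp.coeFn_sub vp vn, hvpcoe, hvncoe] with x h1 h2 h3 h4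
    rw [h1, h2, Pi.sub_apply, h3, h4]
    rw [← Complex.ofReal_sub]
    norm_cast
    exact (max_zero_sub_max_neg_zero_eq_self _).symm
  -- A u, A v are a.e. real
  have hAur : ∀ᵐ x ∂μ, ((A u : X → ℂ) x).im = 0 := by
    rw [hud, map_sub]
    filter_upwards [Lp.coeFn_sub (A up) (A un), hApos, hAneg] with x h1 h2 h3
    rw [h1, Pi.sub_apply, Complex.sub_im]
    rw [Complex.le_def] at h2 h3
    simp [← h2.2, ← h3.2]
  have hAvr : ∀ᵐ x ∂μ, ((A v : X → ℂ) x).im = 0 := by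
    rw [hvd, map_sub]
    filter_upwards [Lp.coeFn_sub (A vp) (A vn), hAvp, hAvn] with x h1 h2 h3
    rw [h1, Pi.sub_apply, Complex.sub_im]
    rw [Complex.le_def] at h2 h3
    simp [← h2.2, ← h3.2]
  -- θ • φ = u + I • v
  have hdecomp : θ • φ = u + Complex.I • v := by
    apply Lp.ext
    filter_upwards [Lp.coeFn_smul θ φ, Lp.coeFn_add u (Complex.I • v),
      Lp.coeFn_smul Complex.I v, hucoe, hvcoe] with x h1 h2 h3 h4 h5
    rw [h1, h2, Pi.add_apply, Pi.smul_apply, h3, Pi.smul_apply, h4, h5]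
    simp only [smul_eq_mul]
    rw [mul_comm Complex.I]
    exact (Complex.re_add_im _).symm
  -- A (cabs φ) - A u ≥ 0
  have hdiff : ∀ᵐ x ∂μ, 0 ≤ ((A (cabs φ - u) : X → ℂ) x) := by
    apply hA
    filter_upwards [Lp.coeFn_sub (cabs φ) u, cabs_coe φ, hucoe] with x h1 h2 h3
    rw [h1, Pi.sub_apply, h2, h3, ← Complex.ofReal_sub]
    rw [Complex.zero_le_real]
    rw [sub_nonneg]
    exact (Complex.re_le_norm _).trans (le_of_eq (habs _))
  -- combine
  have hEq : θ • A φ = A u + Complex.I • A v := by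
    rw [← _root_.map_smul, hdecomp, map_add, _root_.map_smul]
  have hcoeEq : ((θ • A φ : Lp ℂ 2 μ) : X → ℂ) =ᵐ[μ]
      ((A u + Complex.I • A v : Lp ℂ 2 μ) : X → ℂ) := by rw [hEq]
  have hd2 : ∀ᵐ x ∂μ, (0 : ℂ) ≤ ((A (cabs φ) : X → ℂ) x - (A u : X → ℂ) x) := by
    have hsub : A (cabs φ - u) = A (cabs φ) - A u := map_sub A _ _
    filter_upwards [hdiff, Lp.coeFn_sub (A (cabs φ)) (A u)] with x hx h1
    rw [← Pi.sub_apply, ← h1, ← hsub]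
    exact hx
  filter_upwards [Lp.coeFn_smul θ (A φ), hcoeEq, Lp.coeFn_add (A u) (Complex.I • A v),
    Lp.coeFn_smul Complex.I (A v), hAvr, hd2] with x k1 k2 k3 k4 k5 k6
  have e : θ * (A φ : X → ℂ) x = (A u : X → ℂ) x + Complex.I * (A v : X → ℂ) x := by
    have h := k1.symm.trans k2
    rw [k3, Pi.add_apply, k4, Pi.smul_apply] at h
    simpa [smul_eq_mul] using h
  rw [e, Complex.add_re, Complex.mul_re]
  rw [Complex.le_def] at k6
  simp only [Complex.sub_re, Complex.zero_re, Complex.I_re, Complex.I_im, k5] at k6 ⊢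
  have : (0:ℝ) * ((A v : X → ℂ) x).re - 1 * 0 = 0 := by ring
  rw [this]
  linarith [k6.1]


lemma abs_le_cabs (hA : IsPositiveOp μ A) (φ : Lp ℂ 2 μ) :
    ∀ᵐ x ∂μ, ‖(A φ : X → ℂ) x‖ ≤ ((A (cabs φ) : X → ℂ) x).re := by
  have h : ∀ᵐ x ∂μ, ∀ q : ℚ,
      (Complex.exp ((q : ℝ) * Complex.I) * (A φ : X → ℂ) x).re ≤ ((A (cabs φ) : X → ℂ) x).re := by
    rw [ae_all_iff]
    intro q
    exact re_theta_le hA φ _ (Complex.norm_exp_ofReal_mul_I (q : ℝ))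
  filter_upwards [h] with x hx
  set z := (A φ : X → ℂ) x
  set r := ((A (cabs φ) : X → ℂ) x).re
  have hall : ∀ θ : ℝ, (Complex.exp ((θ : ℝ) * Complex.I) * z).re ≤ r := by
    have hclosed : IsClosed {θ : ℝ | (Complex.exp ((θ : ℝ) * Complex.I) * z).re ≤ r} := by
      apply isClosed_le _ continuous_const
      apply Complex.continuous_re.comp
      exact (Complex.continuous_exp.comp ((Complex.continuous_ofReal).mul continuous_const)).mul
        continuous_const
    have hdense : Dense (Set.range ((↑) : ℚ → ℝ)) := Rat.denseRange_cast
    have hsub : Set.range ((↑) : ℚ → ℝ) ⊆ {θ : ℝ | (Complex.exp ((θ : ℝ) * Complex.I) * z).re ≤ r} := by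
      rintro _ ⟨q, rfl⟩
      exact hx q
    intro θ
    have : θ ∈ closure (Set.range ((↑) : ℚ → ℝ)) := by
      rw [hdense.closure_eq]; trivial
    exact hclosed.closure_subset_iff.mpr hsub this
  have := hall (-z.arg)
  have hz : Complex.exp ((-z.arg : ℝ) * Complex.I) * z = (‖z‖ : ℂ) := by
    nth_rewrite 2 [← Complex.norm_mul_exp_arg_mul_I z]
    rw [mul_comm (Complex.exp _) _, mul_assoc, ← Complex.exp_add]
    have h0 : (z.arg : ℂ) * Complex.I + ((-z.arg : ℝ) : ℂ) * Complex.I = 0 := by push_cast; ring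
    rw [h0, Complex.exp_zero, mul_one]
  rw [hz, Complex.ofReal_re] at this
  exact this

lemma abs_inner_le (hA : IsPositiveOp μ A) (φ ψ : Lp ℂ 2 μ) :
    ‖(inner ℂ (A φ) ψ : ℂ)‖ ≤ (inner ℂ (A (cabs φ)) (cabs ψ) : ℂ).re := by
  rw [L2.inner_def, L2.inner_def]
  have hint1 : Integrable (fun x => (inner ℂ ((A φ : X → ℂ) x) ((ψ : X → ℂ) x) : ℂ)) μ :=
    L2.integrable_inner _ _
  have hint2 : Integrable (fun x => (inner ℂ ((A (cabs φ) : X → ℂ) x) ((cabs ψ : X → ℂ) x) : ℂ)) μ :=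
    L2.integrable_inner _ _
  calc ‖∫ x, (inner ℂ ((A φ : X → ℂ) x) ((ψ : X → ℂ) x) : ℂ) ∂μ‖
      = ‖∫ x, (inner ℂ ((A φ : X → ℂ) x) ((ψ : X → ℂ) x) : ℂ) ∂μ‖ := rfl
    _ ≤ ∫ x, ‖(inner ℂ ((A φ : X → ℂ) x) ((ψ : X → ℂ) x) : ℂ)‖ ∂μ := norm_integral_le_integral_norm _
    _ ≤ ∫ x, (inner ℂ ((A (cabs φ) : X → ℂ) x) ((cabs ψ : X → ℂ) x) : ℂ).re ∂μ := by
        apply integral_mono_ae hint1.norm hint2.re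
        filter_upwards [abs_le_cabs hA φ, cabs_coe ψ] with x h1 h2
        rw [RCLike.inner_apply', RCLike.inner_apply']
        rw [h2]
        have e1 : ‖(starRingEnd ℂ) ((A φ : X → ℂ) x) * (ψ : X → ℂ) x‖
            = ‖(A φ : X → ℂ) x‖ * ‖(ψ : X → ℂ) x‖ := by
          rw [norm_mul, Complex.norm_conj]
        have e2 : ((starRingEnd ℂ) ((A (cabs φ) : X → ℂ) x)
              * (‖(ψ : X → ℂ) x‖ : ℂ)).re
            = ((A (cabs φ) : X → ℂ) x).re * ‖(ψ : X → ℂ) x‖ := by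
          rw [Complex.mul_re]
          simp [Complex.conj_re, Complex.conj_im]
        have e2' : RCLike.re ((starRingEnd ℂ) ((A (cabs φ) : X → ℂ) x)
              * (‖(ψ : X → ℂ) x‖ : ℂ))
            = ((A (cabs φ) : X → ℂ) x).re * ‖(ψ : X → ℂ) x‖ := e2
        rw [e1, e2']
        exact mul_le_mul_of_nonneg_right h1 (norm_nonneg _)
    _ = (∫ x, (inner ℂ ((A (cabs φ) : X → ℂ) x) ((cabs ψ : X → ℂ) x) : ℂ) ∂μ).re :=
        integral_re hint2

lemma key (hA : IsPositiveOp μ A) (hB : IsPositiveOp μ B) (f g : Lp ℂ 2 μ) :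
    ‖(inner ℂ (A g) f : ℂ)‖ + ‖(inner ℂ (B f) g : ℂ)‖
      ≤ ‖A + ContinuousLinearMap.adjoint B‖ * (‖f‖ * ‖g‖) := by
  have h1 : ‖(inner ℂ (A g) f : ℂ)‖ ≤ (inner ℂ (A (cabs g)) (cabs f) : ℂ).re :=
    abs_inner_le hA g f
  have h2 : ‖(inner ℂ (B f) g : ℂ)‖ ≤ (inner ℂ (B (cabs f)) (cabs g) : ℂ).re :=
    abs_inner_le hB f g
  have h3 : (inner ℂ (B (cabs f)) (cabs g) : ℂ).re
      = (inner ℂ (ContinuousLinearMap.adjoint B (cabs g)) (cabs f) : ℂ).re := by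
    rw [ContinuousLinearMap.adjoint_inner_left, ← inner_conj_symm (B (cabs f)) (cabs g)]
    rw [Complex.conj_re]
  have h4 : (inner ℂ (A (cabs g)) (cabs f) : ℂ).re
        + (inner ℂ (ContinuousLinearMap.adjoint B (cabs g)) (cabs f) : ℂ).re
      = (inner ℂ ((A + ContinuousLinearMap.adjoint B) (cabs g)) (cabs f) : ℂ).re := by
    rw [ContinuousLinearMap.add_apply, inner_add_left, Complex.add_re]
  have h5 : (inner ℂ ((A + ContinuousLinearMap.adjoint B) (cabs g)) (cabs f) : ℂ).re
      ≤ ‖A + ContinuousLinearMap.adjoint B‖ * (‖f‖ * ‖g‖) := by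
    calc (inner ℂ ((A + ContinuousLinearMap.adjoint B) (cabs g)) (cabs f) : ℂ).re
        ≤ ‖(inner ℂ ((A + ContinuousLinearMap.adjoint B) (cabs g)) (cabs f) : ℂ)‖ :=
          Complex.re_le_norm _
      _ ≤ ‖(A + ContinuousLinearMap.adjoint B) (cabs g)‖ * ‖cabs f‖ := norm_inner_le_norm _ _
      _ ≤ (‖A + ContinuousLinearMap.adjoint B‖ * ‖cabs g‖) * ‖cabs f‖ := by
          gcongr
          exact (A + ContinuousLinearMap.adjoint B).le_opNorm _
      _ = ‖A + ContinuousLinearMap.adjoint B‖ * (‖f‖ * ‖g‖) := by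
          rw [norm_cabs, norm_cabs]; ring
  linarith


end core

end NormAddAdjAux

theorem norm_add_adjoint_ge_two_sqrt
    {X : Type*} [MeasurableSpace X] (μ : Measure X) [SigmaFinite μ]
    (A B : Lp ℂ 2 μ →L[ℂ] Lp ℂ 2 μ) (hA : IsPositiveOp μ A) (hB : IsPositiveOp μ B) :
    2 * Real.sqrt ((spectralRadius ℂ (A.comp B)).toReal)
      ≤ ‖A + ContinuousLinearMap.adjoint B‖ := by
  have hW : ∀ f g : Lp ℂ 2 μ, ‖(inner ℂ (A g) f : ℂ)‖ + ‖(inner ℂ (B f) g : ℂ)‖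
      ≤ ‖A + ContinuousLinearMap.adjoint B‖ * (‖f‖ * ‖g‖) := by
    intro f g
    have h := NormAddAdjAux.key hA hB f g
    exact h
  have hspec : ∀ lam ∈ spectrum ℂ (A.comp B),
      ‖lam‖ ≤ (‖A + ContinuousLinearMap.adjoint B‖ / 2) ^ 2 :=
    fun lam h => NormAddAdjAux.spectrum_bound_prod A B (norm_nonneg _) hW h
  set w := ‖A + ContinuousLinearMap.adjoint B‖ with hw
  have hsr : spectralRadius ℂ (A.comp B) ≤ ENNReal.ofReal ((w / 2) ^ 2) := by
    show (⨆ k ∈ spectrum ℂ (A.comp B), (‖k‖₊ : ℝ≥0∞)) ≤ ENNReal.ofReal ((w / 2) ^ 2)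
    refine iSup₂_le fun k hk => ?_
    rw [← ENNReal.ofReal_coe_nnreal, coe_nnnorm]
    exact ENNReal.ofReal_le_ofReal (hspec k hk)
  have h1 : (spectralRadius ℂ (A.comp B)).toReal ≤ (w / 2) ^ 2 := by
    have h2 := ENNReal.toReal_mono ENNReal.ofReal_ne_top hsr
    rwa [ENNReal.toReal_ofReal (by positivity)] at h2
  have h2 : Real.sqrt ((spectralRadius ℂ (A.comp B)).toReal) ≤ w / 2 := by
    have h3 : Real.sqrt ((w / 2) ^ 2) = w / 2 := Real.sqrt_sq (by positivity)
    calc Real.sqrt ((spectralRadius ℂ (A.comp B)).toReal)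
        ≤ Real.sqrt ((w / 2) ^ 2) := Real.sqrt_le_sqrt h1
      _ = w / 2 := h3
  linarith
end
end

section
/- Let A and B be compact positive kernel operators on L²(X, μ). Then for every t ∈ [0, 1]: max{ ‖t A + (1−t) B*‖, ‖t B + (1−t) A*‖ } ≥ √( r(A B) ). -/
open MeasureTheory
open scoped ENNReal ComplexOrder

noncomputable section

lemma aux_norm_inv_le {R : Type*} [NormedRing R] [HasSummableGeomSeries R] (u : Rˣ) {a : R}
    (ha : ¬ IsUnit a) : ‖(↑u⁻¹ : R)‖⁻¹ ≤ ‖a - ↑u‖ := by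
  by_contra hcon
  push_neg at hcon
  exact ha (u.ofNearby a hcon).isUnit

lemma exists_approx_eigen {E : Type*} [NormedAddCommGroup E] [NormedSpace ℂ E] [CompleteSpace E]
    (M : E →L[ℂ] E) (hrpos : 0 < (spectralRadius ℂ M).toReal) {ε : ℝ} (hε : 0 < ε) :
    ∃ (l : ℂ) (x : E), ‖l‖ = (spectralRadius ℂ M).toReal ∧ ‖x‖ = 1 ∧ ‖M x - l • x‖ < ε := by
  set r := (spectralRadius ℂ M).toReal with hr
  rcases subsingleton_or_nontrivial E with hE | hE
  · exfalso
    haveI : Subsingleton (E →L[ℂ] E) :=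
      ⟨fun f g => ContinuousLinearMap.ext fun z => Subsingleton.elim _ _⟩
    have h0 : spectralRadius ℂ M = 0 := spectrum.SpectralRadius.of_subsingleton M
    rw [hr, h0] at hrpos
    simp at hrpos
  haveI : Nontrivial (E →L[ℂ] E) := by
    refine ⟨1, 0, fun h => ?_⟩
    obtain ⟨z, hz⟩ := exists_ne (0 : E)
    exact hz (by simpa using DFunLike.congr_fun h z)
  obtain ⟨l, hlmem, hlnorm⟩ := spectrum.exists_nnnorm_eq_spectralRadius M
  have hl : ‖l‖ = r := by
    rw [hr, ← hlnorm]
    simp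
  set c : ℝ := 1 + ε / (4 * r) with hc
  have hc1 : 1 < c := by
    have : 0 < ε / (4 * r) := by positivity
    simp [hc]; linarith
  set m : ℂ := (c : ℂ) * l with hm
  have hml : ‖m - l‖ = ε / 4 := by
    have h1 : m - l = ((c - 1 : ℝ) : ℂ) * l := by rw [hm]; push_cast; ring
    rw [h1, norm_mul, hl, Complex.norm_real, Real.norm_eq_abs]
    rw [abs_of_pos (by linarith : (0:ℝ) < c - 1), hc]
    field_simp
    ring
  have hmnorm : r < ‖m‖ := by
    rw [hm, norm_mul, hl, Complex.norm_real, Real.norm_eq_abs, abs_of_pos (by positivity : (0:ℝ) < c)]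
    nlinarith
  have hres : m ∈ resolventSet ℂ M := by
    refine spectrum.mem_resolventSet_of_spectralRadius_lt ?_
    rw [← hlnorm]
    rw [ENNReal.coe_lt_coe, ← NNReal.coe_lt_coe]
    have h2 : ‖l‖ < ‖m‖ := by rw [hl]; exact hmnorm
    simpa [coe_nnnorm] using h2
  rw [spectrum.mem_resolventSet_iff] at hres
  set u := hres.unit with hu
  have hus : (u : E →L[ℂ] E) = algebraMap ℂ (E →L[ℂ] E) m - M := hres.unit_spec
  have hnot : ¬ IsUnit (algebraMap ℂ (E →L[ℂ] E) l - M) := spectrum.mem_iff.mp hlmem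
  have hbound := aux_norm_inv_le u hnot
  have hdiff : (algebraMap ℂ (E →L[ℂ] E) l - M) - (u : E →L[ℂ] E)
      = algebraMap ℂ (E →L[ℂ] E) (l - m) := by
    rw [hus, map_sub]; abel
  rw [hdiff] at hbound
  have hbound2 : ‖(↑u⁻¹ : E →L[ℂ] E)‖⁻¹ ≤ ε / 4 := by
    rwa [norm_algebraMap', ← neg_sub, norm_neg, hml] at hbound
  have hupos : 0 < ‖(↑u⁻¹ : E →L[ℂ] E)‖ := Units.norm_pos _
  have h4 : 2 / ε < ‖(↑u⁻¹ : E →L[ℂ] E)‖ := by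
    have h1 : ‖(↑u⁻¹ : E →L[ℂ] E)‖ * ‖(↑u⁻¹ : E →L[ℂ] E)‖⁻¹ = 1 := mul_inv_cancel₀ hupos.ne'
    rw [div_lt_iff₀ hε]
    nlinarith [mul_le_mul_of_nonneg_left hbound2 hupos.le]
  obtain ⟨y, hy1, hy2⟩ := ContinuousLinearMap.exists_lt_apply_of_lt_opNorm (↑u⁻¹ : E →L[ℂ] E) h4
  set z := (↑u⁻¹ : E →L[ℂ] E) y with hz
  have hz0 : 0 < ‖z‖ := lt_trans (by positivity) hy2
  set x := ((‖z‖⁻¹ : ℝ) : ℂ) • z with hx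
  have hx1 : ‖x‖ = 1 := by
    rw [hx, norm_smul, Complex.norm_real, Real.norm_eq_abs, abs_of_pos (by positivity)]
    field_simp
  have hkey : m • z - M z = y := by
    have h5 : (algebraMap ℂ (E →L[ℂ] E) m - M) z = y := by
      rw [← hus, hz]
      calc (u : E →L[ℂ] E) ((↑u⁻¹ : E →L[ℂ] E) y)
          = (((u * u⁻¹ : (E →L[ℂ] E)ˣ) : E →L[ℂ] E)) y := rfl
        _ = y := by rw [mul_inv_cancel]; rfl
    simpa [ContinuousLinearMap.sub_apply, Algebra.algebraMap_eq_smul_one] using h5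
  have hnorm1 : ‖M z - m • z‖ < 1 := by
    have h6 : M z - m • z = -y := by rw [← hkey, neg_sub]
    rw [h6, norm_neg]; exact hy1
  refine ⟨l, x, hl, hx1, ?_⟩
  have hMx : M x - l • x = ((‖z‖⁻¹ : ℝ) : ℂ) • ((M z - m • z) + (m - l) • z) := by
    rw [hx, M.map_smul]
    module
  rw [hMx, norm_smul, Complex.norm_real, Real.norm_eq_abs, abs_of_pos (by positivity : (0:ℝ) < ‖z‖⁻¹)]
  have hb1 : ‖(M z - m • z) + (m - l) • z‖ ≤ 1 + (ε/4) * ‖z‖ := by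
    refine (norm_add_le _ _).trans ?_
    rw [norm_smul, hml]
    exact add_le_add hnorm1.le le_rfl
  have hzinv : ‖z‖⁻¹ < ε / 2 := by
    have h1 : (2/ε)⁻¹ = ε/2 := by field_simp
    calc ‖z‖⁻¹ < (2/ε)⁻¹ := inv_strictAnti₀ (by positivity) hy2
      _ = ε/2 := h1
  calc ‖z‖⁻¹ * ‖(M z - m • z) + (m - l) • z‖ ≤ ‖z‖⁻¹ * (1 + (ε/4) * ‖z‖) := by
        exact mul_le_mul_of_nonneg_left hb1 (by positivity)
    _ = ‖z‖⁻¹ + ε/4 := by field_simp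
    _ < ε/2 + ε/4 := by linarith
    _ < ε := by linarith

section AuxLp

variable {X : Type*} [MeasurableSpace X] {μ : Measure X}

/-- The element of `L²` given by `s ↦ (‖f s‖ : ℂ)`. -/
def absLp (f : Lp ℂ 2 μ) : Lp ℂ 2 μ :=
  MeasureTheory.MemLp.toLp (fun s => (‖(f : X → ℂ) s‖ : ℂ)) ((Lp.memLp f).norm.ofReal)

lemma absLp_coe (f : Lp ℂ 2 μ) : (absLp f : X → ℂ) =ᵐ[μ] fun s => (‖(f : X → ℂ) s‖ : ℂ) :=
  MemLp.coeFn_toLp _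

lemma absLp_norm (f : Lp ℂ 2 μ) : ‖absLp f‖ = ‖f‖ := by
  rw [Lp.norm_def, Lp.norm_def]
  congr 1
  rw [eLpNorm_congr_ae (absLp_coe f)]
  rw [show (fun s => (‖(f : X → ℂ) s‖ : ℂ)) = fun s => ((‖(f : X → ℂ) s‖ : ℝ) : ℂ) from rfl]
  rw [← eLpNorm_norm (f : X → ℂ)]
  exact eLpNorm_congr_norm_ae (Filter.Eventually.of_forall fun s => by
    simp [Complex.norm_real])

lemma posKernel_mono {K : Lp ℂ 2 μ →L[ℂ] Lp ℂ 2 μ} (hK : IsPosKernelOp μ K)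
    {f h : Lp ℂ 2 μ}
    (hfh : ∀ᵐ y ∂μ, (h : X → ℂ) y = (((h : X → ℂ) y).re : ℂ) ∧
      ‖(f : X → ℂ) y‖ ≤ ((h : X → ℂ) y).re) :
    ∀ᵐ s ∂μ, (K h : X → ℂ) s = (((K h : X → ℂ) s).re : ℂ) ∧
      ‖(K f : X → ℂ) s‖ ≤ ((K h : X → ℂ) s).re := by
  obtain ⟨k, hk_meas, hk_pos, hk_prop⟩ := hK
  have habs : ∀ᵐ s ∂μ, ‖(K f : X → ℂ) s‖ ≤ ∫ y, k s y * ‖(f : X → ℂ) y‖ ∂μ := by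
    filter_upwards [(hk_prop f).2] with s hs
    rw [hs]
    refine (norm_integral_le_integral_norm _).trans_eq ?_
    refine integral_congr_ae (Filter.Eventually.of_forall fun y => ?_)
    simp only [norm_mul, Complex.norm_real, Real.norm_eq_abs, abs_of_nonneg (hk_pos s y)]
  have hreal : ∀ᵐ s ∂μ, (K h : X → ℂ) s
      = ((∫ y, k s y * ((h : X → ℂ) y).re ∂μ : ℝ) : ℂ) := by
    filter_upwards [(hk_prop h).2] with s hs
    rw [hs]
    have heq : ∫ y, (k s y : ℂ) * (h : X → ℂ) y ∂μ
        = ∫ y, ((k s y * ((h : X → ℂ) y).re : ℝ) : ℂ) ∂μ := by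
      refine integral_congr_ae ?_
      filter_upwards [hfh] with y hy
      rw [Complex.ofReal_mul, ← hy.1]
    rw [heq]
    exact integral_ofReal
  have hint_h : ∀ᵐ s ∂μ, Integrable (fun y => k s y * ((h : X → ℂ) y).re) μ := by
    filter_upwards [(hk_prop h).1] with s hs
    refine hs.congr ?_
    filter_upwards [hfh] with y hy
    have h0 : (0:ℝ) ≤ ((h : X → ℂ) y).re := le_trans (norm_nonneg _) hy.2
    conv_lhs => rw [hy.1]
    rw [Complex.norm_real, Real.norm_eq_abs, abs_of_nonneg h0]
  have hint_f : ∀ᵐ s ∂μ, Integrable (fun y => k s y * ‖(f : X → ℂ) y‖) μ := by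
    filter_upwards [(hk_prop f).1] with s hs
    exact hs.congr (Filter.Eventually.of_forall fun y => by simp)
  filter_upwards [habs, hreal, hint_h, hint_f] with s h1 h2 h3 h4
  have hre : ((K h : X → ℂ) s).re = ∫ y, k s y * ((h : X → ℂ) y).re ∂μ := by
    rw [h2, Complex.ofReal_re]
  constructor
  · rw [hre]; exact h2
  · rw [hre]
    refine h1.trans (integral_mono_ae h4 h3 ?_)
    filter_upwards [hfh] with y hy
    exact mul_le_mul_of_nonneg_left hy.2 (hk_pos s y)

lemma re_inner_ge {A B : Lp ℂ 2 μ →L[ℂ] Lp ℂ 2 μ}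
    (hA : IsPosKernelOp μ A) (hB : IsPosKernelOp μ B)
    {x : Lp ℂ 2 μ} {l : ℂ} (hx : ‖x‖ = 1) :
    ‖l‖ - ‖(A.comp B) x - l • x‖ ≤ (inner ℂ (absLp x) (A (B (absLp x))) : ℂ).re := by
  set g := absLp x with hg
  set e := (A.comp B) x - l • x with he
  set w := A (B g) with hw
  have h_xg : ∀ᵐ y ∂μ, (g : X → ℂ) y = (((g : X → ℂ) y).re : ℂ) ∧
      ‖(x : X → ℂ) y‖ ≤ ((g : X → ℂ) y).re := by
    filter_upwards [absLp_coe x] with y hy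
    rw [hy]
    simp
  have hBg := posKernel_mono hB h_xg
  have hABg := posKernel_mono hA hBg
  -- pointwise lower bound for the real part of w
  have h_low : ∀ᵐ s ∂μ, ‖l‖ * ‖(x : X → ℂ) s‖ - ‖(e : X → ℂ) s‖ ≤ ((w : X → ℂ) s).re := by
    filter_upwards [hABg, Lp.coeFn_sub ((A.comp B) x) (l • x), Lp.coeFn_smul l x] with s h1 h2 h3
    have hcomp : ((A.comp B) x : X → ℂ) s = (A (B x) : X → ℂ) s := by
      rw [ContinuousLinearMap.comp_apply]
    have h5 : ‖l • (x : X → ℂ) s‖ ≤ ‖(A (B x) : X → ℂ) s‖ + ‖(e : X → ℂ) s‖ := by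
      have h9 : (e : X → ℂ) s = (A (B x) : X → ℂ) s - l • (x : X → ℂ) s := by
        calc (e : X → ℂ) s
            = ((A.comp B) x : X → ℂ) s - ((l • x : Lp ℂ 2 μ) : X → ℂ) s := by rw [h2]; rfl
          _ = (A (B x) : X → ℂ) s - l • (x : X → ℂ) s := by rw [hcomp, h3]; rfl
      have h6 : (A (B x) : X → ℂ) s - (e : X → ℂ) s = l • (x : X → ℂ) s := by
        rw [h9]; ring_nf
      calc ‖l • (x : X → ℂ) s‖ = ‖(A (B x) : X → ℂ) s - (e : X → ℂ) s‖ := by rw [h6]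
        _ ≤ _ := norm_sub_le _ _
    have h7 : ‖(A (B x) : X → ℂ) s‖ ≤ ((w : X → ℂ) s).re := h1.2
    have h8 : ‖l • (x : X → ℂ) s‖ = ‖l‖ * ‖(x : X → ℂ) s‖ := norm_smul l _
    linarith
  -- integrable inner products
  set E' := absLp e with hE'
  have hI1 : Integrable (fun s => (inner ℂ ((g : X → ℂ) s) ((w : X → ℂ) s) : ℂ)) μ :=
    L2.integrable_inner g w
  have hI2 : Integrable (fun s => (inner ℂ ((g : X → ℂ) s) ((g : X → ℂ) s) : ℂ)) μ :=
    L2.integrable_inner g g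
  have hI3 : Integrable (fun s => (inner ℂ ((E' : X → ℂ) s) ((g : X → ℂ) s) : ℂ)) μ :=
    L2.integrable_inner E' g
  have hc1 : ∀ᵐ s ∂μ, (inner ℂ ((g : X → ℂ) s) ((w : X → ℂ) s) : ℂ).re
      = ‖(x : X → ℂ) s‖ * ((w : X → ℂ) s).re := by
    filter_upwards [absLp_coe x] with s hs
    rw [RCLike.inner_apply, hs]
    simp [Complex.re_ofReal_mul, mul_comm]
  have hc2 : ∀ᵐ s ∂μ, (inner ℂ ((g : X → ℂ) s) ((g : X → ℂ) s) : ℂ).re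
      = ‖(x : X → ℂ) s‖ * ‖(x : X → ℂ) s‖ := by
    filter_upwards [absLp_coe x] with s hs
    rw [RCLike.inner_apply, hs]
    simp [Complex.re_ofReal_mul]
  have hc3 : ∀ᵐ s ∂μ, (inner ℂ ((E' : X → ℂ) s) ((g : X → ℂ) s) : ℂ).re
      = ‖(e : X → ℂ) s‖ * ‖(x : X → ℂ) s‖ := by
    filter_upwards [absLp_coe x, absLp_coe e] with s hs hs'
    rw [RCLike.inner_apply, hs, hs']
    simp [Complex.re_ofReal_mul, mul_comm]
  have hJ1 : Integrable (fun s => ‖(x : X → ℂ) s‖ * ((w : X → ℂ) s).re) μ :=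
    (hI1.re.congr hc1)
  have hJ2 : Integrable (fun s => ‖(x : X → ℂ) s‖ * ‖(x : X → ℂ) s‖) μ :=
    (hI2.re.congr hc2)
  have hJ3 : Integrable (fun s => ‖(e : X → ℂ) s‖ * ‖(x : X → ℂ) s‖) μ :=
    (hI3.re.congr hc3)
  -- the comparison of integrals
  have hmono : ∫ s, (‖l‖ * (‖(x : X → ℂ) s‖ * ‖(x : X → ℂ) s‖)
        - ‖(e : X → ℂ) s‖ * ‖(x : X → ℂ) s‖) ∂μ
      ≤ ∫ s, ‖(x : X → ℂ) s‖ * ((w : X → ℂ) s).re ∂μ := by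
    refine integral_mono_ae ((hJ2.const_mul _).sub hJ3) hJ1 ?_
    filter_upwards [h_low] with s hs
    nlinarith [norm_nonneg ((x : X → ℂ) s)]
  -- identify the three integrals
  have hre_int : ∀ u v : Lp ℂ 2 μ, (inner ℂ u v : ℂ).re
      = ∫ s, ((inner ℂ ((u : X → ℂ) s) ((v : X → ℂ) s) : ℂ)).re ∂μ := by
    intro u v
    have h1 := integral_re (L2.integrable_inner (𝕜 := ℂ) u v)
    simp only [RCLike.re_to_complex] at h1
    rw [L2.inner_def]
    exact h1.symm
  have hint2 : ∫ s, ‖(x : X → ℂ) s‖ * ‖(x : X → ℂ) s‖ ∂μ = 1 := by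
    have h2 := hre_int g g
    rw [integral_congr_ae hc2] at h2
    rw [← h2, inner_self_eq_norm_sq_to_K]
    simp [hg, absLp_norm, hx]
  have hint3 : ∫ s, ‖(e : X → ℂ) s‖ * ‖(x : X → ℂ) s‖ ∂μ ≤ ‖e‖ := by
    have h2 := hre_int E' g
    rw [integral_congr_ae hc3] at h2
    rw [← h2]
    have h4 := RCLike.re_le_norm (inner ℂ E' g : ℂ)
    simp only [RCLike.re_to_complex] at h4
    refine h4.trans ?_
    calc ‖(inner ℂ E' g : ℂ)‖ ≤ ‖E'‖ * ‖g‖ := norm_inner_le_norm _ _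
      _ = ‖e‖ := by rw [hE', hg, absLp_norm, absLp_norm, hx, mul_one]
  have hint1 : (inner ℂ g w : ℂ).re = ∫ s, ‖(x : X → ℂ) s‖ * ((w : X → ℂ) s).re ∂μ := by
    rw [hre_int g w]
    exact integral_congr_ae hc1
  have hsplit : ∫ s, (‖l‖ * (‖(x : X → ℂ) s‖ * ‖(x : X → ℂ) s‖)
        - ‖(e : X → ℂ) s‖ * ‖(x : X → ℂ) s‖) ∂μ
      = ‖l‖ * ∫ s, ‖(x : X → ℂ) s‖ * ‖(x : X → ℂ) s‖ ∂μ
        - ∫ s, ‖(e : X → ℂ) s‖ * ‖(x : X → ℂ) s‖ ∂μ := by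
    rw [integral_sub (hJ2.const_mul _) hJ3, integral_const_mul]
  rw [hsplit, hint2, mul_one] at hmono
  rw [hint1]
  linarith

end AuxLp

set_option maxHeartbeats 2000000 in
theorem max_norm_ge_sqrt_spectralRadius
    {X : Type*} [MeasurableSpace X] (μ : Measure X) [SigmaFinite μ]
    (A B : Lp ℂ 2 μ →L[ℂ] Lp ℂ 2 μ)
    (hA : IsPosKernelOp μ A) (hB : IsPosKernelOp μ B)
    (hAc : IsCompactOperator A) (hBc : IsCompactOperator B)
    (t : ℝ) (ht : t ∈ Set.Icc (0 : ℝ) 1) :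
    Real.sqrt ((spectralRadius ℂ (A.comp B)).toReal)
      ≤ max ‖(t : ℂ) • A + ((1 - t : ℝ) : ℂ) • ContinuousLinearMap.adjoint B‖
          ‖(t : ℂ) • B + ((1 - t : ℝ) : ℂ) • ContinuousLinearMap.adjoint A‖ := by
  obtain ⟨ht0, ht1⟩ := ht
  set S := (t : ℂ) • A + ((1 - t : ℝ) : ℂ) • ContinuousLinearMap.adjoint B with hS
  set T := (t : ℂ) • B + ((1 - t : ℝ) : ℂ) • ContinuousLinearMap.adjoint A with hT
  set r := (spectralRadius ℂ (A.comp B)).toReal with hr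
  have hmax0 : (0:ℝ) ≤ max ‖S‖ ‖T‖ := le_trans (norm_nonneg S) (le_max_left _ _)
  rcases le_or_gt r 0 with h0 | hrpos
  · have hr0 : r = 0 := le_antisymm h0 ENNReal.toReal_nonneg
    rw [hr0, Real.sqrt_zero]
    exact hmax0
  suffices hST : r ≤ ‖S‖ * ‖T‖ by
    have h1 : r ≤ max ‖S‖ ‖T‖ * max ‖S‖ ‖T‖ :=
      hST.trans (mul_le_mul (le_max_left _ _) (le_max_right _ _) (norm_nonneg _) hmax0)
    calc Real.sqrt r ≤ Real.sqrt (max ‖S‖ ‖T‖ * max ‖S‖ ‖T‖) := Real.sqrt_le_sqrt h1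
      _ = max ‖S‖ ‖T‖ := Real.sqrt_mul_self hmax0
  refine le_of_forall_pos_le_add fun ε hε => ?_
  obtain ⟨l, x, hl, hx, he⟩ := exists_approx_eigen (A.comp B) hrpos hε
  set g := absLp x with hg
  have hgnorm : ‖g‖ = 1 := by rw [hg, absLp_norm, hx]
  -- main lower bound for the real part
  have hP : r - ε ≤ (inner ℂ g (A (B g)) : ℂ).re := by
    have h1 := re_inner_ge hA hB hx (l := l)
    rw [hl] at h1
    linarith
  set P := (inner ℂ g (A (B g)) : ℂ).re with hPdef
  set u := ‖(ContinuousLinearMap.adjoint A) g‖ with hu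
  set v := ‖B g‖ with hv
  -- P ≤ u * v
  have hcross : P ≤ v * u := by
    have h1 : (inner ℂ (B g) ((ContinuousLinearMap.adjoint A) g) : ℂ)
        = (starRingEnd ℂ) (inner ℂ g (A (B g)) : ℂ) := by
      rw [ContinuousLinearMap.adjoint_inner_right, ← inner_conj_symm]
    have h2 : (inner ℂ (B g) ((ContinuousLinearMap.adjoint A) g) : ℂ).re = P := by
      rw [h1, Complex.conj_re]
    have h3 := RCLike.re_le_norm (inner ℂ (B g) ((ContinuousLinearMap.adjoint A) g) : ℂ)
    simp only [RCLike.re_to_complex] at h3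
    rw [h2] at h3
    exact h3.trans (norm_inner_le_norm _ _)
  -- the four inner products
  have e2 : (inner ℂ g (A ((ContinuousLinearMap.adjoint A) g)) : ℂ).re = u * u := by
    rw [← ContinuousLinearMap.adjoint_inner_left, inner_self_eq_norm_sq_to_K]
    rw [← hu]
    simp [sq]
  have e3 : (inner ℂ g ((ContinuousLinearMap.adjoint B) (B g)) : ℂ).re = v * v := by
    rw [ContinuousLinearMap.adjoint_inner_right, inner_self_eq_norm_sq_to_K]
    rw [← hv]
    simp [sq]
  have e4 : (inner ℂ g ((ContinuousLinearMap.adjoint B) ((ContinuousLinearMap.adjoint A) g)) : ℂ).re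
      = P := by
    rw [ContinuousLinearMap.adjoint_inner_right, ContinuousLinearMap.adjoint_inner_right,
      ← inner_conj_symm, Complex.conj_re]
  -- expansion
  have hSTg : S (T g) = ((t * t : ℝ) : ℂ) • (A (B g))
      + ((t * (1 - t) : ℝ) : ℂ) • (A ((ContinuousLinearMap.adjoint A) g))
      + ((t * (1 - t) : ℝ) : ℂ) • ((ContinuousLinearMap.adjoint B) (B g))
      + (((1 - t) * (1 - t) : ℝ) : ℂ) • ((ContinuousLinearMap.adjoint B)
          ((ContinuousLinearMap.adjoint A) g)) := by
    rw [hS, hT]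
    simp only [ContinuousLinearMap.add_apply, ContinuousLinearMap.smul_apply, map_add,
      ContinuousLinearMap.map_smul]
    push_cast
    module
  have hexp : (inner ℂ g (S (T g)) : ℂ).re
      = (t * t) * P + (t * (1 - t)) * (u * u) + (t * (1 - t)) * (v * v)
        + ((1 - t) * (1 - t)) * P := by
    rw [hSTg, inner_add_right, inner_add_right, inner_add_right, inner_smul_right,
      inner_smul_right, inner_smul_right, inner_smul_right]
    simp only [Complex.add_re, Complex.re_ofReal_mul]
    rw [e2, e3, e4, ← hPdef]
  have h6 : r - ε ≤ (inner ℂ g (S (T g)) : ℂ).re := by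
    rw [hexp]
    have ht2 : 0 ≤ t * (1 - t) := mul_nonneg ht0 (by linarith)
    nlinarith [sq_nonneg (u - v), hcross, hP]
  have h7 : (inner ℂ g (S (T g)) : ℂ).re ≤ ‖S‖ * ‖T‖ := by
    have h8 := RCLike.re_le_norm (inner ℂ g (S (T g)) : ℂ)
    simp only [RCLike.re_to_complex] at h8
    refine h8.trans ?_
    calc ‖(inner ℂ g (S (T g)) : ℂ)‖ ≤ ‖g‖ * ‖S (T g)‖ := norm_inner_le_norm _ _
      _ = ‖S (T g)‖ := by rw [hgnorm, one_mul]
      _ ≤ ‖S‖ * ‖T g‖ := S.le_opNorm _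
      _ ≤ ‖S‖ * (‖T‖ * ‖g‖) := mul_le_mul_of_nonneg_left (T.le_opNorm _) (norm_nonneg S)
      _ = ‖S‖ * ‖T‖ := by rw [hgnorm, mul_one]
  linarith
end
end

section
/- Let A be a positive bounded linear operator on L²(X, μ). Then for every t ∈ [0, 1] and every a.e. nonnegative f ∈ L²(X, μ), ⟨( t A + (1−t) A* )² f, f⟩ ≥ ⟨A² f, f⟩; equivalently, ⟨( t A + (1−t) A* )² f, f⟩ − ⟨A² f, f⟩ = t(1−t)·‖A f − A* f‖₂² ≥ 0. -/
open MeasureTheory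
open scoped ENNReal ComplexOrder

noncomputable section

theorem inner_sq_convex_combination
    {X : Type*} [MeasurableSpace X] (μ : Measure X) [SigmaFinite μ]
    (A : Lp ℂ 2 μ →L[ℂ] Lp ℂ 2 μ) (hA : IsPositiveOp μ A)
    (t : ℝ) (ht : t ∈ Set.Icc (0 : ℝ) 1)
    (f : Lp ℂ 2 μ) (hf : ∀ᵐ x ∂μ, 0 ≤ (f : X → ℂ) x) :
    (inner ℂ ((A ^ 2) f) f : ℂ).re
        ≤ (inner ℂ ((((t : ℂ) • A + ((1 - t : ℝ) : ℂ) • ContinuousLinearMap.adjoint A) ^ 2) f) f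
            : ℂ).re
    ∧ (inner ℂ ((((t : ℂ) • A + ((1 - t : ℝ) : ℂ) • ContinuousLinearMap.adjoint A) ^ 2) f) f
          : ℂ).re - (inner ℂ ((A ^ 2) f) f : ℂ).re
        = t * (1 - t) * ‖A f - ContinuousLinearMap.adjoint A f‖ ^ 2 := by
  obtain ⟨ht0, ht1⟩ := ht
  set g := A f with hg
  set h := ContinuousLinearMap.adjoint A f with hh
  set B := (t : ℂ) • A + ((1 - t : ℝ) : ℂ) • ContinuousLinearMap.adjoint A with hB
  clear_value g h B
  -- ⟨A² f, f⟩ = ⟨g, h⟩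
  have hA2 : (inner ℂ ((A ^ 2) f) f : ℂ) = inner ℂ g h := by
    rw [hg, hh, pow_two, ContinuousLinearMap.mul_apply,
      ← ContinuousLinearMap.adjoint_inner_right]
  have hBf : B f = (t : ℂ) • g + ((1 - t : ℝ) : ℂ) • h := by
    rw [hB, ContinuousLinearMap.add_apply, ContinuousLinearMap.smul_apply,
      ContinuousLinearMap.smul_apply, hg, hh]
  -- expansion of ⟨B² f, f⟩
  have key : (inner ℂ ((B ^ 2) f) f : ℂ)
      = ((t ^ 2 : ℝ) : ℂ) * inner ℂ g h + (((1 - t) ^ 2 : ℝ) : ℂ) * inner ℂ h g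
        + ((t * (1 - t) : ℝ) : ℂ) * (inner ℂ g g + inner ℂ h h) := by
    rw [pow_two, ContinuousLinearMap.mul_apply, hBf, hB]
    simp only [map_add, _root_.map_smul, ContinuousLinearMap.add_apply,
      ContinuousLinearMap.smul_apply, inner_add_left, inner_smul_left, smul_smul]
    rw [← ContinuousLinearMap.adjoint_inner_right A g f,
        ← ContinuousLinearMap.adjoint_inner_right A h f, ← hh]
    have h1 : (inner ℂ (ContinuousLinearMap.adjoint A g) f : ℂ) = inner ℂ g g := by
      rw [ContinuousLinearMap.adjoint_inner_left, ← hg]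
    have h2 : (inner ℂ (ContinuousLinearMap.adjoint A h) f : ℂ) = inner ℂ h g := by
      rw [ContinuousLinearMap.adjoint_inner_left, ← hg]
    rw [h1, h2]
    simp only [map_sub, map_one, Complex.conj_ofReal]
    push_cast
    ring
  -- pass to real parts
  have hsym : (inner ℂ h g : ℂ).re = (inner ℂ g h : ℂ).re := by
    rw [← inner_conj_symm g h, Complex.conj_re]
  have hgg : (inner ℂ g g : ℂ).re = ‖g‖ ^ 2 := by
    rw [← RCLike.re_to_complex]; exact inner_self_eq_norm_sq g
  have hhh : (inner ℂ h h : ℂ).re = ‖h‖ ^ 2 := by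
    rw [← RCLike.re_to_complex]; exact inner_self_eq_norm_sq h
  have hnorm : ‖g - h‖ ^ 2 = ‖g‖ ^ 2 - 2 * (inner ℂ g h : ℂ).re + ‖h‖ ^ 2 := by
    have := @norm_sub_sq ℂ _ _ _ _ g h
    rwa [RCLike.re_to_complex] at this
  have hre : (inner ℂ ((B ^ 2) f) f : ℂ).re
      = t ^ 2 * (inner ℂ g h : ℂ).re + (1 - t) ^ 2 * (inner ℂ g h : ℂ).re
        + t * (1 - t) * (‖g‖ ^ 2 + ‖h‖ ^ 2) := by
    rw [key]
    simp only [Complex.add_re, Complex.re_ofReal_mul, hsym, hgg, hhh]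
  rw [hA2, hre]
  have heq : t ^ 2 * (inner ℂ g h : ℂ).re + (1 - t) ^ 2 * (inner ℂ g h : ℂ).re
        + t * (1 - t) * (‖g‖ ^ 2 + ‖h‖ ^ 2) - (inner ℂ g h : ℂ).re
      = t * (1 - t) * ‖g - h‖ ^ 2 := by
    rw [hnorm]; ring
  have hnn : 0 ≤ t * (1 - t) * ‖g - h‖ ^ 2 :=
    mul_nonneg (mul_nonneg ht0 (by linarith)) (sq_nonneg _)
  exact ⟨by linarith, heq⟩
end
end
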